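/- arXiv:1711.04544 — 6 statements merged into one kernel-verified Lean document; each statement's English description precedes it below -/
import Mathlib

section
/- Let a_1, …, a_n be positive real numbers and let n ≥ 2 and l ≥ 1 be integers. Define f on (0,∞)^n by f(x_1,…,x_n) = a_1/x_1 + a_2·x_1/x_2 + ⋯ + a_n·(x_1⋯x_{n−1})/x_n + x_n^{1/l}, and set φ(a_1,…,a_n) := a_1^{2^{n−2}} a_2^{2^{n−3}} ⋯ a_{n−1} a_n. Then there exists a constant C(n,l) > 0 depending only on n and l such that min over (0,∞)^n of f equals C(n,l)·φ(a_1,…,a_n)^{1/(2^{n−1}+l)}, and moreover this minimum is attained at some point (x_1^0,…,x_n^0) ∈ (0,∞)^n with x_n^0 = (C(n,l)·l/(2^{n−1}+l))^l · φ(a_1,…,a_n)^{l/(2^{n−1}+l)}. -/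
open Finset Real

lemma eq_of_log {x y : ℝ} (hx : 0 < x) (hy : 0 < y) (h : Real.log x = Real.log y) : x = y :=
  Real.log_injOn_pos (Set.mem_Ioi.2 hx) (Set.mem_Ioi.2 hy) h

noncomputable def cst (r : ℝ) : ℝ := (r+1) * r ^ (-(r/(r+1)))

lemma cst_pos {r : ℝ} (hr : 0 < r) : 0 < cst r := by
  unfold cst; positivity

lemma onevar {A B r : ℝ} (hA : 0 < A) (hB : 0 < B) (hr : 0 < r) :
    (∀ z, 0 < z → cst r * (A ^ (1/(r+1)) * B ^ (r/(r+1))) ≤ A / z + B * z ^ (1/r)) ∧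
    A / ((A*r/B) ^ (r/(r+1))) + B * ((A*r/B) ^ (r/(r+1))) ^ (1/r)
      = cst r * (A ^ (1/(r+1)) * B ^ (r/(r+1))) ∧
    B * ((A*r/B) ^ (r/(r+1))) ^ (1/r) = (r/(r+1)) * (cst r * (A ^ (1/(r+1)) * B ^ (r/(r+1)))) := by
  have hr1 : (0:ℝ) < r + 1 := by linarith
  have hz : 0 < (A*r/B) ^ (r/(r+1)) := by positivity
  have hcst : 0 < cst r := cst_pos hr
  have logs : ∀ X Y : ℝ, 0 < X → 0 < Y →
      Real.log X = Real.log Y → X = Y := fun X Y hX hY h => eq_of_log hX hY h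
  have key3 : B * ((A*r/B) ^ (r/(r+1))) ^ (1/r) = (r/(r+1)) * (cst r * (A ^ (1/(r+1)) * B ^ (r/(r+1)))) := by
    apply eq_of_log (by positivity) (by positivity)
    unfold cst
    rw [Real.log_mul (ne_of_gt hB) (ne_of_gt (by positivity)), Real.log_rpow hz,
      Real.log_rpow (by positivity), Real.log_div (by positivity) (ne_of_gt hB),
      Real.log_mul (ne_of_gt hA) (ne_of_gt hr),
      Real.log_mul (by positivity : ((r:ℝ)/(r+1)) ≠ 0) (by positivity),
      Real.log_mul (by positivity : ((r:ℝ)+1) * r ^ (-(r/(r+1))) ≠ 0) (by positivity),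
      Real.log_mul (by positivity : ((r:ℝ)+1) ≠ 0) (by positivity),
      Real.log_mul (by positivity : A ^ (1/(r+1)) ≠ 0) (by positivity),
      Real.log_rpow hA, Real.log_rpow hB, Real.log_rpow hr,
      Real.log_div (ne_of_gt hr) (ne_of_gt hr1)]
    field_simp
    ring
  have key2 : A / ((A*r/B) ^ (r/(r+1))) + B * ((A*r/B) ^ (r/(r+1))) ^ (1/r)
      = cst r * (A ^ (1/(r+1)) * B ^ (r/(r+1))) := by
    have h1 : A / ((A*r/B) ^ (r/(r+1))) = (1/(r+1)) * (cst r * (A ^ (1/(r+1)) * B ^ (r/(r+1)))) := by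
      apply eq_of_log (by positivity) (by positivity)
      unfold cst
      rw [Real.log_div (ne_of_gt hA) (ne_of_gt hz), Real.log_rpow (by positivity),
        Real.log_div (by positivity) (ne_of_gt hB), Real.log_mul (ne_of_gt hA) (ne_of_gt hr),
        Real.log_mul (by positivity : (1/((r:ℝ)+1)) ≠ 0) (by positivity),
        Real.log_mul (by positivity : ((r:ℝ)+1) * r ^ (-(r/(r+1))) ≠ 0) (by positivity),
        Real.log_mul (by positivity : ((r:ℝ)+1) ≠ 0) (by positivity),
        Real.log_mul (by positivity : A ^ (1/(r+1)) ≠ 0) (by positivity),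
        Real.log_rpow hA, Real.log_rpow hB, Real.log_rpow hr,
        Real.log_div one_ne_zero (ne_of_gt hr1)]
      field_simp
      simp only [Real.log_one]
      ring
    rw [h1, key3]; field_simp; ring
  refine ⟨?_, key2, key3⟩
  intro z hz'
  have w1 : (0:ℝ) ≤ 1/(r+1) := by positivity
  have w2 : (0:ℝ) ≤ r/(r+1) := by positivity
  have p1 : (0:ℝ) ≤ (r+1) * (A/z) := by positivity
  have p2 : (0:ℝ) ≤ ((r+1)/r) * (B * z ^ (1/r)) := by positivity
  have hw : 1/(r+1) + r/(r+1) = 1 := by field_simp; ring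
  have gm := Real.geom_mean_le_arith_mean2_weighted w1 w2 p1 p2 hw
  have hL : ((r+1) * (A/z)) ^ (1/(r+1)) * (((r+1)/r) * (B * z ^ (1/r))) ^ (r/(r+1))
      = cst r * (A ^ (1/(r+1)) * B ^ (r/(r+1))) := by
    apply eq_of_log (by positivity) (by positivity)
    unfold cst
    rw [Real.log_mul (by positivity : (((r:ℝ)+1) * (A/z)) ^ (1/(r+1)) ≠ 0) (by positivity),
      Real.log_rpow (by positivity), Real.log_rpow (by positivity),
      Real.log_mul (ne_of_gt hr1) (by positivity), Real.log_div (ne_of_gt hA) (ne_of_gt hz'),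
      Real.log_mul (by positivity : ((r:ℝ)+1)/r ≠ 0) (by positivity),
      Real.log_mul (ne_of_gt hB) (by positivity), Real.log_rpow hz',
      Real.log_div (ne_of_gt hr1) (ne_of_gt hr),
      Real.log_mul (by positivity : ((r:ℝ)+1) * r ^ (-(r/(r+1))) ≠ 0) (by positivity),
      Real.log_mul (by positivity : ((r:ℝ)+1) ≠ 0) (by positivity),
      Real.log_mul (by positivity : A ^ (1/(r+1)) ≠ 0) (by positivity),
      Real.log_rpow hA, Real.log_rpow hB, Real.log_rpow hr]
    field_simp
    ring
  have hR : 1/(r+1) * ((r+1) * (A/z)) + r/(r+1) * (((r+1)/r) * (B * z ^ (1/r)))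
      = A / z + B * z ^ (1/r) := by field_simp
  rw [hL, hR] at gm
  exact gm
noncomputable def FF (N : ℕ) (r b : ℝ) (a x : ℕ → ℝ) : ℝ :=
  (∑ j ∈ range N, a j * (∏ i ∈ range j, x i) / x j) + b * (∏ i ∈ range N, x i) ^ (1/r)

noncomputable def MV (N : ℕ) (D r b : ℝ) (a : ℕ → ℝ) : ℝ :=
  D * (∏ j ∈ range N, a j ^ ((2:ℝ) ^ (N-1-j))) ^ (1/((2:ℝ)^N - 1 + r)) * b ^ (r/((2:ℝ)^N - 1 + r))

lemma gen : ∀ N : ℕ, 1 ≤ N → ∀ r : ℝ, 0 < r → ∃ D : ℝ, 0 < D ∧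
    ∀ (a : ℕ → ℝ) (b : ℝ), (∀ i, 0 < a i) → 0 < b →
      (∀ x : ℕ → ℝ, (∀ i, 0 < x i) → MV N D r b a ≤ FF N r b a x) ∧
      ∃ x0 : ℕ → ℝ, (∀ i, 0 < x0 i) ∧
        FF N r b a x0 = MV N D r b a ∧
        b * (∏ i ∈ range N, x0 i) ^ (1/r) = (r/((2:ℝ)^N - 1 + r)) * MV N D r b a := by
  intro N hNN
  induction N, hNN using Nat.le_induction with
  | base =>
    intro r hr
    refine ⟨cst r, cst_pos hr, fun a b ha hb => ?_⟩
    have hr1 : (0:ℝ) < r + 1 := by linarith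
    have ha0 := ha 0
    have hMV : MV 1 (cst r) r b a = cst r * ((a 0) ^ (1/(r+1)) * b ^ (r/(r+1))) := by
      unfold MV
      rw [prod_range_one, show ((2:ℝ)^(1-1-0) : ℝ) = 1 by norm_num, Real.rpow_one,
        show (2:ℝ)^1 - 1 + r = r + 1 by ring, mul_assoc]
    have hFF : ∀ x : ℕ → ℝ, FF 1 r b a x = a 0 / x 0 + b * (x 0) ^ (1/r) := by
      intro x
      unfold FF
      rw [sum_range_one, prod_range_one, prod_range_zero, mul_one]
    obtain ⟨hlb, heq, hprod⟩ := onevar ha0 hb hr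
    constructor
    · intro x hx
      rw [hMV, hFF]
      exact hlb (x 0) (hx 0)
    · refine ⟨fun _ => (a 0 * r / b) ^ (r/(r+1)),
        fun i => rpow_pos_of_pos (div_pos (mul_pos ha0 hr) hb) _, ?_, ?_⟩
      · rw [hMV, hFF]; exact heq
      · rw [hMV, prod_range_one, show (2:ℝ)^1 - 1 + r = r + 1 by ring]
        exact hprod
  | succ N hN IH =>
    intro r hr
    have hr1 : (0:ℝ) < r + 1 := by linarith
    have hr' : (0:ℝ) < (r+1)/2 := by linarith
    obtain ⟨D', hD', hIH⟩ := IH ((r+1)/2) hr'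
    have h2N : (1:ℝ) ≤ (2:ℝ)^N := one_le_pow₀ (by norm_num)
    have h2N1 : (2:ℝ)^(N+1) = 2 * 2^N := by rw [pow_succ]; ring
    have hT : (0:ℝ) < (2:ℝ)^(N+1) - 1 + r := by rw [h2N1]; nlinarith
    have hT2 : (0:ℝ) < (2:ℝ)^N - 1 + (r+1)/2 := by nlinarith
    have hTT : (2:ℝ)^N - 1 + (r+1)/2 = ((2:ℝ)^(N+1) - 1 + r)/2 := by rw [h2N1]; ring
    set T := (2:ℝ)^(N+1) - 1 + r with hTdef
    refine ⟨D' * cst r ^ ((r+1)/T), by have := cst_pos hr; positivity, ?_⟩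
    intro a b ha hb
    have haN := ha N
    set b' := cst r * (a N) ^ (1/(r+1)) * b ^ (r/(r+1)) with hb'def
    have hb' : 0 < b' := by have := cst_pos hr; positivity
    obtain ⟨hlb', x', hx', hFFeq', hPeq'⟩ := hIH a b' ha hb'
    set P := ∏ i ∈ range N, x' i with hPdef
    have hP : 0 < P := prod_pos fun i _ => hx' i
    set Pi1 := ∏ j ∈ range N, a j ^ ((2:ℝ) ^ (N-1-j)) with hPi1def
    have hPi1 : 0 < Pi1 := prod_pos fun j _ => rpow_pos_of_pos (ha j) _
    have hprodrec : (∏ j ∈ range (N+1), a j ^ ((2:ℝ)^(N+1-1-j))) = Pi1 ^ (2:ℝ) * a N := by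
      rw [prod_range_succ]
      congr 1
      · rw [hPi1def, ← Real.finset_prod_rpow _ _ (fun j _ => le_of_lt (rpow_pos_of_pos (ha j) _)) 2]
        apply prod_congr rfl
        intro j hj
        rw [← Real.rpow_mul (le_of_lt (ha j))]
        congr 1
        rw [mem_range] at hj
        rw [← pow_succ]
        congr 1
        omega
      · rw [show N+1-1-N = 0 by omega, pow_zero, Real.rpow_one]
    have hMVeq : MV N D' ((r+1)/2) b' a = MV (N+1) (D' * cst r ^ ((r+1)/T)) r b a := by
      unfold MV
      rw [hprodrec, ← hPi1def]
      apply eq_of_log (by have := cst_pos hr; positivity) (by have := cst_pos hr; positivity)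
      have hc := cst_pos hr
      rw [Real.log_mul (by positivity) (by positivity), Real.log_mul (by positivity) (by positivity),
        Real.log_mul (by positivity) (by positivity), Real.log_mul (by positivity) (by positivity),
        Real.log_mul (ne_of_gt hD') (by positivity),
        Real.log_rpow hPi1, Real.log_rpow hb', Real.log_rpow hc,
        Real.log_rpow (by positivity : (0:ℝ) < Pi1 ^ (2:ℝ) * a N), Real.log_rpow hb,
        Real.log_mul (by positivity) (ne_of_gt haN), Real.log_rpow hPi1,
        hb'def, Real.log_mul (by positivity) (by positivity),
        Real.log_mul (by positivity) (by positivity), Real.log_rpow haN, Real.log_rpow hb]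
      rw [hTT]
      field_simp
      rw [← hTdef]
      field_simp
      ring
    have hval : ∀ Q : ℝ, 0 < Q → cst r * ((a N * Q) ^ (1/(r+1)) * (b * Q^(1/r)) ^ (r/(r+1)))
        = b' * Q ^ (1/((r+1)/2)) := by
      intro Q hQ
      have hc := cst_pos hr
      apply eq_of_log (by positivity) (by positivity)
      rw [Real.log_mul (by positivity) (by positivity), Real.log_mul (by positivity) (by positivity),
        Real.log_rpow (by positivity), Real.log_rpow (by positivity),
        Real.log_mul (ne_of_gt haN) (ne_of_gt hQ),
        Real.log_mul (ne_of_gt hb) (by positivity), Real.log_rpow hQ,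
        Real.log_mul (by positivity) (by positivity), Real.log_rpow hQ,
        hb'def, Real.log_mul (by positivity) (by positivity),
        Real.log_mul (by positivity) (by positivity), Real.log_rpow haN, Real.log_rpow hb]
      field_simp
      ring
    have hsplit : ∀ x : ℕ → ℝ, (∀ i, 0 < x i) → FF (N+1) r b a x
        = (∑ j ∈ range N, a j * (∏ i ∈ range j, x i) / x j)
          + ((a N * ∏ i ∈ range N, x i) / x N + (b * (∏ i ∈ range N, x i)^(1/r)) * (x N)^(1/r)) := by
      intro x hx
      unfold FF
      rw [sum_range_succ, prod_range_succ,
        Real.mul_rpow (le_of_lt (prod_pos fun i _ => hx i)) (le_of_lt (hx N))]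
      ring
    constructor
    · intro x hx
      have hQ : 0 < ∏ i ∈ range N, x i := prod_pos fun i _ => hx i
      obtain ⟨hlb1, _, _⟩ := onevar (mul_pos haN hQ) (mul_pos hb (rpow_pos_of_pos hQ _)) hr
      have step1 := hlb1 (x N) (hx N)
      rw [hval _ hQ] at step1
      have step2 : FF N ((r+1)/2) b' a x ≤ FF (N+1) r b a x := by
        rw [hsplit x hx]
        unfold FF
        linarith
      calc MV (N+1) (D' * cst r ^ ((r+1)/T)) r b a = MV N D' ((r+1)/2) b' a := hMVeq.symm
        _ ≤ FF N ((r+1)/2) b' a x := hlb' x hx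
        _ ≤ FF (N+1) r b a x := step2
    · set A := a N * P with hAdef
      set B := b * P ^ (1/r) with hBdef
      have hA : 0 < A := mul_pos haN hP
      have hB : 0 < B := mul_pos hb (rpow_pos_of_pos hP _)
      set z := (A * r / B) ^ (r/(r+1)) with hzdef
      have hz : 0 < z := by positivity
      obtain ⟨_, heq1, hprod1⟩ := onevar hA hB hr
      rw [← hzdef] at heq1 hprod1
      have heq2 : A / z + B * z ^ (1/r) = b' * P ^ (1/((r+1)/2)) := by
        rw [heq1, hAdef, hBdef]; exact hval P hP
      have hprod2 : B * z ^ (1/r) = (r/(r+1)) * (b' * P ^ (1/((r+1)/2))) := by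
        rw [hprod1, hAdef, hBdef, hval P hP]
      have hposupd : ∀ i, 0 < Function.update x' N z i := by
        intro i
        rcases eq_or_ne i N with h | h
        · rw [h, Function.update_self]; exact hz
        · rw [Function.update_of_ne h]; exact hx' i
      have hprodN : ∏ i ∈ range N, Function.update x' N z i = P := by
        rw [hPdef]; apply prod_congr rfl; intro i hi
        rw [mem_range] at hi
        exact Function.update_of_ne (by omega) _ _
      refine ⟨Function.update x' N z, hposupd, ?_, ?_⟩
      · have hsum : ∑ j ∈ range N, a j * (∏ i ∈ range j, Function.update x' N z i) / Function.update x' N z j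
            = ∑ j ∈ range N, a j * (∏ i ∈ range j, x' i) / x' j := by
          apply sum_congr rfl
          intro j hj
          rw [mem_range] at hj
          rw [Function.update_of_ne (by omega : j ≠ N)]
          congr 2
          apply prod_congr rfl
          intro i hi
          rw [mem_range] at hi
          exact Function.update_of_ne (by omega) _ _
        rw [hsplit _ hposupd, hsum, hprodN, Function.update_self, ← hAdef, ← hBdef, heq2,
          ← hMVeq, ← hFFeq']
        unfold FF
        rfl
      · have hprodN1 : ∏ i ∈ range (N+1), Function.update x' N z i = P * z := by
          rw [prod_range_succ, Function.update_self, hprodN]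
        rw [hprodN1, Real.mul_rpow (le_of_lt hP) (le_of_lt hz), ← mul_assoc, ← hBdef, hprod2,
          hPeq', hMVeq, ← mul_assoc]
        congr 1
        rw [hTT]
        field_simp

def extf {n : ℕ} (x : Fin n → ℝ) : ℕ → ℝ := fun k => if h : k < n then x ⟨k, h⟩ else 1

lemma prod_bridge {n : ℕ} (x : Fin n → ℝ) (j : Fin n) :
    ∏ i ∈ Finset.univ.filter (· < j), x i = ∏ i ∈ range (j:ℕ), extf x i := by
  refine Finset.prod_bij' (fun (i : Fin n) _ => (i:ℕ))
    (fun k hk => (⟨k, lt_trans (mem_range.1 hk) j.isLt⟩ : Fin n)) ?_ ?_ ?_ ?_ ?_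
  · intro i hi
    rw [mem_filter] at hi
    exact mem_range.2 hi.2
  · intro k hk
    rw [mem_filter]
    exact ⟨mem_univ _, mem_range.1 hk⟩
  · intro i _; exact Fin.eta _ _
  · intro k _; rfl
  · intro i hi
    rw [mem_filter] at hi
    unfold extf
    rw [dif_pos i.isLt]

lemma sum_bridge {n : ℕ} (a x : Fin n → ℝ) :
    (∑ j : Fin n, a j * (∏ i ∈ Finset.univ.filter (· < j), x i) / x j)
      = ∑ j ∈ range n, extf a j * (∏ i ∈ range j, extf x i) / extf x j := by
  rw [← Fin.sum_univ_eq_sum_range (fun j => extf a j * (∏ i ∈ range j, extf x i) / extf x j) n]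
  apply Finset.sum_congr rfl
  intro j _
  rw [prod_bridge x j]
  unfold extf
  rw [dif_pos j.isLt, dif_pos j.isLt]

lemma prod_bridge_full {n : ℕ} (x : Fin n → ℝ) (e : ℕ → ℝ) :
    (∏ j : Fin n, x j ^ (e (j:ℕ))) = ∏ j ∈ range n, (extf x j) ^ (e j) := by
  rw [← Fin.prod_univ_eq_prod_range (fun j => extf x j ^ e j) n]
  apply Finset.prod_congr rfl
  intro j _
  unfold extf
  rw [dif_pos j.isLt]

lemma prod_bridge_npow {n : ℕ} (x : Fin n → ℝ) (e : ℕ → ℕ) :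
    (∏ j : Fin n, x j ^ (e (j:ℕ))) = ∏ j ∈ range n, (extf x j) ^ (e j) := by
  rw [← Fin.prod_univ_eq_prod_range (fun j => extf x j ^ e j) n]
  apply Finset.prod_congr rfl
  intro j _
  unfold extf
  rw [dif_pos j.isLt]
/-- Minimization lemma: for positive `a_1, …, a_n` and integers `n ≥ 2`, `l ≥ 1`, the
function `f(x) = a_1/x_1 + a_2 x_1/x_2 + ⋯ + a_n (x_1⋯x_{n-1})/x_n + x_n^{1/l}` on
`(0,∞)^n` attains the minimum value `C(n,l) · φ(a)^{1/(2^{n-1}+l)}`, where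
`φ(a) = a_1^{2^{n-2}} a_2^{2^{n-3}} ⋯ a_{n-1} a_n`, with `C(n,l) > 0` depending only on
`n, l`; moreover the minimum is attained at a point whose last coordinate is
`(C(n,l)·l/(2^{n-1}+l))^l · φ(a)^{l/(2^{n-1}+l)}`. -/
theorem statement2 (n l : ℕ) (hn : 2 ≤ n) (hl : 1 ≤ l) :
    ∃ C : ℝ, 0 < C ∧
      ∀ a : Fin n → ℝ, (∀ i, 0 < a i) →
        IsLeast
          ((fun x : Fin n → ℝ =>
              (∑ j : Fin n, a j * (∏ i ∈ Finset.univ.filter (· < j), x i) / x j) +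
                x ⟨n - 1, by omega⟩ ^ ((1 : ℝ) / l)) ''
            {x : Fin n → ℝ | ∀ i, 0 < x i})
          (C * (∏ j : Fin n,
                a j ^ (if (j : ℕ) = n - 1 then 1 else 2 ^ (n - 2 - (j : ℕ)))) ^
              ((1 : ℝ) / ((2 : ℝ) ^ (n - 1) + l))) ∧
        ∃ x0 : Fin n → ℝ, (∀ i, 0 < x0 i) ∧
          ((∑ j : Fin n, a j * (∏ i ∈ Finset.univ.filter (· < j), x0 i) / x0 j) +
              x0 ⟨n - 1, by omega⟩ ^ ((1 : ℝ) / l)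
            = C * (∏ j : Fin n,
                a j ^ (if (j : ℕ) = n - 1 then 1 else 2 ^ (n - 2 - (j : ℕ)))) ^
              ((1 : ℝ) / ((2 : ℝ) ^ (n - 1) + l))) ∧
          x0 ⟨n - 1, by omega⟩ =
            (C * l / ((2 : ℝ) ^ (n - 1) + l)) ^ l *
              (∏ j : Fin n,
                a j ^ (if (j : ℕ) = n - 1 then 1 else 2 ^ (n - 2 - (j : ℕ)))) ^
                ((l : ℝ) / ((2 : ℝ) ^ (n - 1) + l)) := by
  obtain ⟨N, rfl⟩ : ∃ N, n = N + 1 := ⟨n - 1, by omega⟩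
  have hN1 : 1 ≤ N := by omega
  have hl0 : (0:ℝ) < (l:ℝ) := by exact_mod_cast Nat.lt_of_lt_of_le Nat.zero_lt_one hl
  have hcl := cst_pos hl0
  have hl1 : (0:ℝ) < (l:ℝ) + 1 := by linarith
  obtain ⟨D, hD, hgen⟩ := gen N hN1 ((l:ℝ)+1) hl1
  have h2N : (1:ℝ) ≤ (2:ℝ)^N := one_le_pow₀ one_le_two
  have hQ : (0:ℝ) < (2:ℝ)^N + (l:ℝ) := by positivity
  have hdQ : (2:ℝ)^N - 1 + ((l:ℝ)+1) = (2:ℝ)^N + (l:ℝ) := by ring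
  simp only [Nat.add_sub_cancel]
  refine ⟨D * cst (l:ℝ) ^ (((l:ℝ)+1)/((2:ℝ)^N + l)), by positivity, ?_⟩
  intro a ha
  set C := D * cst (l:ℝ) ^ (((l:ℝ)+1)/((2:ℝ)^N + l)) with hCdef
  set a' := extf a with ha'def
  have ha' : ∀ i, 0 < a' i := by
    intro i
    rw [ha'def]
    unfold extf
    split
    · exact ha _
    · exact one_pos
  have haN := ha' N
  set b1 := cst (l:ℝ) * (a' N) ^ (1/((l:ℝ)+1)) with hb1def
  have hb1 : 0 < b1 := by positivity
  obtain ⟨hlb, x0', hx0', hFF0, hP0⟩ := hgen a' b1 ha' hb1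
  set φ := ∏ j : Fin (N+1), a j ^ (if (j:ℕ) = N then 1 else 2 ^ (N + 1 - 2 - (j:ℕ))) with hφdef
  have hφpos : 0 < φ := prod_pos fun j _ => pow_pos (ha j) _
  set Pi := ∏ j ∈ range N, a' j ^ ((2:ℝ)^(N-1-j)) with hPidef
  have hPipos : 0 < Pi := prod_pos fun j _ => rpow_pos_of_pos (ha' j) _
  have hφ2 : φ = Pi * a' N := by
    rw [hφdef, prod_bridge_npow a (fun k => if k = N then 1 else 2 ^ (N + 1 - 2 - k)),
      ← ha'def, prod_range_succ, if_pos rfl, pow_one, hPidef]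
    congr 1
    apply prod_congr rfl
    intro j hj
    rw [mem_range] at hj
    rw [if_neg (by omega), ← Real.rpow_natCast (a' j) (2 ^ (N+1-2-j))]
    congr 1
    push_cast
    congr 1
  -- key value identity
  have hval0 : MV N D ((l:ℝ)+1) b1 a' = C * φ ^ ((1:ℝ)/((2:ℝ)^N + l)) := by
    unfold MV
    rw [← hPidef, hdQ, hφ2, hCdef, hb1def]
    apply eq_of_log (by positivity) (by positivity)
    rw [Real.log_mul (by positivity) (by positivity), Real.log_mul (ne_of_gt hD) (by positivity),
      Real.log_rpow hPipos, Real.log_rpow (by positivity),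
      Real.log_mul (by positivity) (by positivity), Real.log_rpow haN,
      Real.log_mul (by positivity) (by positivity), Real.log_mul (ne_of_gt hD) (by positivity),
      Real.log_rpow hcl, Real.log_rpow (by positivity : (0:ℝ) < Pi * a' N),
      Real.log_mul (ne_of_gt hPipos) (ne_of_gt haN)]
    field_simp
    ring
  -- algebra: onevar value = b1 * P^(1/(l+1))
  have hBP : ∀ P : ℝ, 0 < P → cst (l:ℝ) * ((a' N * P) ^ (1/((l:ℝ)+1)) * (1:ℝ) ^ ((l:ℝ)/((l:ℝ)+1)))
      = b1 * P ^ (1/((l:ℝ)+1)) := by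
    intro P hP
    rw [Real.one_rpow, mul_one, Real.mul_rpow (le_of_lt haN) (le_of_lt hP), hb1def]
    ring
  -- lower bound
  have key : ∀ x : Fin (N+1) → ℝ, (∀ i, 0 < x i) →
      C * φ ^ ((1:ℝ)/((2:ℝ)^N + l)) ≤
        (∑ j : Fin (N+1), a j * (∏ i ∈ Finset.univ.filter (· < j), x i) / x j) +
          x ⟨N, by omega⟩ ^ ((1:ℝ)/(l:ℝ)) := by
    intro x hx
    have hx' : ∀ i, 0 < extf x i := by
      intro i
      unfold extf
      split
      · exact hx _
      · exact one_pos
    rw [sum_bridge a x, ← ha'def, Finset.sum_range_succ]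
    have hlast : x ⟨N, by omega⟩ = extf x N := by
      unfold extf
      rw [dif_pos (show N < N + 1 by omega)]
    rw [hlast]
    set P := ∏ i ∈ range N, extf x i with hPdef
    have hPpos : 0 < P := prod_pos fun i _ => hx' i
    obtain ⟨h1, _, _⟩ := onevar (mul_pos haN hPpos) one_pos hl0
    have bound := h1 (extf x N) (hx' N)
    rw [hBP P hPpos, one_mul] at bound
    have step : FF N ((l:ℝ)+1) b1 a' (extf x) ≤
        (∑ j ∈ range N, a' j * (∏ i ∈ range j, extf x i) / extf x j
          + a' N * (∏ i ∈ range N, extf x i) / extf x N) + extf x N ^ ((1:ℝ)/(l:ℝ)) := by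
      unfold FF
      rw [← hPdef]
      have : a' N * P / extf x N = a' N * (∏ i ∈ range N, extf x i) / extf x N := by rw [hPdef]
      linarith [bound]
    calc C * φ ^ ((1:ℝ)/((2:ℝ)^N + l)) = MV N D ((l:ℝ)+1) b1 a' := hval0.symm
      _ ≤ FF N ((l:ℝ)+1) b1 a' (extf x) := hlb (extf x) hx'
      _ ≤ _ := step
  -- witness
  set P0 := ∏ i ∈ range N, x0' i with hP0def
  have hP0pos : 0 < P0 := prod_pos fun i _ => hx0' i
  set A := a' N * P0 with hAdef
  have hA : 0 < A := mul_pos haN hP0pos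
  obtain ⟨_, heq1, hprod1⟩ := onevar hA one_pos hl0
  set z := (A * (l:ℝ) / 1) ^ ((l:ℝ)/((l:ℝ)+1)) with hzdef
  have hz : 0 < z := by positivity
  set u := Function.update x0' N z with hudef
  have hu : ∀ i, 0 < u i := by
    intro i
    rcases eq_or_ne i N with h | h
    · rw [hudef, h, Function.update_self]; exact hz
    · rw [hudef, Function.update_of_ne h]; exact hx0' i
  set x0fin : Fin (N+1) → ℝ := fun j => u (j:ℕ) with hx0findef
  have hx0finpos : ∀ i, 0 < x0fin i := fun i => hu _
  have hext : ∀ k, k < N + 1 → extf x0fin k = u k := by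
    intro k hk
    unfold extf
    rw [dif_pos hk]
  have huN : u N = z := Function.update_self N z x0'
  have hulow : ∀ i, i < N → u i = x0' i := by
    intro i hi
    rw [hudef, Function.update_of_ne (by omega)]
  have hprodu : ∏ i ∈ range N, u i = P0 := by
    rw [hP0def]
    exact prod_congr rfl fun i hi => hulow i (mem_range.1 hi)
  -- the main equality at the witness
  have hmain : (∑ j : Fin (N+1), a j * (∏ i ∈ Finset.univ.filter (· < j), x0fin i) / x0fin j) +
      x0fin ⟨N, by omega⟩ ^ ((1:ℝ)/(l:ℝ)) = C * φ ^ ((1:ℝ)/((2:ℝ)^N + l)) := by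
    rw [sum_bridge a x0fin, ← ha'def, Finset.sum_range_succ]
    have hlast : x0fin ⟨N, by omega⟩ = extf x0fin N := by
      unfold extf
      rw [dif_pos (show N < N + 1 by omega)]
    have hsum : ∑ j ∈ range N, a' j * (∏ i ∈ range j, extf x0fin i) / extf x0fin j
        = ∑ j ∈ range N, a' j * (∏ i ∈ range j, x0' i) / x0' j := by
      apply sum_congr rfl
      intro j hj
      rw [mem_range] at hj
      rw [hext j (by omega), hulow j hj]
      congr 2
      apply prod_congr rfl
      intro i hi
      rw [mem_range] at hi
      rw [hext i (by omega), hulow i (by omega)]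
    have hprodx : ∏ i ∈ range N, extf x0fin i = P0 := by
      rw [← hprodu]
      exact prod_congr rfl fun i hi => hext i (by rw [mem_range] at hi; omega)
    rw [hlast, hsum, hprodx, hext N (by omega), huN]
    have : a' N * P0 / z + z ^ ((1:ℝ)/(l:ℝ)) = A / z + 1 * z ^ (1/(l:ℝ)) := by
      rw [hAdef, one_mul]
    rw [add_assoc, this, heq1, hBP P0 hP0pos, ← hval0, ← hFF0]
    unfold FF
    rfl
  -- value of z
  have hzval : z = (C * (l:ℝ) / ((2:ℝ)^N + l)) ^ l * φ ^ ((l:ℝ)/((2:ℝ)^N + l)) := by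
    have hz1 : z ^ ((1:ℝ)/(l:ℝ)) = ((l:ℝ)/((2:ℝ)^N + l)) * (C * φ ^ ((1:ℝ)/((2:ℝ)^N + l))) := by
      have e1 : (1:ℝ) * z ^ (1/(l:ℝ)) = ((l:ℝ)/((l:ℝ)+1)) * (cst (l:ℝ) * (A ^ (1/((l:ℝ)+1)) * (1:ℝ) ^ ((l:ℝ)/((l:ℝ)+1)))) := hprod1
      rw [one_mul, hAdef, hBP P0 hP0pos, hP0, hdQ, hval0] at e1
      rw [e1]
      field_simp
    have hz2 : z = (z ^ ((1:ℝ)/(l:ℝ))) ^ (l:ℕ) := by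
      rw [← Real.rpow_natCast (z ^ ((1:ℝ)/(l:ℝ))) l, ← Real.rpow_mul (le_of_lt hz),
        one_div_mul_cancel (ne_of_gt hl0), Real.rpow_one]
    rw [hz2, hz1]
    have hφl : φ ^ ((l:ℝ)/((2:ℝ)^N + l)) = (φ ^ ((1:ℝ)/((2:ℝ)^N + l))) ^ (l:ℕ) := by
      rw [← Real.rpow_natCast (φ ^ ((1:ℝ)/((2:ℝ)^N + l))) l, ← Real.rpow_mul (le_of_lt hφpos)]
      congr 1
      ring
    rw [hφl, ← mul_pow]
    congr 1
    ring
  refine ⟨⟨⟨x0fin, hx0finpos, hmain⟩, ?_⟩, x0fin, hx0finpos, hmain, ?_⟩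
  · rintro y ⟨x, hxpos, rfl⟩
    exact key x hxpos
  · have : x0fin ⟨N, by omega⟩ = z := huN
    rw [this, hzval]
end

section
/- Let P be a real polynomial of degree d on ℝ^n and let α be an admissible index for P with coefficient a_α; set μ(α) := 4/|a_α|^{1/|α|}. Then there exists a constant C > 0 depending only on n such that for every δ > 0 and every r > 0, vol_n(V_δ ∩ Δ_r^n) ≤ C·[d·μ(α)·δ^{1/|α|}·r^{n−1} + (d·μ(α)·δ^{1/|α|})^n]. In particular there is a constant C' > 0 depending only on n, d and |a_α|^{1/|α|} with vol_n(V_δ ∩ Δ_r^n) ≤ C'·[δ^{1/|α|}·r^{n−1} + δ^{n/|α|}]. -/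
open MeasureTheory Metric MvPolynomial
open scoped ENNReal NNReal


open Finset Set



lemma coeff_basis_top {k : ℕ} (v : Fin (k + 1) → ℝ) (i : Fin (k + 1)) :
    (Lagrange.basis Finset.univ v i).coeff k = ∏ j ∈ Finset.univ.erase i, (v i - v j)⁻¹ := by
  have hcard : (Finset.univ.erase i).card = k := by
    rw [Finset.card_erase_of_mem (Finset.mem_univ i), Finset.card_univ, Fintype.card_fin]; rfl
  have h1 : Lagrange.basis Finset.univ v i
      = Polynomial.C (∏ j ∈ Finset.univ.erase i, (v i - v j)⁻¹) *
          ∏ j ∈ Finset.univ.erase i, (Polynomial.X - Polynomial.C (v j)) := by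
    rw [Lagrange.basis, map_prod, ← Finset.prod_mul_distrib]
    rfl
  have hmonic : (∏ j ∈ Finset.univ.erase i, (Polynomial.X - Polynomial.C (v j))).Monic :=
    Polynomial.monic_prod_of_monic _ _ fun j _ => Polynomial.monic_X_sub_C (v j)
  have hdeg : (∏ j ∈ Finset.univ.erase i, (Polynomial.X - Polynomial.C (v j))).natDegree = k := by
    rw [Polynomial.natDegree_prod _ _ (fun j _ => Polynomial.X_sub_C_ne_zero (v j))]
    simp [Polynomial.natDegree_X_sub_C, hcard]
  rw [h1, Polynomial.coeff_C_mul]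
  have : (∏ j ∈ Finset.univ.erase i, (Polynomial.X - Polynomial.C (v j))).coeff k = 1 := by
    have h2 := hmonic.coeff_natDegree
    rw [hdeg] at h2; exact h2
  rw [this, mul_one]

lemma coeff_top_eq_sum {k : ℕ} (v : Fin (k + 1) → ℝ) (hv : Function.Injective v)
    (p : Polynomial ℝ) (hdeg : p.natDegree ≤ k) :
    p.coeff k = ∑ i, Polynomial.eval (v i) p * ∏ j ∈ Finset.univ.erase i, (v i - v j)⁻¹ := by
  have hinj : Set.InjOn v (Finset.univ : Finset (Fin (k+1))) := hv.injOn
  have hlt : p.degree < (Finset.univ : Finset (Fin (k+1))).card := by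
    rw [Finset.card_univ, Fintype.card_fin]
    exact lt_of_le_of_lt Polynomial.degree_le_natDegree
      (by exact_mod_cast Nat.lt_succ_of_le hdeg)
  have h := Lagrange.eq_interpolate hinj hlt
  conv_lhs => rw [h]
  rw [Lagrange.interpolate_apply, Polynomial.finset_sum_coeff]
  refine Finset.sum_congr rfl fun i _ => ?_
  rw [Polynomial.coeff_C_mul, coeff_basis_top]



lemma exists_gap_points (E : Set ℝ) (hE : IsClosed E) {r : ℝ} (hEr : E ⊆ Set.Icc (-r) r)
    (k : ℕ) (hm : 0 < (volume E).toReal) :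
    ∃ t : Fin (k + 1) → ℝ, (∀ i, t i ∈ E) ∧
      ∀ i j : Fin (k + 1), i < j → (volume E).toReal / (k + 2) ≤ t j - t i := by
  set m := (volume E).toReal with hmdef
  have hfin : volume E ≠ ⊤ := by
    refine ne_top_of_le_ne_top ?_ (measure_mono hEr)
    simp [Real.volume_Icc]
  have hfint : ∀ t : ℝ, volume (E ∩ Set.Iic t) ≠ ⊤ :=
    fun t => ne_top_of_le_ne_top hfin (measure_mono Set.inter_subset_left)
  set F : ℝ → ℝ := fun t => (volume (E ∩ Set.Iic t)).toReal with hFdef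
  have Fmono : Monotone F := by
    intro t t' h
    exact ENNReal.toReal_mono (hfint t')
      (measure_mono (Set.inter_subset_inter_right _ (Set.Iic_subset_Iic.2 h)))
  have Flip : ∀ t t' : ℝ, t ≤ t' → F t' - F t ≤ t' - t := by
    intro t t' h
    have hsub : E ∩ Set.Iic t' ⊆ (E ∩ Set.Iic t) ∪ Set.Ioc t t' := by
      rintro x ⟨hxE, hx⟩
      rcases le_or_gt x t with h' | h'
      · exact Or.inl ⟨hxE, h'⟩
      · exact Or.inr ⟨h', hx⟩
    have hv : volume (E ∩ Set.Iic t') ≤ volume (E ∩ Set.Iic t) + volume (Set.Ioc t t') :=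
      le_trans (measure_mono hsub) (measure_union_le _ _)
    have := ENNReal.toReal_mono (by
        refine ENNReal.add_ne_top.2 ⟨hfint t, ?_⟩
        simp [Real.volume_Ioc]) hv
    rw [ENNReal.toReal_add (hfint t) (by simp [Real.volume_Ioc]),
      Real.volume_Ioc, ENNReal.toReal_ofReal (by linarith)] at this
    linarith [this]
  have hFr : F r = m := by
    have : E ∩ Set.Iic r = E := Set.inter_eq_self_of_subset_left (fun x hx => (hEr hx).2)
    simp only [hFdef, this, hmdef]
  have hF0 : ∀ t : ℝ, t < -r → F t = 0 := by
    intro t ht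
    have : E ∩ Set.Iic t = ∅ := by
      ext x; simp only [Set.mem_inter_iff, Set.mem_Iic, Set.mem_empty_iff_false, iff_false]
      rintro ⟨hxE, hx⟩; linarith [(hEr hxE).1]
    simp [hFdef, this]
  -- the selection function
  have key : ∀ c : ℝ, 0 < c → c ≤ m → ∃ t : ℝ, t ∈ E ∧ F t = c ∧
      ∀ s : ℝ, c ≤ F s → t ≤ s := by
    intro c hc hcm
    set S : Set ℝ := {t | c ≤ F t} with hSdef
    have hrS : r ∈ S := by simpa [hSdef, hFr] using hcm
    have hbdd : BddBelow S := by
      refine ⟨-r, fun t ht => ?_⟩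
      by_contra h
      push_neg at h
      have := hF0 t h
      rw [hSdef] at ht; simp only [Set.mem_setOf_eq] at ht
      linarith
    set t₀ := sInf S with ht₀
    have hlb : ∀ s ∈ S, t₀ ≤ s := fun s hs => csInf_le hbdd hs
    have hge : c ≤ F t₀ := by
      refine le_of_forall_pos_le_add fun ε hε => ?_
      have : sInf S < sInf S + ε := by linarith
      obtain ⟨s, hsS, hs⟩ := (csInf_lt_iff hbdd ⟨r, hrS⟩).1 this
      have h1 : t₀ ≤ s := hlb s hsS
      have h2 : F s - F t₀ ≤ s - t₀ := Flip _ _ h1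
      have h3 : c ≤ F s := hsS
      have : s - t₀ < ε := by rw [ht₀] at *; linarith
      linarith
    have hlt : ∀ t : ℝ, t < t₀ → F t < c := by
      intro t ht
      by_contra h
      push_neg at h
      exact absurd (hlb t h) (not_le.2 ht)
    have hle : F t₀ ≤ c := by
      refine le_of_forall_pos_le_add fun ε hε => ?_
      have h1 : F (t₀ - ε) < c := hlt _ (by linarith)
      have h2 : F t₀ - F (t₀ - ε) ≤ ε := by
        have := Flip (t₀ - ε) t₀ (by linarith)
        linarith
      linarith
    have htE : t₀ ∈ E := by
      by_contra h
      have : Eᶜ ∈ nhds t₀ := hE.isOpen_compl.mem_nhds h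
      obtain ⟨ε, hε, hball⟩ := Metric.mem_nhds_iff.1 this
      have hempty : E ∩ Set.Ioc (t₀ - ε/2) t₀ = ∅ := by
        ext x
        simp only [Set.mem_inter_iff, Set.mem_Ioc, Set.mem_empty_iff_false, iff_false]
        rintro ⟨hxE, hx1, hx2⟩
        have : x ∈ Metric.ball t₀ ε := by
          rw [Metric.mem_ball, Real.dist_eq, abs_lt]; constructor <;> linarith
        exact hball this hxE
      have hFeq : F t₀ = F (t₀ - ε/2) := by
        have hsub : E ∩ Set.Iic t₀ ⊆ E ∩ Set.Iic (t₀ - ε/2) := by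
          rintro x ⟨hxE, hx⟩
          refine ⟨hxE, ?_⟩
          by_contra h'
          rw [Set.mem_Iic, not_le] at h'
          have : x ∈ E ∩ Set.Ioc (t₀ - ε/2) t₀ := ⟨hxE, h', hx⟩
          rw [hempty] at this
          exact this
        have h1 : F t₀ ≤ F (t₀ - ε/2) := ENNReal.toReal_mono (hfint _) (measure_mono hsub)
        exact le_antisymm h1 (Fmono (by linarith))
      have : t₀ - ε/2 ∈ S := by
        rw [hSdef]; simp only [Set.mem_setOf_eq, ← hFeq]
        linarith [hge]
      have := hlb _ this
      linarith
    exact ⟨t₀, htE, le_antisymm hle hge, fun s hs => hlb s hs⟩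
  -- apply to c_i
  have hk2 : (0:ℝ) < (k:ℝ) + 2 := by positivity
  set c : Fin (k+1) → ℝ := fun i => ((i:ℝ) + 1) * m / ((k:ℝ) + 2) with hcdef
  have hc0 : ∀ i, 0 < c i := fun i => by positivity
  have hcm : ∀ i, c i ≤ m := by
    intro i
    rw [hcdef]
    rw [div_le_iff₀ hk2]
    have : (i:ℝ) + 1 ≤ (k:ℝ) + 2 := by
      have := i.is_le
      push_cast
      exact_mod_cast by linarith [show (i:ℝ) ≤ (k:ℝ) from by exact_mod_cast i.is_le]
    nlinarith [hm.le]
  choose t htE htF htmin using fun i => key (c i) (hc0 i) (hcm i)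
  refine ⟨t, htE, fun i j hij => ?_⟩
  have hcij : c j - c i = ((j:ℝ) - (i:ℝ)) * m / ((k:ℝ) + 2) := by
    rw [hcdef]; ring
  have hij1 : (1:ℝ) ≤ (j:ℝ) - (i:ℝ) := by
    have : (i:ℕ) < (j:ℕ) := hij
    have : (i:ℕ) + 1 ≤ (j:ℕ) := this
    have := (Nat.cast_le (α := ℝ)).2 this
    push_cast at this
    linarith
  have hcij' : m / ((k:ℝ) + 2) ≤ c j - c i := by
    rw [hcij]
    rw [div_le_div_iff_of_pos_right hk2]  -- maybe wrong name
    nlinarith [hm.le]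
  have hts : t i ≤ t j := by
    have : c i ≤ F (t j) := by rw [htF j]; linarith [hcij', div_pos hm hk2]
    exact htmin i _ this
  have := Flip (t i) (t j) hts
  rw [htF i, htF j] at this
  linarith

lemma oneD_sublevel (p : Polynomial ℝ) (k : ℕ) (hk : 1 ≤ k) (hdeg : p.natDegree ≤ k)
    (hc : p.coeff k ≠ 0) {δ r : ℝ} (hδ : 0 < δ) :
    volume {t : ℝ | |Polynomial.eval t p| ≤ δ ∧ |t| < r} ≤
      ENNReal.ofReal (6 * k * (δ / |p.coeff k|) ^ ((1:ℝ)/(k:ℝ))) := by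
  set E : Set ℝ := {t : ℝ | |Polynomial.eval t p| ≤ δ} ∩ Set.Icc (-r) r with hEdef
  have hcont : Continuous fun t : ℝ => |Polynomial.eval t p| :=
    continuous_abs.comp (Polynomial.continuous p)
  have hclosed : IsClosed E :=
    (isClosed_le hcont continuous_const).inter isClosed_Icc
  have hsub : {t : ℝ | |Polynomial.eval t p| ≤ δ ∧ |t| < r} ⊆ E := by
    rintro t ⟨h1, h2⟩
    rw [abs_lt] at h2
    exact ⟨h1, le_of_lt h2.1, le_of_lt h2.2⟩
  have hfin : volume E ≠ ⊤ := by
    refine ne_top_of_le_ne_top ?_ (measure_mono Set.inter_subset_right)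
    simp [Real.volume_Icc]
  set m := (volume E).toReal with hmdef
  rcases eq_or_lt_of_le (ENNReal.toReal_nonneg (a := volume E)) with h0 | hm
  · -- measure zero
    have : volume E = 0 := by
      rw [← ENNReal.ofReal_toReal hfin, ← h0]; simp
    calc volume {t : ℝ | |Polynomial.eval t p| ≤ δ ∧ |t| < r} ≤ volume E := measure_mono hsub
    _ = 0 := this
    _ ≤ _ := zero_le
  · obtain ⟨t, htE, hgap⟩ := exists_gap_points E hclosed Set.inter_subset_right k hm
    set g := m / ((k:ℝ) + 2) with hgdef
    have hg : 0 < g := by positivity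
    have hinj : Function.Injective t := by
      intro i j hij
      by_contra hne
      rcases lt_or_gt_of_ne hne with h | h
      · have := hgap i j h; rw [hij] at this; linarith
      · have := hgap j i h; rw [hij] at this; linarith
    have hLag := coeff_top_eq_sum t hinj p hdeg
    have habs : ∀ i j : Fin (k+1), i ≠ j → g ≤ |t i - t j| := by
      intro i j hne
      rcases lt_or_gt_of_ne hne with h | h
      · rw [abs_sub_comm, abs_of_nonneg (by linarith [hgap i j h])]
        exact hgap i j h
      · rw [abs_of_nonneg (by linarith [hgap j i h])]
        exact hgap j i h
    have hbound : |p.coeff k| ≤ ((k:ℝ) + 1) * δ * (1/g)^k := by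
      rw [hLag]
      calc |∑ i, Polynomial.eval (t i) p * ∏ j ∈ Finset.univ.erase i, (t i - t j)⁻¹|
          ≤ ∑ i, |Polynomial.eval (t i) p * ∏ j ∈ Finset.univ.erase i, (t i - t j)⁻¹| :=
            Finset.abs_sum_le_sum_abs _ _
        _ ≤ ∑ _i : Fin (k+1), δ * (1/g)^k := by
            refine Finset.sum_le_sum fun i _ => ?_
            rw [abs_mul]
            have h1 : |Polynomial.eval (t i) p| ≤ δ := (htE i).1
            have h2 : |∏ j ∈ Finset.univ.erase i, (t i - t j)⁻¹| ≤ (1/g)^k := by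
              rw [abs_prod]
              have : ∀ j ∈ Finset.univ.erase i, |(t i - t j)⁻¹| ≤ 1/g := by
                intro j hj
                have hne : i ≠ j := fun h => (Finset.mem_erase.1 hj).1 h.symm
                rw [abs_inv, one_div]
                exact inv_anti₀ hg (habs i j hne)
              calc ∏ j ∈ Finset.univ.erase i, |(t i - t j)⁻¹|
                  ≤ ∏ _j ∈ Finset.univ.erase i, (1/g) :=
                    Finset.prod_le_prod (fun j _ => abs_nonneg _) this
                _ = (1/g)^k := by
                    rw [Finset.prod_const, Finset.card_erase_of_mem (Finset.mem_univ i),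
                      Finset.card_univ, Fintype.card_fin]
                    rfl
            exact mul_le_mul h1 h2 (abs_nonneg _) hδ.le
        _ = ((k:ℝ) + 1) * δ * (1/g)^k := by
            rw [Finset.sum_const, Finset.card_univ, Fintype.card_fin]
            push_cast; ring
    have hcpos : 0 < |p.coeff k| := abs_pos.2 hc
    have hgk : g^k ≤ ((k:ℝ) + 1) * δ / |p.coeff k| := by
      rw [le_div_iff₀ hcpos]
      have h1 : (1/g)^k = (g^k)⁻¹ := by rw [one_div, inv_pow]
      rw [h1] at hbound
      have hgk0 : (0:ℝ) < g^k := by positivity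
      calc g^k * |p.coeff k| ≤ g^k * (((k:ℝ)+1) * δ * (g^k)⁻¹) := by
            exact mul_le_mul_of_nonneg_left hbound hgk0.le
        _ = ((k:ℝ)+1) * δ := by field_simp
    have hkR : (0:ℝ) < (k:ℝ) := by exact_mod_cast hk
    -- g ≤ 2 * (δ/|c|)^(1/k)
    have hgle : g ≤ 2 * (δ / |p.coeff k|) ^ ((1:ℝ)/(k:ℝ)) := by
      have h1 : g = (g^k) ^ ((1:ℝ)/(k:ℝ)) := by
        rw [← Real.rpow_natCast g k, ← Real.rpow_mul hg.le]
        rw [mul_one_div, div_self (ne_of_gt hkR), Real.rpow_one]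
      rw [h1]
      have h2 : (g^k : ℝ) ^ ((1:ℝ)/(k:ℝ)) ≤ (((k:ℝ)+1) * δ / |p.coeff k|) ^ ((1:ℝ)/(k:ℝ)) :=
        Real.rpow_le_rpow (by positivity) hgk (by positivity)
      refine h2.trans ?_
      have h3 : ((k:ℝ)+1) * δ / |p.coeff k| = ((k:ℝ)+1) * (δ / |p.coeff k|) := by ring
      rw [h3, Real.mul_rpow (by positivity) (by positivity)]
      have h4 : ((k:ℝ)+1) ^ ((1:ℝ)/(k:ℝ)) ≤ 2 := by
        have hle : ((k:ℝ)+1) ≤ (2:ℝ)^(k:ℕ) := by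
          exact_mod_cast Nat.lt_two_pow_self (n := k)
        calc ((k:ℝ)+1) ^ ((1:ℝ)/(k:ℝ)) ≤ ((2:ℝ)^(k:ℕ)) ^ ((1:ℝ)/(k:ℝ)) :=
              Real.rpow_le_rpow (by positivity) hle (by positivity)
          _ = 2 := by
              rw [← Real.rpow_natCast 2 k, ← Real.rpow_mul (by norm_num),
                mul_one_div, div_self (ne_of_gt hkR), Real.rpow_one]
      exact mul_le_mul_of_nonneg_right h4 (Real.rpow_nonneg (by positivity) _)
    have hmle : m ≤ 6 * k * (δ / |p.coeff k|) ^ ((1:ℝ)/(k:ℝ)) := by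
      have h1 : m = ((k:ℝ)+2) * g := by
        rw [hgdef]; field_simp
      rw [h1]
      have h2 : ((k:ℝ)+2) * g ≤ ((k:ℝ)+2) * (2 * (δ / |p.coeff k|) ^ ((1:ℝ)/(k:ℝ))) :=
        mul_le_mul_of_nonneg_left hgle (by positivity)
      refine h2.trans ?_
      have h3 : ((k:ℝ)+2) * 2 ≤ 6 * (k:ℝ) := by
        have : (1:ℝ) ≤ (k:ℝ) := by exact_mod_cast hk
        linarith
      have h4 : (0:ℝ) ≤ (δ / |p.coeff k|) ^ ((1:ℝ)/(k:ℝ)) := Real.rpow_nonneg (by positivity) _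
      nlinarith
    calc volume {t : ℝ | |Polynomial.eval t p| ≤ δ ∧ |t| < r} ≤ volume E := measure_mono hsub
      _ = ENNReal.ofReal m := by rw [hmdef, ENNReal.ofReal_toReal hfin]
      _ ≤ _ := ENNReal.ofReal_le_ofReal hmle


lemma fubini_slice {n : ℕ} (S : Set (Fin (n+1) → ℝ)) (hS : MeasurableSet S) :
    volume S = ∫⁻ y : Fin n → ℝ, volume {t : ℝ | Fin.cons t y ∈ S} := by
  set e := MeasurableEquiv.piFinSuccAbove (fun _ : Fin (n+1) => ℝ) 0 with hedef
  have hmp : MeasurePreserving (⇑e) volume volume :=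
    volume_preserving_piFinSuccAbove (fun _ : Fin (n+1) => ℝ) 0
  have hA : MeasurableSet (⇑e.symm ⁻¹' S) := e.symm.measurable hS
  have h1 : volume S = volume (⇑e.symm ⁻¹' S) := by
    rw [← hmp.measure_preimage hA.nullMeasurableSet]
    congr 1
    ext x
    simp
  rw [h1]
  have h2 : (volume : Measure (ℝ × (Fin n → ℝ))) = Measure.prod volume volume :=
    Measure.volume_eq_prod _ _
  rw [h2, Measure.prod_apply_symm hA]
  congr 1
  ext y
  congr 1
  ext t
  simp only [Set.mem_preimage, Set.mem_setOf_eq]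
  have : e.symm (t, y) = Fin.cons t y := by
    show (Fin.insertNthEquiv (fun _ : Fin (n+1) => ℝ) 0) (t, y) = Fin.cons t y
    simp [Fin.insertNthEquiv, Fin.insertNth_zero']
  rw [this]

lemma meas_cube {n : ℕ} (r : ℝ) : MeasurableSet {x : Fin n → ℝ | ∀ i, |x i| < r} := by
  have : {x : Fin n → ℝ | ∀ i, |x i| < r} = Set.pi Set.univ (fun _ => Set.Ioo (-r) r) := by
    ext x; simp [Set.mem_pi, abs_lt]
  rw [this]
  exact MeasurableSet.univ_pi fun _ => measurableSet_Ioo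

lemma vol_cube {n : ℕ} {r : ℝ} (hr : 0 ≤ r) :
    volume {x : Fin n → ℝ | ∀ i, |x i| < r} = ENNReal.ofReal ((2*r)^n) := by
  have : {x : Fin n → ℝ | ∀ i, |x i| < r} = Set.pi Set.univ (fun _ => Set.Ioo (-r) r) := by
    ext x; simp [Set.mem_pi, abs_lt]
  rw [this, volume_pi_pi]
  simp only [Real.volume_Ioo]
  rw [Finset.prod_const, Finset.card_univ, Fintype.card_fin, ← ENNReal.ofReal_pow (by linarith)]
  congr 1
  ring_nf

lemma meas_sublevel {n : ℕ} (P : MvPolynomial (Fin n) ℝ) (δ : ℝ) :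
    MeasurableSet {x : Fin n → ℝ | |MvPolynomial.eval x P| ≤ δ} :=
  measurableSet_le (continuous_abs.comp (MvPolynomial.continuous_eval P)).measurable
    measurable_const

lemma meas_tail_ge {n : ℕ} (Q : MvPolynomial (Fin n) ℝ) (η : ℝ) :
    MeasurableSet {x : Fin (n+1) → ℝ | η ≤ |MvPolynomial.eval (Fin.tail x) Q|} := by
  have hcont : Continuous fun x : Fin (n+1) → ℝ => |MvPolynomial.eval (Fin.tail x) Q| := by
    refine continuous_abs.comp ?_
    exact (MvPolynomial.continuous_eval Q).comp (continuous_pi fun i => continuous_apply i.succ)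
  exact measurableSet_le measurable_const hcont.measurable

lemma meas_tail_le {n : ℕ} (Q : MvPolynomial (Fin n) ℝ) (η : ℝ) :
    MeasurableSet {x : Fin (n+1) → ℝ | |MvPolynomial.eval (Fin.tail x) Q| ≤ η} := by
  have hcont : Continuous fun x : Fin (n+1) → ℝ => |MvPolynomial.eval (Fin.tail x) Q| := by
    refine continuous_abs.comp ?_
    exact (MvPolynomial.continuous_eval Q).comp (continuous_pi fun i => continuous_apply i.succ)
  exact measurableSet_le hcont.measurable measurable_const

lemma rT_pow {T r : ℝ} (hT : 0 ≤ T) (hr : 0 ≤ r) {n : ℕ} (hn : 1 ≤ n) :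
    r * T ^ n ≤ T * r ^ n + T ^ (n+1) := by
  rcases le_total T r with h | h
  · have h1 : T ^ n = T * T^(n-1) := by
      conv_lhs => rw [show n = 1 + (n-1) by omega]
      rw [pow_add, pow_one]
    have h2 : T^(n-1) ≤ r^(n-1) := pow_le_pow_left₀ hT h _
    have : r * T^n ≤ T * r^n := by
      rw [h1]
      calc r * (T * T^(n-1)) ≤ r * (T * r^(n-1)) := by
            refine mul_le_mul_of_nonneg_left (mul_le_mul_of_nonneg_left h2 hT) hr
        _ = T * (r * r^(n-1)) := by ring
        _ = T * r^n := by
            congr 1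
            conv_rhs => rw [show n = 1 + (n-1) by omega]
            rw [pow_add, pow_one]
    nlinarith [pow_nonneg hT (n+1)]
  · have : r * T^n ≤ T * T^n := mul_le_mul_of_nonneg_right h (pow_nonneg hT n)
    rw [← pow_succ'] at this
    nlinarith [mul_nonneg hT (pow_nonneg hr n)]

lemma forall_cons_lt {n : ℕ} (t : ℝ) (y : Fin n → ℝ) (r : ℝ) :
    (∀ i, |(Fin.cons t y : Fin (n+1) → ℝ) i| < r) ↔ |t| < r ∧ ∀ i, |y i| < r := by
  rw [Fin.forall_fin_succ]
  simp [Fin.cons_zero, Fin.cons_succ]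

lemma sliceA {n : ℕ} (P : MvPolynomial (Fin (n+1)) ℝ) (k : ℕ) (hk : 1 ≤ k)
    (hq : ∀ j, k < j → ((MvPolynomial.finSuccEquiv ℝ n P).coeff j) = 0)
    {δ r η : ℝ} (hδ : 0 < δ) (hr : 0 < r) (hη : 0 < η) :
    volume ({x : Fin (n+1) → ℝ | |MvPolynomial.eval x P| ≤ δ ∧ ∀ i, |x i| < r}
        ∩ {x : Fin (n+1) → ℝ | η ≤ |MvPolynomial.eval (Fin.tail x)
            ((MvPolynomial.finSuccEquiv ℝ n P).coeff k)|}) ≤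
      ENNReal.ofReal ((6 * k * (δ/η) ^ ((1:ℝ)/(k:ℝ))) * (2*r)^n) := by
  set q := MvPolynomial.finSuccEquiv ℝ n P with hqdef
  set Q := q.coeff k with hQdef
  set S := ({x : Fin (n+1) → ℝ | |MvPolynomial.eval x P| ≤ δ ∧ ∀ i, |x i| < r}
      ∩ {x : Fin (n+1) → ℝ | η ≤ |MvPolynomial.eval (Fin.tail x) Q|}) with hSdef
  have hSmeas : MeasurableSet S := by
    refine MeasurableSet.inter ?_ (meas_tail_ge Q η)
    exact (meas_sublevel P δ).inter (meas_cube r)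
  rw [fubini_slice S hSmeas]
  set c := ENNReal.ofReal (6 * k * (δ/η) ^ ((1:ℝ)/(k:ℝ))) with hcdef
  have hbound : ∀ y : Fin n → ℝ, volume {t : ℝ | Fin.cons t y ∈ S} ≤
      Set.indicator {y : Fin n → ℝ | ∀ i, |y i| < r} (fun _ => c) y := by
    intro y
    by_cases hy : y ∈ {y : Fin n → ℝ | ∀ i, |y i| < r}
    · rw [Set.indicator_of_mem hy]
      replace hy : ∀ i, |y i| < r := hy
      by_cases hQy : η ≤ |MvPolynomial.eval y Q|
      · set p := q.map (MvPolynomial.eval y) with hpdef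
        have hdeg : p.natDegree ≤ k := by
          rw [Polynomial.natDegree_le_iff_coeff_eq_zero]
          intro N hN
          rw [hpdef, Polynomial.coeff_map, hq N hN, map_zero]
        have hck : p.coeff k = MvPolynomial.eval y Q := by
          rw [hpdef, Polynomial.coeff_map, hQdef]
        have hc0 : p.coeff k ≠ 0 := by
          rw [hck]
          intro h
          rw [h, abs_zero] at hQy
          linarith
        have hsub : {t : ℝ | Fin.cons t y ∈ S} ⊆
            {t : ℝ | |Polynomial.eval t p| ≤ δ ∧ |t| < r} := by
          rintro t ⟨⟨h1, h2⟩, _⟩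
          rw [MvPolynomial.eval_eq_eval_mv_eval'] at h1
          exact ⟨h1, ((forall_cons_lt t y r).1 h2).1⟩
        calc volume {t : ℝ | Fin.cons t y ∈ S}
            ≤ volume {t : ℝ | |Polynomial.eval t p| ≤ δ ∧ |t| < r} := measure_mono hsub
          _ ≤ ENNReal.ofReal (6 * k * (δ / |p.coeff k|) ^ ((1:ℝ)/(k:ℝ))) :=
              oneD_sublevel p k hk hdeg hc0 hδ
          _ ≤ c := by
              rw [hcdef]
              refine ENNReal.ofReal_le_ofReal ?_
              refine mul_le_mul_of_nonneg_left ?_ (by positivity)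
              refine Real.rpow_le_rpow (by positivity) ?_ (by positivity)
              rw [hck]
              exact div_le_div_of_nonneg_left hδ.le hη hQy
      · have : {t : ℝ | Fin.cons t y ∈ S} = ∅ := by
          ext t
          simp only [Set.mem_empty_iff_false, iff_false, hSdef, Set.mem_inter_iff,
            Set.mem_setOf_eq, not_and]
          intro _ h
          rw [Fin.tail_cons] at h
          exact absurd h hQy
        rw [this]
        simp
    · rw [Set.indicator_of_notMem hy]
      have : {t : ℝ | Fin.cons t y ∈ S} = ∅ := by
        ext t
        simp only [Set.mem_empty_iff_false, iff_false, hSdef, Set.mem_inter_iff,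
          Set.mem_setOf_eq, not_and]
        rintro ⟨_, h2⟩
        exact absurd (fun i => ((forall_cons_lt t y r).1 h2).2 i) hy
      rw [this]
      simp
  calc ∫⁻ y : Fin n → ℝ, volume {t : ℝ | Fin.cons t y ∈ S}
      ≤ ∫⁻ y : Fin n → ℝ, Set.indicator {y : Fin n → ℝ | ∀ i, |y i| < r} (fun _ => c) y :=
        lintegral_mono hbound
    _ = c * volume {y : Fin n → ℝ | ∀ i, |y i| < r} := lintegral_indicator_const (meas_cube r) c
    _ = c * ENNReal.ofReal ((2*r)^n) := by rw [vol_cube hr.le]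
    _ = ENNReal.ofReal ((6 * k * (δ/η) ^ ((1:ℝ)/(k:ℝ))) * (2*r)^n) := by
        rw [hcdef, ← ENNReal.ofReal_mul (by positivity)]

lemma sliceB {n : ℕ} (P : MvPolynomial (Fin (n+1)) ℝ) (Q : MvPolynomial (Fin n) ℝ)
    {δ r η : ℝ} (hr : 0 < r) :
    volume ({x : Fin (n+1) → ℝ | |MvPolynomial.eval x P| ≤ δ ∧ ∀ i, |x i| < r}
        ∩ {x : Fin (n+1) → ℝ | |MvPolynomial.eval (Fin.tail x) Q| ≤ η}) ≤
      ENNReal.ofReal (2*r) *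
        volume {y : Fin n → ℝ | |MvPolynomial.eval y Q| ≤ η ∧ ∀ i, |y i| < r} := by
  set S := ({x : Fin (n+1) → ℝ | |MvPolynomial.eval x P| ≤ δ ∧ ∀ i, |x i| < r}
      ∩ {x : Fin (n+1) → ℝ | |MvPolynomial.eval (Fin.tail x) Q| ≤ η}) with hSdef
  set W := {y : Fin n → ℝ | |MvPolynomial.eval y Q| ≤ η ∧ ∀ i, |y i| < r} with hWdef
  have hWmeas : MeasurableSet W := (meas_sublevel Q η).inter (meas_cube r)
  have hSmeas : MeasurableSet S :=
    ((meas_sublevel P δ).inter (meas_cube r)).inter (meas_tail_le Q η)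
  rw [fubini_slice S hSmeas]
  have hbound : ∀ y : Fin n → ℝ, volume {t : ℝ | Fin.cons t y ∈ S} ≤
      Set.indicator W (fun _ => ENNReal.ofReal (2*r)) y := by
    intro y
    by_cases hy : y ∈ W
    · rw [Set.indicator_of_mem hy]
      have hsub : {t : ℝ | Fin.cons t y ∈ S} ⊆ Set.Ioo (-r) r := by
        rintro t ⟨⟨_, h2⟩, _⟩
        have := ((forall_cons_lt t y r).1 h2).1
        rw [abs_lt] at this
        exact ⟨this.1, this.2⟩
      calc volume {t : ℝ | Fin.cons t y ∈ S} ≤ volume (Set.Ioo (-r) r) := measure_mono hsub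
        _ = ENNReal.ofReal (2*r) := by rw [Real.volume_Ioo]; congr 1; ring
    · rw [Set.indicator_of_notMem hy]
      have : {t : ℝ | Fin.cons t y ∈ S} = ∅ := by
        ext t
        simp only [Set.mem_empty_iff_false, iff_false, hSdef, Set.mem_inter_iff,
          Set.mem_setOf_eq, not_and]
        rintro ⟨_, h2⟩ h3
        rw [Fin.tail_cons] at h3
        exact hy ⟨h3, ((forall_cons_lt t y r).1 h2).2⟩
      rw [this]
      simp
  calc ∫⁻ y : Fin n → ℝ, volume {t : ℝ | Fin.cons t y ∈ S}
      ≤ ∫⁻ y : Fin n → ℝ, Set.indicator W (fun _ => ENNReal.ofReal (2*r)) y :=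
        lintegral_mono hbound
    _ = ENNReal.ofReal (2*r) * volume W := lintegral_indicator_const hWmeas _
def LexLt {n : ℕ} (β α : Fin n →₀ ℕ) : Prop :=
  ∃ j, β j < α j ∧ ∀ k, k < j → α k = β k

noncomputable def TT {n : ℕ} (P : MvPolynomial (Fin n) ℝ) (α : Fin n →₀ ℕ) (δ : ℝ) : ℝ :=
  (P.totalDegree : ℝ) * (4 / |MvPolynomial.coeff α P| ^ ((1:ℝ)/((∑ i, α i : ℕ):ℝ))) *
    δ ^ ((1:ℝ)/((∑ i, α i : ℕ):ℝ))

lemma combineB {C T T' r : ℝ} {n : ℕ} (hn : 1 ≤ n) (hC : 0 < C) (hr : 0 < r)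
    (hT'0 : 0 ≤ T') (hT' : T' ≤ T) :
    2*r * (C * (T' * r^(n-1) + T'^n)) ≤ 4*C*(T*r^n) + 2*C*T^(n+1) := by
  have hT0 : 0 ≤ T := le_trans hT'0 hT'
  have h3 : r * r^(n-1) = r^n := by
    rw [← pow_succ']
    congr 1
    omega
  have h4 := rT_pow hT0 hr.le hn
  have h1 : 2*r * (C * (T' * r^(n-1) + T'^n)) = 2*C*(T' * (r*r^(n-1))) + 2*C*(r*T'^n) := by ring
  rw [h1, h3]
  have h5 : T' * r^n ≤ T * r^n := mul_le_mul_of_nonneg_right hT' (by positivity)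
  have h6 : r * T'^n ≤ r * T^n :=
    mul_le_mul_of_nonneg_left (pow_le_pow_left₀ hT'0 hT' n) hr.le
  have h7 : 2*C*(T' * r^n) ≤ 2*C*(T*r^n) := by nlinarith
  have h8 : 2*C*(r*T'^n) ≤ 2*C*(T*r^n + T^(n+1)) := by nlinarith
  nlinarith

set_option maxHeartbeats 2000000 in
theorem core (n : ℕ) : ∃ C : ℝ, 0 < C ∧
    ∀ (P : MvPolynomial (Fin n) ℝ) (α : Fin n →₀ ℕ),
      MvPolynomial.coeff α P ≠ 0 →
      (∀ β, MvPolynomial.coeff β P ≠ 0 → β ≠ α → LexLt β α) →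
      1 ≤ ∑ i, α i →
      ∀ δ : ℝ, 0 < δ → ∀ r : ℝ, 0 < r →
        volume {x : Fin n → ℝ | |MvPolynomial.eval x P| ≤ δ ∧ ∀ i, |x i| < r} ≤
          ENNReal.ofReal ((8 * 16^n) *
            (TT P α δ * r ^ (n-1) + (TT P α δ) ^ n)) := by
  induction n with
  | zero =>
    exact ⟨1, one_pos, fun P α hc hlex hm => absurd hm (by simp)⟩
  | succ n ih =>
    obtain ⟨C, hC, IH⟩ := ih
    set Cn : ℝ := 8 * 16 ^ n with hCndef
    have hCn : 0 < Cn := by positivity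
    set Cnew : ℝ := 8 * 16 ^ (n+1) with hCnewdef
    have hCnewpos : 0 < Cnew := by positivity
    have hpow216 : (2:ℝ)^(n+1) ≤ 16^(n+1) := by
      refine pow_le_pow_left₀ (by norm_num) (by norm_num) _
    have h16pos : (0:ℝ) < 16^n := by positivity
    have e1 : (16:ℝ)^(n+1) = 16 * 16^n := by rw [pow_succ]; ring
    have e2 : (2:ℝ)^(n+1) ≤ 16 * 16^n := by rw [e1] at hpow216; exact hpow216
    have hCnle : 4 * Cn + 2^(n+1) ≤ Cnew ∧ 2 * Cn ≤ Cnew ∧ (2:ℝ)^(n+1) ≤ Cnew := by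
      refine ⟨?_, ?_, ?_⟩
      · rw [hCndef, hCnewdef, e1]; nlinarith
      · rw [hCndef, hCnewdef, e1]; nlinarith
      · rw [hCnewdef, e1]; nlinarith
    refine ⟨Cnew, hCnewpos, ?_⟩
    intro P α hc hlex hm δ hδ r hr
    rw [Nat.add_sub_cancel]
    -- setup
    set q := MvPolynomial.finSuccEquiv ℝ n P with hqdef
    set a₁ := α 0 with ha₁def
    set α' := Finsupp.tail α with hα'def
    set Q := q.coeff a₁ with hQdef
    have hconsα : Finsupp.cons a₁ α' = α := Finsupp.cons_tail α
    have hqcoeff : ∀ (j : ℕ) (β' : Fin n →₀ ℕ),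
        MvPolynomial.coeff β' (q.coeff j) = MvPolynomial.coeff (Finsupp.cons j β') P :=
      fun j β' => MvPolynomial.finSuccEquiv_coeff_coeff β' P j
    have haQ : MvPolynomial.coeff α' Q = MvPolynomial.coeff α P := by
      rw [hQdef, hqcoeff a₁ α', hconsα]
    set a := MvPolynomial.coeff α P with hadef
    have hapos : 0 < |a| := abs_pos.2 hc
    set m := ∑ i, α i with hmdef
    set m' := ∑ i : Fin n, α' i with hm'def
    have htail : ∀ i : Fin n, α' i = α i.succ := fun i => rfl
    have hsum : m = a₁ + m' := by
      rw [hmdef, hm'def, Fin.sum_univ_succ]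
      rfl
    have hqtop : ∀ j, a₁ < j → q.coeff j = 0 := by
      intro j hj
      by_contra h
      obtain ⟨β', hβ'⟩ : ∃ β', MvPolynomial.coeff β' (q.coeff j) ≠ 0 := by
        by_contra h'
        push_neg at h'
        exact h (MvPolynomial.ext _ _ fun β' => by rw [h' β', MvPolynomial.coeff_zero])
      have hPc : MvPolynomial.coeff (Finsupp.cons j β') P ≠ 0 := by
        rw [← hqcoeff]; exact hβ'
      have hne : Finsupp.cons j β' ≠ α := by
        intro h'
        have h2 : (Finsupp.cons j β') 0 = α 0 := by rw [h']
        rw [Finsupp.cons_zero] at h2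
        omega
      obtain ⟨i, hilt, hties⟩ := hlex _ hPc hne
      rcases Fin.eq_zero_or_eq_succ i with hi | ⟨i', hi⟩
      · rw [hi, Finsupp.cons_zero] at hilt
        omega
      · have h0 : (0 : Fin (n+1)) < i := by rw [hi]; exact Fin.succ_pos i'
        have h2 := hties 0 h0
        rw [Finsupp.cons_zero] at h2
        omega
    have hlexQ : ∀ β', MvPolynomial.coeff β' Q ≠ 0 → β' ≠ α' → LexLt β' α' := by
      intro β' hcb hne
      have hPc : MvPolynomial.coeff (Finsupp.cons a₁ β') P ≠ 0 := by
        rw [← hqcoeff]; exact hcb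
      have hne' : Finsupp.cons a₁ β' ≠ α := by
        intro h'
        apply hne
        have h2 := congrArg Finsupp.tail h'
        rwa [Finsupp.tail_cons] at h2
      obtain ⟨i, hilt, hties⟩ := hlex _ hPc hne'
      rcases Fin.eq_zero_or_eq_succ i with hi | ⟨i', hi⟩
      · rw [hi, Finsupp.cons_zero] at hilt
        rw [ha₁def] at hilt
        omega
      · refine ⟨i', ?_, ?_⟩
        · have h2 := hilt
          rw [hi, Finsupp.cons_succ] at h2
          rw [htail i']
          exact h2
        · intro k hk
          have h2 := hties k.succ (by rw [hi]; exact Fin.succ_lt_succ_iff.2 hk)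
          rw [Finsupp.cons_succ] at h2
          rw [htail k]
          exact h2
    have hQne : Q ≠ 0 := by
      intro h
      apply hc
      rw [← haQ, h, MvPolynomial.coeff_zero]
    have hdQ : Q.totalDegree ≤ P.totalDegree := by
      have h1 := MvPolynomial.totalDegree_coeff_finSuccEquiv_add_le P a₁
        (by rw [← hqdef, ← hQdef]; exact hQne)
      rw [← hqdef, ← hQdef] at h1
      omega
    have hmd : m ≤ P.totalDegree := by
      have h1 : α ∈ P.support := MvPolynomial.mem_support_iff.2 hc
      have h2 := MvPolynomial.le_totalDegree h1
      have h3 : (α.sum fun _ e => e) = m := Finsupp.sum_fintype _ _ (fun _ => rfl)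
      rw [h3] at h2
      exact h2
    have ha₁m : a₁ ≤ m := by omega
    set d := P.totalDegree with hddef
    have hd1 : 1 ≤ d := le_trans hm hmd
    set s := (δ / |a|) ^ ((1:ℝ)/(m:ℝ)) with hsdef
    have hm0 : (0:ℝ) < (m:ℝ) := by exact_mod_cast hm
    have hspos : 0 < s := Real.rpow_pos_of_pos (by positivity) _
    have hsm : s ^ (m:ℕ) = δ / |a| := by
      rw [hsdef, ← Real.rpow_natCast ((δ/|a|) ^ ((1:ℝ)/(m:ℝ))) m,
        ← Real.rpow_mul (by positivity), one_div, inv_mul_cancel₀ (ne_of_gt hm0), Real.rpow_one]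
    have hTT : TT P α δ = (d:ℝ) * (4 * s) := by
      rw [TT, hsdef, Real.div_rpow hδ.le (abs_nonneg a)]
      rw [← hadef, ← hmdef, ← hddef]
      ring
    have hTpos : 0 < TT P α δ := by
      rw [hTT]
      have : (0:ℝ) < (d:ℝ) := by exact_mod_cast hd1
      positivity
    -- main case analysis
    rcases Nat.eq_zero_or_pos m' with hm'0 | hm'pos
    · -- Case A : m' = 0, so a₁ = m ≥ 1 and Q is the constant a
      have ha₁ : a₁ = m := by omega
      have ha₁1 : 1 ≤ a₁ := by omega
      have hα'0 : α' = 0 := by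
        ext i
        have h1 : ∀ j ∈ Finset.univ, α' j = 0 := by
          rw [← Finset.sum_eq_zero_iff]
          omega
        exact h1 i (Finset.mem_univ i)
      have hQC : Q = MvPolynomial.C a := by
        apply MvPolynomial.ext
        intro β'
        rcases eq_or_ne β' 0 with h | h
        · rw [h, MvPolynomial.coeff_C, if_pos rfl, ← haQ, hα'0]
        · rw [MvPolynomial.coeff_C, if_neg (fun hh => h hh.symm)]
          by_contra hne
          obtain ⟨j, hj, _⟩ := hlexQ β' hne (by rw [hα'0]; exact h)
          rw [hα'0] at hj
          simp at hj
      have hSeq : {x : Fin (n+1) → ℝ | |MvPolynomial.eval x P| ≤ δ ∧ ∀ i, |x i| < r}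
          = {x : Fin (n+1) → ℝ | |MvPolynomial.eval x P| ≤ δ ∧ ∀ i, |x i| < r}
            ∩ {x : Fin (n+1) → ℝ |
                |a| ≤ |MvPolynomial.eval (Fin.tail x) ((MvPolynomial.finSuccEquiv ℝ n P).coeff a₁)|} := by
        ext x
        simp only [Set.mem_inter_iff, Set.mem_setOf_eq]
        constructor
        · intro hx
          refine ⟨hx, ?_⟩
          rw [← hqdef, ← hQdef, hQC, MvPolynomial.eval_C]
        · exact fun hx => hx.1
      rw [hSeq]
      refine le_trans (sliceA P a₁ ha₁1 hqtop hδ hr hapos) (ENNReal.ofReal_le_ofReal ?_)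
      have he : (δ/|a|) ^ ((1:ℝ)/(a₁:ℝ)) = s := by
        rw [hsdef, ha₁]
      rw [he]
      have ha₁d : (a₁:ℝ) ≤ (d:ℝ) := by exact_mod_cast le_trans ha₁m hmd
      have key1 : 6*(a₁:ℝ)*s ≤ 2 * TT P α δ := by
        rw [hTT]
        nlinarith [hspos.le]
      calc 6*(a₁:ℝ)*s*(2*r)^n ≤ (2 * TT P α δ) * (2*r)^n :=
            mul_le_mul_of_nonneg_right key1 (by positivity)
        _ = 2^(n+1) * (TT P α δ * r^n) := by rw [mul_pow]; ring
        _ ≤ Cnew * (TT P α δ * r^n) :=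
            mul_le_mul_of_nonneg_right hCnle.2.2
              (mul_nonneg hTpos.le (pow_nonneg hr.le n))
        _ ≤ Cnew * (TT P α δ * r^n + TT P α δ^(n+1)) := by
            nlinarith [pow_nonneg hTpos.le (n+1)]
    · -- m' ≥ 1, so n ≥ 1
      have hn0 : n ≠ 0 := by
        rintro rfl
        rw [hm'def] at hm'pos
        simp at hm'pos
      have hn1 : 1 ≤ n := Nat.one_le_iff_ne_zero.2 hn0
      have hm'R : (0:ℝ) < (m':ℝ) := by exact_mod_cast hm'pos
      -- the IH bound for sublevel sets of Q
      have hIHQ : ∀ η : ℝ, 0 < η → (η/|a|) ^ ((1:ℝ)/(m':ℝ)) = s →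
          volume {y : Fin n → ℝ | |MvPolynomial.eval y Q| ≤ η ∧ ∀ i, |y i| < r} ≤
            ENNReal.ofReal (Cn * (TT P α δ * r^(n-1) + (TT P α δ)^n)) := by
        intro η hη hsQ
        have h1 := IH Q α' (by rw [haQ]; exact hc) hlexQ hm'pos η hη r hr
        refine le_trans h1 (ENNReal.ofReal_le_ofReal ?_)
        have hTT' : TT Q α' η = (Q.totalDegree:ℝ) * (4*s) := by
          rw [TT, haQ, ← hm'def, ← hsQ, Real.div_rpow hη.le (abs_nonneg a)]
          ring
        have hdQR : (Q.totalDegree:ℝ) ≤ (d:ℝ) := by exact_mod_cast hdQ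
        have hT'le : TT Q α' η ≤ TT P α δ := by
          rw [hTT', hTT]
          exact mul_le_mul_of_nonneg_right hdQR (by positivity)
        have hT'0 : 0 ≤ TT Q α' η := by
          rw [hTT']
          positivity
        have h2 : TT Q α' η * r^(n-1) + (TT Q α' η)^n
            ≤ TT P α δ * r^(n-1) + (TT P α δ)^n := by
          have h3 := pow_le_pow_left₀ hT'0 hT'le n
          have h4 : TT Q α' η * r^(n-1) ≤ TT P α δ * r^(n-1) :=
            mul_le_mul_of_nonneg_right hT'le (by positivity)
          linarith
        exact mul_le_mul_of_nonneg_left h2 hCn.le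
      have hinnn : 0 ≤ TT P α δ * r^(n-1) + (TT P α δ)^n :=
        add_nonneg (mul_nonneg hTpos.le (pow_nonneg hr.le _)) (pow_nonneg hTpos.le n)
      rcases Nat.eq_zero_or_pos a₁ with ha₁0 | ha₁pos
      · -- Case B : a₁ = 0
        have hq0 : q.natDegree ≤ 0 :=
          Polynomial.natDegree_le_iff_coeff_eq_zero.2 (fun N hN => hqtop N (by omega))
        have hqC : q = Polynomial.C Q := by
          have h1 := Polynomial.eq_C_of_natDegree_le_zero hq0
          rw [h1]
          congr 1
          rw [hQdef, ha₁0]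
        have heval : ∀ x : Fin (n+1) → ℝ,
            MvPolynomial.eval x P = MvPolynomial.eval (Fin.tail x) Q := by
          intro x
          conv_lhs => rw [← Fin.cons_self_tail x, MvPolynomial.eval_eq_eval_mv_eval', ← hqdef,
            hqC]
          rw [Polynomial.map_C, Polynomial.eval_C]
        have hSeq : {x : Fin (n+1) → ℝ | |MvPolynomial.eval x P| ≤ δ ∧ ∀ i, |x i| < r}
            = {x : Fin (n+1) → ℝ | |MvPolynomial.eval x P| ≤ δ ∧ ∀ i, |x i| < r}
              ∩ {x : Fin (n+1) → ℝ | |MvPolynomial.eval (Fin.tail x) Q| ≤ δ} := by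
          ext x
          simp only [Set.mem_inter_iff, Set.mem_setOf_eq]
          constructor
          · intro hx
            refine ⟨hx, ?_⟩
            rw [← heval]
            exact hx.1
          · exact fun hx => hx.1
        rw [hSeq]
        have hmm' : ((m':ℕ):ℝ) = ((m:ℕ):ℝ) := by
          have : m' = m := by omega
          exact_mod_cast this
        have hW := hIHQ δ hδ (by rw [hsdef, hmm'])
        refine le_trans (sliceB P Q hr) (le_trans (mul_le_mul_right hW _) ?_)
        rw [← ENNReal.ofReal_mul (by linarith : (0:ℝ) ≤ 2*r)]
        refine ENNReal.ofReal_le_ofReal ?_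
        have hcb := combineB hn1 hCn hr hTpos.le (le_refl (TT P α δ))
        have hnn1 : 0 ≤ TT P α δ * r^n := mul_nonneg hTpos.le (pow_nonneg hr.le n)
        have hnn2 : 0 ≤ TT P α δ^(n+1) := pow_nonneg hTpos.le (n+1)
        nlinarith [hCnle.1, hCnle.2.1, hpow216]
      · -- Case C : a₁ ≥ 1 and m' ≥ 1
        set η := |a| * s^(m':ℕ) with hηdef
        have hη : 0 < η := by positivity
        have ha₁R : (0:ℝ) < (a₁:ℝ) := by exact_mod_cast ha₁pos
        have hsQ : (η/|a|) ^ ((1:ℝ)/(m':ℝ)) = s := by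
          have h1 : η/|a| = s^(m':ℕ) := by
            rw [hηdef]
            field_simp
          rw [h1, ← Real.rpow_natCast s m', ← Real.rpow_mul hspos.le, mul_one_div,
            div_self (ne_of_gt hm'R), Real.rpow_one]
        have hδη : (δ/η) ^ ((1:ℝ)/(a₁:ℝ)) = s := by
          have h2 : s^(a₁:ℕ) * s^(m':ℕ) = δ/|a| := by
            rw [← pow_add, ← hsum]
            exact hsm
          have h1 : δ/η = s^(a₁:ℕ) := by
            rw [hηdef]
            rw [div_eq_iff (by positivity)]
            have h3 : s^(a₁:ℕ) * s^(m':ℕ) * |a| = δ := by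
              rw [h2]
              field_simp
            linarith [h3]
          rw [h1, ← Real.rpow_natCast s a₁, ← Real.rpow_mul hspos.le, mul_one_div,
            div_self (ne_of_gt ha₁R), Real.rpow_one]
        have hsplit : {x : Fin (n+1) → ℝ | |MvPolynomial.eval x P| ≤ δ ∧ ∀ i, |x i| < r} ⊆
            ({x : Fin (n+1) → ℝ | |MvPolynomial.eval x P| ≤ δ ∧ ∀ i, |x i| < r}
              ∩ {x : Fin (n+1) → ℝ |
                  η ≤ |MvPolynomial.eval (Fin.tail x) ((MvPolynomial.finSuccEquiv ℝ n P).coeff a₁)|}) ∪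
            ({x : Fin (n+1) → ℝ | |MvPolynomial.eval x P| ≤ δ ∧ ∀ i, |x i| < r}
              ∩ {x : Fin (n+1) → ℝ | |MvPolynomial.eval (Fin.tail x) Q| ≤ η}) := by
          intro x hx
          rcases le_total η |MvPolynomial.eval (Fin.tail x)
              ((MvPolynomial.finSuccEquiv ℝ n P).coeff a₁)| with h | h
          · exact Or.inl ⟨hx, h⟩
          · refine Or.inr ⟨hx, ?_⟩
            rw [hQdef, hqdef]
            exact h
        refine le_trans (measure_mono hsplit) (le_trans (measure_union_le _ _) ?_)
        have h1 := sliceA P a₁ ha₁pos hqtop hδ hr hη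
        rw [hδη] at h1
        have h2 := le_trans (sliceB P Q hr (δ := δ) (η := η))
          (mul_le_mul_right (hIHQ η hη hsQ) _)
        refine le_trans (add_le_add h1 h2) ?_
        rw [← ENNReal.ofReal_mul (by linarith : (0:ℝ) ≤ 2*r),
          ← ENNReal.ofReal_add (by positivity) (by positivity)]
        refine ENNReal.ofReal_le_ofReal ?_
        have ha₁d : (a₁:ℝ) ≤ (d:ℝ) := by exact_mod_cast le_trans ha₁m hmd
        have key1 : 6*(a₁:ℝ)*s*(2*r)^n ≤ 2^(n+1) * (TT P α δ * r^n) := by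
          have key0 : 6*(a₁:ℝ)*s ≤ 2 * TT P α δ := by
            rw [hTT]
            nlinarith [hspos.le]
          calc 6*(a₁:ℝ)*s*(2*r)^n ≤ (2 * TT P α δ) * (2*r)^n :=
                mul_le_mul_of_nonneg_right key0 (by positivity)
            _ = 2^(n+1) * (TT P α δ * r^n) := by rw [mul_pow]; ring
        have hcb := combineB hn1 hCn hr hTpos.le (le_refl (TT P α δ))
        have hnn1 : 0 ≤ TT P α δ * r^n := mul_nonneg hTpos.le (pow_nonneg hr.le n)
        have hnn2 : 0 ≤ TT P α δ^(n+1) := pow_nonneg hTpos.le (n+1)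
        nlinarith [hCnle.1, hCnle.2.1, hCnle.2.2]


lemma pi_congr_apply {n : ℕ} (e : Equiv.Perm (Fin n)) (x : Fin n → ℝ) (i : Fin n) :
    (MeasurableEquiv.piCongrLeft (fun _ : Fin n => ℝ) e) x i = x (e.symm i) := by
  simp [MeasurableEquiv.piCongrLeft, Equiv.piCongrLeft, Equiv.piCongrLeft']


/-- The open cube `Δ_r^n = (-r, r)^n` in `ℝ^n`. -/
def cube (n : ℕ) (r : ℝ) : Set (EuclideanSpace ℝ (Fin n)) :=
  {x | ∀ i, x i ∈ Set.Ioo (-r) r}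

/-- The sublevel set `V_δ = {x ∈ ℝ^n : |P(x)| ≤ δ}`. -/
def sublevel {n : ℕ} (P : MvPolynomial (Fin n) ℝ) (δ : ℝ) :
    Set (EuclideanSpace ℝ (Fin n)) :=
  {x | |eval (fun i => x i) P| ≤ δ}

/-- `α` is an admissible index (i.e. `x^α` is an admissible monomial) for the real
polynomial `P` on `ℝ^n`. -/
def IsAdmissibleIndex {n : ℕ} (P : MvPolynomial (Fin n) ℝ) (α : Fin n →₀ ℕ) : Prop :=
  MvPolynomial.coeff α P ≠ 0 ∧
  ∃ σ : Equiv.Perm (Fin n),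
    (∃ h : 0 < n, 1 ≤ α (σ ⟨0, h⟩)) ∧
    ∀ β : Fin n →₀ ℕ, β ≠ α → MvPolynomial.coeff β P ≠ 0 →
      ∃ j : Fin n, β (σ j) < α (σ j) ∧ ∀ k : Fin n, k < j → α (σ k) = β (σ k)

set_option maxHeartbeats 1000000 in
/-- **Theorem 3.1.** For a polynomial `P` of degree `d` with admissible index `α`, and
`μ(α) = 4/|a_α|^{1/|α|}`, one has, with a constant `C > 0` depending only on `n`,
`vol (V_δ ∩ Δ_r^n) ≤ C [d μ(α) δ^{1/|α|} r^{n-1} + (d μ(α) δ^{1/|α|})^n]`, and in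
particular, with a constant `C' > 0` depending only on `n`, `d` and `|a_α|^{1/|α|}`,
`vol (V_δ ∩ Δ_r^n) ≤ C' [δ^{1/|α|} r^{n-1} + δ^{n/|α|}]`. -/
theorem statement5 (n : ℕ) :
    (∃ C : ℝ, 0 < C ∧
      ∀ (P : MvPolynomial (Fin n) ℝ) (α : Fin n →₀ ℕ), IsAdmissibleIndex P α →
        ∀ δ : ℝ, 0 < δ → ∀ r : ℝ, 0 < r →
          volume (sublevel P δ ∩ cube n r) ≤
            ENNReal.ofReal (C *
              ((P.totalDegree : ℝ) * (4 / |coeff α P| ^ ((1 : ℝ) / (∑ i, α i : ℝ))) *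
                  δ ^ ((1 : ℝ) / (∑ i, α i : ℝ)) * r ^ (n - 1) +
                ((P.totalDegree : ℝ) * (4 / |coeff α P| ^ ((1 : ℝ) / (∑ i, α i : ℝ))) *
                  δ ^ ((1 : ℝ) / (∑ i, α i : ℝ))) ^ n))) ∧
    (∀ (d : ℕ) (A : ℝ), ∃ C' : ℝ, 0 < C' ∧
      ∀ (P : MvPolynomial (Fin n) ℝ) (α : Fin n →₀ ℕ), IsAdmissibleIndex P α →
        P.totalDegree = d → |coeff α P| ^ ((1 : ℝ) / (∑ i, α i : ℝ)) = A →
        ∀ δ : ℝ, 0 < δ → ∀ r : ℝ, 0 < r →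
          volume (sublevel P δ ∩ cube n r) ≤
            ENNReal.ofReal (C' *
              (δ ^ ((1 : ℝ) / (∑ i, α i : ℝ)) * r ^ (n - 1) +
                δ ^ ((n : ℝ) / (∑ i, α i : ℝ))))) := by
  obtain ⟨C0, hC0, hcore⟩ := core n
  set C : ℝ := 8 * 16 ^ n with hCdef
  have hC : 0 < C := by positivity
  have main : ∀ (P : MvPolynomial (Fin n) ℝ) (α : Fin n →₀ ℕ), IsAdmissibleIndex P α →
      ∀ δ : ℝ, 0 < δ → ∀ r : ℝ, 0 < r →
        volume (sublevel P δ ∩ cube n r) ≤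
          ENNReal.ofReal (C *
            ((P.totalDegree : ℝ) * (4 / |coeff α P| ^ ((1 : ℝ) / (∑ i, α i : ℝ))) *
                δ ^ ((1 : ℝ) / (∑ i, α i : ℝ)) * r ^ (n - 1) +
              ((P.totalDegree : ℝ) * (4 / |coeff α P| ^ ((1 : ℝ) / (∑ i, α i : ℝ))) *
                δ ^ ((1 : ℝ) / (∑ i, α i : ℝ))) ^ n)) := by
    intro P α hadm δ hδ r hr
    obtain ⟨hc, σ, ⟨hn, hσ0⟩, hlex⟩ := hadm
    set f : Fin n → Fin n := ⇑(σ⁻¹) with hfdef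
    have hfinj : Function.Injective f := (σ⁻¹ : Equiv.Perm (Fin n)).injective
    set P' := MvPolynomial.rename f P with hP'def
    set α'' := Finsupp.mapDomain f α with hα''def
    have hcoeff' : MvPolynomial.coeff α'' P' = MvPolynomial.coeff α P :=
      MvPolynomial.coeff_rename_mapDomain f hfinj P α
    have happ : ∀ (γ : Fin n →₀ ℕ) (j : Fin n), (Finsupp.mapDomain f γ) j = γ (σ j) := by
      intro γ j
      have h1 : f (σ j) = j := σ.symm_apply_apply j
      have h2 := Finsupp.mapDomain_apply hfinj γ (σ j)
      rw [h1] at h2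
      exact h2
    have hlex' : ∀ β'', MvPolynomial.coeff β'' P' ≠ 0 → β'' ≠ α'' → LexLt β'' α'' := by
      intro β'' hb hne
      obtain ⟨β, hβmap, hβc⟩ := MvPolynomial.coeff_rename_ne_zero f P β'' hb
      have hβne : β ≠ α := by
        intro h
        exact hne (by rw [← hβmap, h])
      obtain ⟨j, hjlt, hties⟩ := hlex β hβne hβc
      refine ⟨j, ?_, ?_⟩
      · rw [← hβmap, hα''def, happ, happ]
        exact hjlt
      · intro k hk
        rw [← hβmap, hα''def, happ, happ]
        exact hties k hk
    have hsum'' : ∑ i, α'' i = ∑ i, α i := by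
      rw [hα''def]
      calc ∑ i, (Finsupp.mapDomain f α) i = ∑ i, α (σ i) := by
            refine Finset.sum_congr rfl fun i _ => happ α i
        _ = ∑ i, α i := Equiv.sum_comp σ α
    have h1m : 1 ≤ ∑ i, α'' i := by
      rw [hsum'']
      calc 1 ≤ α (σ ⟨0, hn⟩) := hσ0
        _ ≤ ∑ i, α i := Finset.single_le_sum (fun i _ => Nat.zero_le _) (Finset.mem_univ _)
    have htd : P'.totalDegree = P.totalDegree := by
      refine le_antisymm (MvPolynomial.totalDegree_rename_le f P) ?_
      have hre : MvPolynomial.rename (⇑σ) P' = P := by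
        rw [hP'def, MvPolynomial.rename_rename]
        have : (⇑σ ∘ f) = id := by
          funext x
          simp [hfdef]
        rw [this, MvPolynomial.rename_id, AlgHom.id_apply]
      conv_lhs => rw [← hre]
      exact MvPolynomial.totalDegree_rename_le _ _
    -- volume transfer
    set AP : Set (Fin n → ℝ) := {x | |MvPolynomial.eval x P| ≤ δ ∧ ∀ i, |x i| < r} with hAPdef
    set AP' : Set (Fin n → ℝ) := {x | |MvPolynomial.eval x P'| ≤ δ ∧ ∀ i, |x i| < r} with hAP'def
    have hmeasAP : MeasurableSet AP := (meas_sublevel P δ).inter (meas_cube r)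
    have hstep1 : volume (sublevel P δ ∩ cube n r) = volume AP := by
      have hseteq : sublevel P δ ∩ cube n r
          = (MeasurableEquiv.toLp 2 (Fin n → ℝ)).symm ⁻¹' AP := by
        ext x
        simp only [sublevel, cube, Set.mem_inter_iff, Set.mem_setOf_eq, Set.mem_preimage,
          Set.mem_Ioo, hAPdef, MeasurableEquiv.coe_toLp_symm]
        constructor
        · rintro ⟨h1, h2⟩
          exact ⟨h1, fun i => abs_lt.2 (h2 i)⟩
        · rintro ⟨h1, h2⟩
          exact ⟨h1, fun i => abs_lt.1 (h2 i)⟩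
      rw [hseteq]
      exact (EuclideanSpace.volume_preserving_symm_measurableEquiv_toLp (Fin n)).measure_preimage
        hmeasAP.nullMeasurableSet
    have hstep2 : volume AP = volume AP' := by
      have hg := MeasureTheory.volume_measurePreserving_piCongrLeft (fun _ : Fin n => ℝ) σ
      have hpre : (MeasurableEquiv.piCongrLeft (fun _ : Fin n => ℝ) σ) ⁻¹' AP = AP' := by
        ext x
        simp only [Set.mem_preimage, hAPdef, hAP'def, Set.mem_setOf_eq]
        have hx : ∀ i, (MeasurableEquiv.piCongrLeft (fun _ : Fin n => ℝ) σ) x i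
            = x (σ.symm i) := pi_congr_apply σ x
        have hev : MvPolynomial.eval ((MeasurableEquiv.piCongrLeft (fun _ : Fin n => ℝ) σ) x) P
            = MvPolynomial.eval x P' := by
          have harg : ((MeasurableEquiv.piCongrLeft (fun _ : Fin n => ℝ) σ) x) = x ∘ f := by
            funext i
            rw [hx i]
            rfl
          rw [harg, hP'def, MvPolynomial.eval_rename]
        rw [hev]
        constructor
        · rintro ⟨h1, h2⟩
          refine ⟨h1, fun i => ?_⟩
          have := h2 (σ i)
          rw [hx (σ i)] at this
          rwa [Equiv.symm_apply_apply] at this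
        · rintro ⟨h1, h2⟩
          refine ⟨h1, fun i => ?_⟩
          rw [hx i]
          exact h2 _
      rw [← hpre]
      exact (hg.measure_preimage hmeasAP.nullMeasurableSet).symm
    have hcore' := hcore P' α'' (by rw [hcoeff']; exact hc) hlex' h1m δ hδ r hr
    rw [hstep1, hstep2]
    refine le_trans hcore' (ENNReal.ofReal_le_ofReal ?_)
    have hcast : ((∑ i, α'' i : ℕ) : ℝ) = (∑ i, (α i : ℝ)) := by
      rw [hsum'']
      push_cast
      rfl
    have hTTeq : TT P' α'' δ
        = (P.totalDegree : ℝ) * (4 / |MvPolynomial.coeff α P| ^ ((1 : ℝ) / (∑ i, (α i : ℝ)))) *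
            δ ^ ((1 : ℝ) / (∑ i, (α i : ℝ))) := by
      rw [TT, htd, hcoeff', hcast]
    rw [hTTeq]
  refine ⟨⟨C, hC, main⟩, ?_⟩
  intro d A
  set B : ℝ := (d : ℝ) * (4 / A) with hBdef
  refine ⟨max 1 (C * max B (B^n)), lt_of_lt_of_le one_pos (le_max_left _ _), ?_⟩
  intro P α hadm hd hA δ hδ r hr
  have h1 := main P α hadm δ hδ r hr
  refine le_trans h1 (ENNReal.ofReal_le_ofReal ?_)
  have hApos : 0 < A := by
    rw [← hA]
    exact Real.rpow_pos_of_pos (abs_pos.2 hadm.1) _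
  rw [hd, hA]
  set u : ℝ := δ ^ ((1 : ℝ) / (∑ i, (α i : ℝ))) with hudef
  have hupos : 0 < u := Real.rpow_pos_of_pos hδ _
  have hBpos : 0 ≤ B := by
    rw [hBdef]
    positivity
  have hun : u ^ n = δ ^ ((n : ℝ) / (∑ i, (α i : ℝ))) := by
    rw [hudef, ← Real.rpow_natCast (δ ^ ((1 : ℝ) / (∑ i, (α i : ℝ)))) n,
      ← Real.rpow_mul hδ.le]
    congr 1
    ring
  set C' := max 1 (C * max B (B^n)) with hC'def
  have hCB : C * B ≤ C' := by
    calc C * B ≤ C * max B (B^n) := by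
          refine mul_le_mul_of_nonneg_left (le_max_left _ _) hC.le
      _ ≤ C' := le_max_right _ _
  have hCBn : C * B^n ≤ C' := by
    calc C * B^n ≤ C * max B (B^n) := by
          refine mul_le_mul_of_nonneg_left (le_max_right _ _) hC.le
      _ ≤ C' := le_max_right _ _
  calc C * ((d:ℝ) * (4/A) * u * r ^ (n-1) + ((d:ℝ) * (4/A) * u) ^ n)
      = (C * B) * (u * r^(n-1)) + (C * B^n) * u^n := by
        rw [hBdef, mul_pow]
        ring
    _ ≤ C' * (u * r^(n-1)) + C' * u^n := by
        have hnn1 : 0 ≤ u * r^(n-1) := mul_nonneg hupos.le (by positivity)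
        have hnn2 : 0 ≤ u^n := pow_nonneg hupos.le n
        have := mul_le_mul_of_nonneg_right hCB hnn1
        have := mul_le_mul_of_nonneg_right hCBn hnn2
        nlinarith
    _ = C' * (u * r^(n-1) + δ ^ ((n : ℝ) / (∑ i, (α i : ℝ)))) := by
        rw [← hun]
        ring
end

section
/- Let n ≥ 2 and let P be a real polynomial on ℝ^n. Define P_1 := P and P_m(x) := det(∂P_i/∂x_j)_{1 ≤ i,j ≤ m−1} for 2 ≤ m ≤ n+1. If deg P_{l+1} ≥ 1 for some 1 ≤ l ≤ n, then P_1, …, P_l are algebraically independent over ℝ: there is no polynomial Q ∈ ℝ[y_1, …, y_l], Q ≢ 0, satisfying Q(P_1(x), …, P_l(x)) = 0 for all x ∈ ℝ^n. -/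
open MvPolynomial

/-- The sequence `P_1 = P`, `P_m = det (∂P_i/∂x_j)_{1 ≤ i,j ≤ m-1}` for `2 ≤ m ≤ n+1`. -/
noncomputable def Pseq {n : ℕ} (P : MvPolynomial (Fin n) ℝ) : ℕ → MvPolynomial (Fin n) ℝ
  | 0 => 0
  | 1 => P
  | m + 2 =>
    if h : m + 1 ≤ n then
      Matrix.det (Matrix.of fun i j : Fin (m + 1) =>
        MvPolynomial.pderiv (Fin.castLE h j) (Pseq P ((i : ℕ) + 1)))
    else 0
  termination_by m => m
  decreasing_by omega

lemma myCoeff_pderiv {σ : Type*} (i : σ) (m : σ →₀ ℕ) (Q : MvPolynomial σ ℝ) :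
    coeff m (pderiv i Q) = ((m i : ℝ) + 1) * coeff (m + Finsupp.single i 1) Q := by
  classical
  induction Q using MvPolynomial.induction_on' with
  | add p q hp hq => simp [coeff_add, hp, hq, mul_add]
  | monomial s a =>
    rw [pderiv_monomial, coeff_monomial, coeff_monomial]
    by_cases h : s = m + Finsupp.single i 1
    · subst h
      rw [if_pos (by simp : m + Finsupp.single i 1 - Finsupp.single i 1 = m), if_pos rfl,
        Finsupp.add_apply, Finsupp.single_apply, if_pos rfl]
      push_cast
      ring
    · rw [if_neg h]
      by_cases h' : s - Finsupp.single i 1 = m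
      · have hs : s i = 0 := by
          by_contra hs
          have hle : Finsupp.single i 1 ≤ s := by
            rw [Finsupp.single_le_iff]; omega
          exact h (by rw [← h', tsub_add_cancel_of_le hle])
        rw [if_pos h', hs]
        simp
      · rw [if_neg h', mul_zero]

lemma myTD_pderiv_lt {σ : Type*} (i : σ) (Q : MvPolynomial σ ℝ)
    (h : 1 ≤ Q.totalDegree) : (pderiv i Q).totalDegree < Q.totalDegree := by
  classical
  rcases eq_or_ne (pderiv i Q) 0 with h0 | h0
  · simpa [h0] using Nat.lt_of_lt_of_le Nat.zero_lt_one h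
  · rw [totalDegree, Finset.sup_lt_iff
      (show ⊥ < Q.totalDegree from lt_of_lt_of_le (by norm_num) h)]
    intro m hm
    rw [mem_support_iff, myCoeff_pderiv] at hm
    have hc : coeff (m + Finsupp.single i 1) Q ≠ 0 := right_ne_zero_of_mul hm
    have h1 := le_totalDegree (mem_support_iff.mpr hc)
    have hsum : (m + Finsupp.single i 1).sum (fun _ e => e) =
        m.sum (fun _ e => e) + 1 := by
      rw [Finsupp.sum_add_index (by simp) (by simp)]
      simp
    rw [hsum] at h1
    omega

lemma myEq_C {σ : Type*} (Q : MvPolynomial σ ℝ) (h : ∀ i, pderiv i Q = 0) :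
    Q = C (coeff 0 Q) := by
  classical
  ext m
  rcases eq_or_ne m 0 with rfl | hm
  · simp
  · rw [coeff_C, if_neg (Ne.symm hm)]
    obtain ⟨i, hi⟩ : ∃ i, m i ≠ 0 := by
      by_contra hc
      push_neg at hc
      exact hm (Finsupp.ext hc)
    have hle : Finsupp.single i 1 ≤ m := by rw [Finsupp.single_le_iff]; omega
    set m' := m - Finsupp.single i 1 with hm'
    have h3 := myCoeff_pderiv i m' Q
    rw [h i, hm', tsub_add_cancel_of_le hle] at h3
    have h2 : ((m' i : ℝ) + 1) ≠ 0 := by positivity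
    exact (mul_eq_zero.mp h3.symm).resolve_left h2

lemma myChain {n l : ℕ} (φ : Fin l → MvPolynomial (Fin n) ℝ) (j : Fin n)
    (Q : MvPolynomial (Fin l) ℝ) :
    pderiv j (aeval φ Q) = ∑ i, aeval φ (pderiv i Q) * pderiv j (φ i) := by
  induction Q using MvPolynomial.induction_on with
  | C a => simp
  | add p q hp hq =>
    simp only [map_add, hp, hq, add_mul, Finset.sum_add_distrib]
  | mul_X p i hp =>
    rw [map_mul, aeval_X, pderiv_mul, hp]
    have key : ∀ i' : Fin l, aeval φ (pderiv i' (p * X i)) * pderiv j (φ i')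
        = aeval φ (pderiv i' p) * pderiv j (φ i') * φ i
          + aeval φ p * (if i = i' then pderiv j (φ i') else 0) := by
      intro i'
      rw [pderiv_mul, map_add, map_mul, map_mul, aeval_X, pderiv_X, Pi.single_apply,
        apply_ite (aeval φ), map_one, map_zero]
      split_ifs with h
      · ring
      · ring
    rw [Finset.sum_congr rfl fun i' _ => key i', Finset.sum_add_distrib, ← Finset.sum_mul]
    simp only [mul_ite, mul_zero]
    rw [Finset.sum_ite_eq, if_pos (Finset.mem_univ i)]

lemma myC_of_td0 {σ : Type*} (Q : MvPolynomial σ ℝ) (h : Q.totalDegree = 0) :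
    Q = C (coeff 0 Q) := by
  classical
  ext m
  rcases eq_or_ne m 0 with rfl | hm
  · simp
  · rw [coeff_C, if_neg (Ne.symm hm)]
    by_contra hc
    have hmem : m ∈ Q.support := mem_support_iff.mpr hc
    have := (totalDegree_eq_zero_iff σ Q).mp h m hmem
    exact hm (Finsupp.ext this)

lemma myKey {n l : ℕ} (φ : Fin l → MvPolynomial (Fin n) ℝ) (jn : Fin l → Fin n)
    (hdet : (Matrix.of fun i j : Fin l => pderiv (jn j) (φ i)).det ≠ 0) :
    ∀ d (Q : MvPolynomial (Fin l) ℝ), Q.totalDegree = d → aeval φ Q = 0 → Q = 0 := by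
  intro d
  induction d using Nat.strong_induction_on with
  | _ d ih =>
    intro Q hd h0
    have hconst : ∀ a : ℝ, Q = C a → Q = 0 := by
      intro a ha
      rw [ha] at h0 ⊢
      rw [aeval_C] at h0
      have ha0 : a = 0 := by simpa using congrArg constantCoeff h0
      rw [ha0, map_zero]
    rcases Nat.eq_zero_or_pos d with hd0 | hd1
    · exact hconst _ (myC_of_td0 Q (by omega))
    · set M : Matrix (Fin l) (Fin l) (MvPolynomial (Fin n) ℝ) :=
        Matrix.of fun i j => pderiv (jn j) (φ i) with hM
      set A : Fin l → MvPolynomial (Fin n) ℝ := fun i => aeval φ (pderiv i Q) with hA'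
      have hvec : Matrix.vecMul A M = 0 := by
        funext j
        have hch := myChain φ (jn j) Q
        rw [h0, map_zero] at hch
        simp only [Matrix.vecMul, dotProduct, hM, Matrix.of_apply, Pi.zero_apply]
        exact hch.symm
      have h3 : ∀ i, M.det * aeval φ (pderiv i Q) = 0 := by
        intro i
        have h4 : (Matrix.vecMul A (M * M.adjugate)) i
            = (0 : Fin l → MvPolynomial (Fin n) ℝ) i := by
          rw [← Matrix.vecMul_vecMul, hvec, Matrix.zero_vecMul]
        rw [Matrix.mul_adjugate] at h4
        simpa [Matrix.vecMul, dotProduct, Matrix.smul_apply, Matrix.one_apply,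
          mul_ite, mul_comm, Finset.sum_ite_eq, hA'] using h4
      have hA : ∀ i, aeval φ (pderiv i Q) = 0 := fun i =>
        (mul_eq_zero.mp (h3 i)).resolve_left hdet
      have hp0 : ∀ i, pderiv i Q = 0 := by
        intro i
        have hlt := myTD_pderiv_lt i Q (by omega)
        exact ih _ (by omega) _ rfl (hA i)
      exact hconst _ (myEq_C Q hp0)

/-- If `deg P_{l+1} ≥ 1` for some `1 ≤ l ≤ n`, then `P_1, …, P_l` are algebraically
independent over `ℝ`: there is no nonzero polynomial `Q ∈ ℝ[y_1, …, y_l]` with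
`Q(P_1(x), …, P_l(x)) = 0` for all `x ∈ ℝ^n`. -/
theorem statement9 (n : ℕ) (hn : 2 ≤ n) (P : MvPolynomial (Fin n) ℝ)
    (l : ℕ) (hl1 : 1 ≤ l) (hln : l ≤ n)
    (hdeg : 1 ≤ (Pseq P (l + 1)).totalDegree) :
    ¬ ∃ Q : MvPolynomial (Fin l) ℝ, Q ≠ 0 ∧
        ∀ x : Fin n → ℝ,
          eval (fun j : Fin l => eval x (Pseq P ((j : ℕ) + 1))) Q = 0 := by
  rintro ⟨Q, hQ, hev⟩
  obtain ⟨m, rfl⟩ : ∃ m, l = m + 1 := ⟨l - 1, by omega⟩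
  set φ : Fin (m + 1) → MvPolynomial (Fin n) ℝ := fun i => Pseq P ((i : ℕ) + 1) with hφ
  have hle : m + 1 ≤ n := hln
  have hPs : Pseq P (m + 1 + 1) = Matrix.det (Matrix.of fun i j : Fin (m + 1) =>
      pderiv (Fin.castLE hle j) (φ i)) := by
    show Pseq P (m + 2) = _
    rw [Pseq, dif_pos hle]
  have hdet : (Matrix.of fun i j : Fin (m + 1) =>
      pderiv ((Fin.castLE hle : Fin (m+1) → Fin n) j) (φ i)).det ≠ 0 := by
    intro h
    rw [show (Matrix.of fun i j : Fin (m + 1) =>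
      pderiv ((Fin.castLE hle : Fin (m+1) → Fin n) j) (φ i)).det
        = Pseq P (m + 1 + 1) from hPs.symm] at h
    rw [h] at hdeg
    simp at hdeg
  have h0 : aeval φ Q = 0 := by
    refine MvPolynomial.funext fun x => ?_
    rw [map_zero, aeval_eq_bind₁, hom_bind₁]
    have hc : (eval x).comp (C : ℝ →+* MvPolynomial (Fin n) ℝ) = RingHom.id ℝ :=
      RingHom.ext fun a => by simp
    rw [hc]
    exact hev x
  exact hQ (myKey φ (Fin.castLE hle) hdet Q.totalDegree Q rfl h0)
end

section
/- Let P be a real polynomial on ℝ^n with P(0) = 0, and let α be an admissible index for P. Then for every μ ∈ (0, 1/|α|) there exists a constant C > 0 independent of r such that for all r > 0, ∫_{Δ_r^n} |P(x)|^{−μ} dλ_n(x) ≤ C·r^{n − μ|α|}. -/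
section Aux1
open MeasureTheory Polynomial Set
open scoped ENNReal

lemma multiset_prod_lb (t : ℂ) (δ : ℝ) (hδ : 0 ≤ δ) (s : Multiset ℂ)
    (h : ∀ z ∈ s, δ ≤ ‖t - z‖) :
    δ ^ (Multiset.card s) ≤ (s.map fun z => ‖t - z‖).prod := by
  induction s using Multiset.induction_on with
  | empty => simp
  | cons a s ih =>
    simp only [Multiset.map_cons, Multiset.prod_cons, Multiset.card_cons, pow_succ]
    rw [mul_comm]
    apply mul_le_mul (h a (Multiset.mem_cons_self a s)) (ih fun z hz => h z (Multiset.mem_cons_of_mem hz)) (pow_nonneg hδ _) (norm_nonneg _)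

lemma sublevel_bound {d : ℕ} (hd : 0 < d) (p : Polynomial ℝ) (hdeg : p.degree ≤ d)
    (hc : p.coeff d ≠ 0) {δ : ℝ} (hδ : 0 < δ) :
    volume {t : ℝ | |p.eval t| < |p.coeff d| * δ ^ d} ≤ ENNReal.ofReal (2 * d * δ) := by
  have hnd : p.natDegree = d :=
    le_antisymm (natDegree_le_iff_degree_le.2 hdeg) (le_natDegree_of_ne_zero hc)
  set q : Polynomial ℂ := p.map (algebraMap ℝ ℂ) with hq
  have hqnd : q.natDegree = d := by
    rw [hq, natDegree_map_eq_of_injective (algebraMap ℝ ℂ).injective, hnd]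
  have hq0 : q ≠ 0 := by
    intro h
    apply hc
    have := congrArg (fun r => r.coeff d) h
    simpa [hq, coeff_map] using this
  have hsplit : Splits q := IsAlgClosed.splits q
  have hcard : Multiset.card q.roots = d := by
    have := hsplit.natDegree_eq_card_roots
    simpa [hqnd] using this.symm
  have hfact := hsplit.eq_prod_roots
  -- evaluate
  have habs : ∀ t : ℝ, |p.eval t| =
      |p.coeff d| * ((q.roots.map fun z => ‖(t : ℂ) - z‖).prod) := by
    intro t
    have h1 : q.eval (t : ℂ) = ((p.eval t : ℝ) : ℂ) := by
      rw [hq, eval_map]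
      show eval₂ (algebraMap ℝ ℂ) ((algebraMap ℝ ℂ) t) p = _
      rw [eval₂_at_apply]; rfl
    have hlc : q.leadingCoeff = ((p.coeff d : ℝ) : ℂ) := by
      rw [leadingCoeff, hqnd, hq, coeff_map]; rfl
    have h2 : ‖q.eval (t : ℂ)‖ = |p.eval t| := by
      rw [h1, Complex.norm_real, Real.norm_eq_abs]
    rw [← h2]
    conv_lhs => rw [hfact]
    rw [eval_mul, eval_C, norm_mul, hlc, Complex.norm_real, Real.norm_eq_abs, eval_multiset_prod]
    congr 1
    rw [show ‖_‖ = _ from map_multiset_prod (normHom : ℂ →*₀ ℝ) _]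
    simp [Multiset.map_map, Function.comp]
  have hcpos : 0 < |p.coeff d| := abs_pos.2 hc
  have hsub : {t : ℝ | |p.eval t| < |p.coeff d| * δ ^ d} ⊆
      ⋃ z ∈ q.roots.toFinset, Set.Ioo (z.re - δ) (z.re + δ) := by
    intro t ht
    simp only [Set.mem_setOf_eq] at ht
    by_contra hmem
    simp only [Set.mem_iUnion, not_exists] at hmem
    have hall : ∀ z ∈ q.roots, δ ≤ ‖(t : ℂ) - z‖ := by
      intro z hz
      by_contra hlt
      push_neg at hlt
      apply hmem z (Multiset.mem_toFinset.2 hz)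
      have h3 : |((t : ℂ) - z).re| ≤ ‖(t : ℂ) - z‖ := Complex.abs_re_le_norm _
      have h4 : ((t : ℂ) - z).re = t - z.re := by simp
      rw [h4] at h3
      have h5 : |t - z.re| < δ := lt_of_le_of_lt h3 hlt
      have h6 := abs_lt.1 h5
      exact ⟨by linarith [h6.1], by linarith [h6.2]⟩
    have hlb := multiset_prod_lb (t : ℂ) δ hδ.le q.roots hall
    rw [hcard] at hlb
    have h7 := habs t
    nlinarith [mul_le_mul_of_nonneg_left hlb hcpos.le]
  calc volume {t : ℝ | |p.eval t| < |p.coeff d| * δ ^ d}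
      ≤ volume (⋃ z ∈ q.roots.toFinset, Set.Ioo (z.re - δ) (z.re + δ)) := measure_mono hsub
    _ ≤ ∑ z ∈ q.roots.toFinset, volume (Set.Ioo (z.re - δ) (z.re + δ)) :=
        measure_biUnion_finset_le _ _
    _ = ∑ _z ∈ q.roots.toFinset, ENNReal.ofReal (2 * δ) := by
        refine Finset.sum_congr rfl fun z _ => ?_
        rw [Real.volume_Ioo]
        congr 1
        ring
    _ = (q.roots.toFinset.card : ℝ≥0∞) * ENNReal.ofReal (2 * δ) := by
        rw [Finset.sum_const, nsmul_eq_mul]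
    _ ≤ (d : ℝ≥0∞) * ENNReal.ofReal (2 * δ) := by
        gcongr
        exact_mod_cast hcard ▸ q.roots.toFinset_card_le
    _ = ENNReal.ofReal (2 * d * δ) := by
        rw [← ENNReal.ofReal_natCast, ← ENNReal.ofReal_mul (by positivity)]
        congr 1
        ring

lemma oneD (d : ℕ) (μ : ℝ) (hμ : 0 < μ) (hμd : μ * d < 1) :
    ∃ C : ℝ, 0 < C ∧ ∀ p : Polynomial ℝ, p.degree ≤ d → ∀ r : ℝ, 0 < r →
      ∫⁻ t in Set.Ioo (-r) r, (ENNReal.ofReal |p.eval t|) ^ (-μ) ≤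
        ENNReal.ofReal C * (ENNReal.ofReal |p.coeff d|) ^ (-μ) *
          ENNReal.ofReal (r ^ (1 - μ * d)) := by
  rcases Nat.eq_zero_or_pos d with hd0 | hdpos
  · -- degree 0 case
    subst hd0
    refine ⟨2, by norm_num, fun p hdeg r hr => ?_⟩
    have hpc : ∀ t : ℝ, p.eval t = p.coeff 0 := by
      intro t
      conv_lhs => rw [eq_C_of_degree_le_zero (p := p) (by exact_mod_cast hdeg)]
      simp
    calc ∫⁻ t in Set.Ioo (-r) r, (ENNReal.ofReal |p.eval t|) ^ (-μ)
        = ∫⁻ _t in Set.Ioo (-r) r, (ENNReal.ofReal |p.coeff 0|) ^ (-μ) := by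
          apply lintegral_congr; intro t; rw [hpc]
      _ = (ENNReal.ofReal |p.coeff 0|) ^ (-μ) * volume (Set.Ioo (-r) r) :=
          setLIntegral_const _ _
      _ = ENNReal.ofReal 2 * (ENNReal.ofReal |p.coeff 0|) ^ (-μ) *
            ENNReal.ofReal (r ^ (1 - μ * (0:ℕ))) := by
          rw [Real.volume_Ioo]
          have : r - -r = 2 * r := by ring
          rw [this, ENNReal.ofReal_mul (by norm_num)]
          have : r ^ (1 - μ * ((0:ℕ):ℝ)) = r := by
            simp [Real.rpow_one]
          rw [this]; ring
      _ ≤ ENNReal.ofReal 2 * (ENNReal.ofReal |p.coeff 0|) ^ (-μ) *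
            ENNReal.ofReal (r ^ (1 - μ * (0:ℕ))) := le_rfl
  · -- d ≥ 1
    have hd' : (0:ℝ) < d := by exact_mod_cast hdpos
    set q : ℝ := 1 / (μ * d) with hqdef
    have hμd0 : 0 < μ * d := by positivity
    have hq1 : 1 < q := (one_lt_div hμd0).2 hμd
    set C : ℝ := (1 + 1 / (q - 1)) * (2 * d) ^ (μ * d) * 2 with hCdef
    have hq1' : 0 < q - 1 := by linarith
    have hCpos : 0 < C := by
      rw [hCdef]
      have h1 : 0 < 1 / (q - 1) := by positivity
      have h2 : (0:ℝ) < (2 * d) ^ (μ * d) := Real.rpow_pos_of_pos (by positivity) _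
      nlinarith
    refine ⟨C, hCpos, fun p hdeg r hr => ?_⟩
    by_cases hc0 : p.coeff d = 0
    · -- RHS is ⊤
      rw [hc0, abs_zero, ENNReal.ofReal_zero, ENNReal.zero_rpow_of_neg (by linarith)]
      rw [ENNReal.mul_top (by simp only [ne_eq, ENNReal.ofReal_eq_zero, not_le]; exact hCpos)]
      rw [ENNReal.top_mul]
      · exact le_top
      · simp only [ne_eq, ENNReal.ofReal_eq_zero, not_le]
        positivity
    · have hcpos : 0 < |p.coeff d| := abs_pos.2 hc0
      have hp0 : p ≠ 0 := fun h => hc0 (by simp [h])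
      have h2r : (0:ℝ) < 2 * r := by linarith
      have hrpowm : Measurable fun x : ℝ => x ^ (-μ) :=
        measurable_of_continuousOn_compl_singleton 0
          (fun x hx => (Real.continuousAt_rpow_const x (-μ) (Or.inl hx)).continuousWithinAt)
      have hmq : Measurable fun s : ℝ => s ^ (-q) :=
        measurable_of_continuousOn_compl_singleton 0
          (fun x hx => (Real.continuousAt_rpow_const x (-q) (Or.inl hx)).continuousWithinAt)
      set ν := volume.restrict (Set.Ioo (-r) r) with hν
      have hae : ∀ᵐ t : ℝ, p.eval t ≠ 0 := by
        have hz : volume {t : ℝ | p.eval t = 0} = 0 :=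
          (Polynomial.finite_setOf_isRoot hp0).measure_zero _
        rw [ae_iff]
        convert hz using 2
        simp [not_not]
      have hcongr : ∫⁻ t in Set.Ioo (-r) r, (ENNReal.ofReal |p.eval t|) ^ (-μ)
          = ∫⁻ t in Set.Ioo (-r) r, ENNReal.ofReal (|p.eval t| ^ (-μ)) := by
        apply lintegral_congr_ae
        filter_upwards [ae_restrict_of_ae hae] with t ht
        rw [ENNReal.ofReal_rpow_of_pos (abs_pos.2 ht)]
      have hmf : Measurable fun t : ℝ => |p.eval t| ^ (-μ) :=
        hrpowm.comp (p.continuous.abs.measurable)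
      have hlayer := lintegral_eq_lintegral_meas_lt ν
        (f := fun t => |p.eval t| ^ (-μ))
        (Filter.Eventually.of_forall fun t => Real.rpow_nonneg (abs_nonneg _) _)
        hmf.aemeasurable
      have hbound : ∀ s : ℝ, 0 < s →
          ν {t : ℝ | s < |p.eval t| ^ (-μ)} ≤
            min (ENNReal.ofReal (2 * r))
              (ENNReal.ofReal (2 * d * ((s ^ (-1/μ) / |p.coeff d|) ^ ((1:ℝ)/d)))) := by
        intro s hs
        refine le_min ?_ ?_
        · calc ν {t : ℝ | s < |p.eval t| ^ (-μ)} ≤ ν Set.univ :=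
              measure_mono (Set.subset_univ _)
            _ = volume (Set.Ioo (-r) r) := by rw [hν, Measure.restrict_apply_univ]
            _ = ENNReal.ofReal (2 * r) := by rw [Real.volume_Ioo]; congr 1; ring
        · set δ : ℝ := (s ^ (-1/μ) / |p.coeff d|) ^ ((1:ℝ)/d) with hδdef
          have hbase : 0 < s ^ (-1/μ) / |p.coeff d| :=
            div_pos (Real.rpow_pos_of_pos hs _) hcpos
          have hδpos : 0 < δ := Real.rpow_pos_of_pos hbase _
          have hkey : |p.coeff d| * δ ^ d = s ^ (-1/μ) := by
            rw [hδdef, ← Real.rpow_natCast ((s ^ (-1/μ) / |p.coeff d|) ^ ((1:ℝ)/d)) d,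
              ← Real.rpow_mul hbase.le, one_div, inv_mul_cancel₀ (ne_of_gt hd'),
              Real.rpow_one]
            field_simp
          have hsub2 : {t : ℝ | s < |p.eval t| ^ (-μ)} ⊆
              {t : ℝ | |p.eval t| < |p.coeff d| * δ ^ d} := by
            intro t ht
            simp only [Set.mem_setOf_eq] at ht ⊢
            rw [hkey]
            by_cases hpt : p.eval t = 0
            · rw [hpt, abs_zero]; exact Real.rpow_pos_of_pos hs _
            · have hapos : 0 < |p.eval t| := abs_pos.2 hpt
              have h2 := Real.rpow_lt_rpow_of_neg hs ht
                (show -1/μ < 0 by rw [neg_div]; exact neg_neg_iff_pos.2 (by positivity))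
              rwa [← Real.rpow_mul hapos.le,
                show (-μ) * (-1/μ) = 1 by field_simp, Real.rpow_one] at h2
          calc ν {t : ℝ | s < |p.eval t| ^ (-μ)}
              ≤ ν {t : ℝ | |p.eval t| < |p.coeff d| * δ ^ d} := measure_mono hsub2
            _ ≤ volume {t : ℝ | |p.eval t| < |p.coeff d| * δ ^ d} :=
                Measure.restrict_le_self _
            _ ≤ ENNReal.ofReal (2 * d * δ) := sublevel_bound hdpos p hdeg hc0 hδpos
      -- now the outer integral
      set A : ℝ := 2 * d * |p.coeff d| ^ (-(1:ℝ)/d) with hAdef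
      have hApos : 0 < A := by
        rw [hAdef]
        have := Real.rpow_pos_of_pos hcpos (-(1:ℝ)/d)
        positivity
      set s₀ : ℝ := (A / (2 * r)) ^ (μ * (d:ℝ)) with hs₀def
      have hs₀pos : 0 < s₀ := Real.rpow_pos_of_pos (div_pos hApos h2r) _
      have hqlt : -q < -1 := by linarith
      rw [hcongr, hlayer]
      rw [show Set.Ioi (0:ℝ) = Set.Ioc 0 s₀ ∪ Set.Ioi s₀ from
        (Set.Ioc_union_Ioi_eq_Ioi hs₀pos.le).symm,
        lintegral_union measurableSet_Ioi Set.Ioc_disjoint_Ioi_same]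
      have h1 : ∫⁻ s in Set.Ioc 0 s₀, ν {t : ℝ | s < |p.eval t| ^ (-μ)} ≤
          ENNReal.ofReal (2 * r) * ENNReal.ofReal s₀ := by
        calc ∫⁻ s in Set.Ioc 0 s₀, ν {t : ℝ | s < |p.eval t| ^ (-μ)}
            ≤ ∫⁻ _s in Set.Ioc 0 s₀, ENNReal.ofReal (2 * r) := by
              apply setLIntegral_mono' measurableSet_Ioc
              intro s hs
              exact (hbound s hs.1).trans (min_le_left _ _)
          _ = ENNReal.ofReal (2 * r) * volume (Set.Ioc 0 s₀) := setLIntegral_const _ _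
          _ = ENNReal.ofReal (2 * r) * ENNReal.ofReal s₀ := by
              rw [Real.volume_Ioc, sub_zero]
      have h2 : ∫⁻ s in Set.Ioi s₀, ν {t : ℝ | s < |p.eval t| ^ (-μ)} ≤
          ENNReal.ofReal A * ENNReal.ofReal (s₀ ^ (1 - q) / (q - 1)) := by
        calc ∫⁻ s in Set.Ioi s₀, ν {t : ℝ | s < |p.eval t| ^ (-μ)}
            ≤ ∫⁻ s in Set.Ioi s₀, ENNReal.ofReal A * ENNReal.ofReal (s ^ (-q)) := by
              apply setLIntegral_mono' measurableSet_Ioi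
              intro s hs
              have hs0 : 0 < s := lt_trans hs₀pos hs
              refine (hbound s hs0).trans ((min_le_right _ _).trans (le_of_eq ?_))
              rw [← ENNReal.ofReal_mul hApos.le]
              congr 1
              rw [hAdef, Real.div_rpow (Real.rpow_nonneg hs0.le _) hcpos.le,
                ← Real.rpow_mul hs0.le,
                show -1/μ * (1/(d:ℝ)) = -q from by rw [hqdef]; field_simp]
              rw [show (-1:ℝ)/(d:ℝ) = -(1/(d:ℝ)) from by ring, Real.rpow_neg hcpos.le,
                div_eq_mul_inv]
              ring
          _ = ENNReal.ofReal A * ∫⁻ s in Set.Ioi s₀, ENNReal.ofReal (s ^ (-q)) :=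
              lintegral_const_mul _ (hmq.ennreal_ofReal)
          _ = ENNReal.ofReal A * ENNReal.ofReal (s₀ ^ (1 - q) / (q - 1)) := by
              congr 1
              rw [← ofReal_integral_eq_lintegral_ofReal
                (integrableOn_Ioi_rpow_of_lt hqlt hs₀pos)
                ((ae_restrict_iff' measurableSet_Ioi).2 (Filter.Eventually.of_forall
                  fun s hs => Real.rpow_nonneg (le_of_lt (lt_trans hs₀pos hs)) _))]
              rw [integral_Ioi_rpow_of_lt hqlt hs₀pos]
              congr 1
              rw [div_eq_div_iff (by linarith) (by linarith)]
              have : s₀ ^ (-q + 1) = s₀ ^ (1 - q) := by ring_nf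
              rw [this]; ring
      have hreal : 2 * r * s₀ + A * (s₀ ^ (1 - q) / (q - 1)) ≤
          C * |p.coeff d| ^ (-μ) * r ^ (1 - μ * d) := by
        set e : ℝ := μ * d with hedef
        have heq : e * q = 1 := by rw [hqdef]; field_simp
        have h2re : (0:ℝ) < (2*r) ^ e := Real.rpow_pos_of_pos h2r _
        have hs₀e : s₀ = A ^ e / (2*r) ^ e := by
          rw [hs₀def, Real.div_rpow hApos.le h2r.le]
        have e1 : 2 * r * s₀ = A ^ e * (2*r) ^ (1 - e) := by
          rw [hs₀e, Real.rpow_sub h2r, Real.rpow_one]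
          field_simp
        have e2 : s₀ ^ (1 - q) = A ^ (e - 1) * (2*r) ^ (1 - e) := by
          rw [hs₀def, ← Real.rpow_mul (div_pos hApos h2r).le,
            show e * (1 - q) = e - 1 from by rw [mul_sub, mul_one, heq],
            Real.div_rpow hApos.le h2r.le,
            show (1:ℝ) - e = -(e-1) from by ring, Real.rpow_neg h2r.le, div_eq_mul_inv]
        have e3 : A * s₀ ^ (1 - q) = A ^ e * (2*r) ^ (1 - e) := by
          rw [e2, ← mul_assoc]
          congr 1
          have h := Real.rpow_add hApos 1 (e - 1)
          rw [Real.rpow_one] at h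
          rw [← h]
          norm_num
        have eA : A ^ e = (2*(d:ℝ)) ^ e * |p.coeff d| ^ (-μ) := by
          rw [hAdef, Real.mul_rpow (by positivity) (Real.rpow_nonneg hcpos.le _),
            ← Real.rpow_mul hcpos.le,
            show (-1)/(d:ℝ) * e = -μ from by rw [hedef]; field_simp]
        have er : (2*r) ^ (1 - e) ≤ 2 * r ^ (1 - e) := by
          rw [Real.mul_rpow (by norm_num) hr.le]
          have h2e : (2:ℝ) ^ (1 - e) ≤ 2 ^ (1:ℝ) :=
            Real.rpow_le_rpow_of_exponent_le one_le_two (by linarith)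
          rw [Real.rpow_one] at h2e
          exact mul_le_mul_of_nonneg_right h2e (Real.rpow_nonneg hr.le _)
        have hfac : (0:ℝ) ≤ 1 + 1/(q-1) := by
          have h := one_div_pos.2 hq1'
          linarith
        calc 2 * r * s₀ + A * (s₀ ^ (1 - q) / (q - 1))
            = (1 + 1/(q-1)) * (A ^ e * (2*r) ^ (1-e)) := by
              have hx : A * (s₀ ^ (1-q)/(q-1)) = (A ^ e * (2*r) ^ (1-e))/(q-1) := by
                rw [← e3]; ring
              rw [e1, hx]
              ring
          _ ≤ (1 + 1/(q-1)) * (A ^ e * (2 * r ^ (1-e))) := by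
              apply mul_le_mul_of_nonneg_left _ hfac
              exact mul_le_mul_of_nonneg_left er (Real.rpow_nonneg hApos.le _)
          _ = C * |p.coeff d| ^ (-μ) * r ^ (1-e) := by
              rw [eA, hCdef]
              ring
      calc (∫⁻ s in Set.Ioc 0 s₀, ν {t : ℝ | s < |p.eval t| ^ (-μ)}) +
            ∫⁻ s in Set.Ioi s₀, ν {t : ℝ | s < |p.eval t| ^ (-μ)}
          ≤ ENNReal.ofReal (2*r) * ENNReal.ofReal s₀ +
            ENNReal.ofReal A * ENNReal.ofReal (s₀ ^ (1 - q) / (q - 1)) := add_le_add h1 h2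
        _ = ENNReal.ofReal (2*r*s₀ + A * (s₀ ^ (1 - q) / (q - 1))) := by
            rw [← ENNReal.ofReal_mul h2r.le, ← ENNReal.ofReal_mul hApos.le,
              ← ENNReal.ofReal_add (mul_nonneg h2r.le hs₀pos.le)
                (mul_nonneg hApos.le (div_nonneg (Real.rpow_nonneg hs₀pos.le _)
                  (by linarith)))]
        _ ≤ ENNReal.ofReal (C * |p.coeff d| ^ (-μ) * r ^ (1 - μ * d)) :=
            ENNReal.ofReal_le_ofReal hreal
        _ = ENNReal.ofReal C * (ENNReal.ofReal |p.coeff d|) ^ (-μ) *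
              ENNReal.ofReal (r ^ (1 - μ * d)) := by
            rw [ENNReal.ofReal_mul (mul_nonneg hCpos.le
                (Real.rpow_nonneg (abs_nonneg _) _)),
              ENNReal.ofReal_mul hCpos.le, ← ENNReal.ofReal_rpow_of_pos hcpos]



end Aux1

section Aux2
open MeasureTheory MvPolynomial
open scoped ENNReal

def pcube (n : ℕ) (r : ℝ) : Set (Fin n → ℝ) := {x | ∀ i, x i ∈ Set.Ioo (-r) r}

lemma measurableSet_pcube (n : ℕ) (r : ℝ) : MeasurableSet (pcube n r) := by
  have h : pcube n r = ⋂ i, (fun x : Fin n → ℝ => x i) ⁻¹' Set.Ioo (-r) r := by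
    ext x; simp [pcube]
  rw [h]
  exact MeasurableSet.iInter fun i => (measurable_pi_apply i) measurableSet_Ioo

lemma measurable_mv_eval {n : ℕ} (P : MvPolynomial (Fin n) ℝ) :
    Measurable fun x : Fin n → ℝ => MvPolynomial.eval x P := by
  classical
  simp_rw [MvPolynomial.eval_eq]
  refine Finset.measurable_sum _ fun d _ => Measurable.mul measurable_const ?_
  refine Finset.measurable_prod _ fun i _ => ?_
  exact (measurable_pi_apply i).pow_const _

lemma mainLemma : ∀ (n : ℕ) (P : MvPolynomial (Fin n) ℝ) (α : Fin n →₀ ℕ) (μ : ℝ),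
    0 < μ → MvPolynomial.coeff α P ≠ 0 →
    (∀ β, β ≠ α → MvPolynomial.coeff β P ≠ 0 →
      ∃ j, β j < α j ∧ ∀ k, k < j → α k = β k) →
    μ * (∑ i, (α i : ℝ)) < 1 →
    ∃ C : ℝ, 0 < C ∧ ∀ r : ℝ, 0 < r →
      ∫⁻ x in pcube n r, (ENNReal.ofReal |MvPolynomial.eval x P|) ^ (-μ) ≤
        ENNReal.ofReal (C * r ^ ((n : ℝ) - μ * ∑ i, (α i : ℝ))) := by
  intro n
  induction n with
  | zero =>
    intro P α μ hμ hcoeff hlex hμα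
    obtain ⟨c, rfl⟩ := MvPolynomial.C_surjective (Fin 0) P
    have hα0 : α = 0 := Finsupp.ext fun i => i.elim0
    have hc : c ≠ 0 := by
      intro h
      apply hcoeff
      simp [h]
    have hcabs : 0 < |c| := abs_pos.2 hc
    refine ⟨|c| ^ (-μ), Real.rpow_pos_of_pos hcabs _, fun r hr => ?_⟩
    have hsum0 : (∑ i : Fin 0, (α i : ℝ)) = 0 := by simp
    calc ∫⁻ x in pcube 0 r, (ENNReal.ofReal |MvPolynomial.eval x (C c)|) ^ (-μ)
        = ∫⁻ _x in pcube 0 r, ENNReal.ofReal (|c| ^ (-μ)) := by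
          apply lintegral_congr
          intro x
          rw [MvPolynomial.eval_C, ENNReal.ofReal_rpow_of_pos hcabs]
      _ = ENNReal.ofReal (|c| ^ (-μ)) * volume (pcube 0 r) := setLIntegral_const _ _
      _ ≤ ENNReal.ofReal (|c| ^ (-μ)) * 1 := by
          gcongr
          have : volume (Set.univ : Set (Fin 0 → ℝ)) = 1 := by
            simp [MeasureTheory.volume_pi, Measure.pi_univ]
          calc volume (pcube 0 r) ≤ volume (Set.univ : Set (Fin 0 → ℝ)) :=
              measure_mono (Set.subset_univ _)
            _ = 1 := this
      _ = ENNReal.ofReal (|c| ^ (-μ) * r ^ (((0:ℕ):ℝ) - μ * ∑ i : Fin 0, (α i : ℝ))) := by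
          rw [hsum0]
          norm_num
  | succ n ih =>
    intro P α μ hμ hcoeff hlex hμα
    classical
    set a : ℕ := α 0 with hadef
    set α' : Fin n →₀ ℕ := Finsupp.tail α with hα'def
    set q := MvPolynomial.finSuccEquiv ℝ n P with hqdef
    set Q : MvPolynomial (Fin n) ℝ := q.coeff a with hQdef
    have hsum : (∑ i, (α i : ℝ)) = (a : ℝ) + ∑ i, (α' i : ℝ) := by
      rw [Fin.sum_univ_succ]
      simp [hα'def, Finsupp.tail_apply, hadef]
    have hsum_nn : (0:ℝ) ≤ ∑ i, (α' i : ℝ) := by positivity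
    have ha_nn : (0:ℝ) ≤ (a : ℝ) := by positivity
    have hμα2 : μ * ((a:ℝ) + ∑ i, (α' i : ℝ)) < 1 := by rw [← hsum]; exact hμα
    have hμa : μ * (a:ℝ) < 1 := by nlinarith
    have hμα' : μ * (∑ i, (α' i : ℝ)) < 1 := by nlinarith
    have hb0 : ∀ β : Fin (n+1) →₀ ℕ, MvPolynomial.coeff β P ≠ 0 → β 0 ≤ a := by
      intro β hβ
      by_cases hβα : β = α
      · rw [hβα]
      · obtain ⟨j, hj1, hj2⟩ := hlex β hβα hβ
        rcases eq_or_ne j 0 with rfl | hj0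
        · exact le_of_lt hj1
        · exact le_of_eq (hj2 0 (Fin.pos_of_ne_zero hj0)).symm
    have hqdeg : q.degree ≤ (a : ℕ) := by
      rw [Polynomial.degree_le_iff_coeff_zero]
      intro m hm
      have hm' : a < m := by exact_mod_cast hm
      apply MvPolynomial.ext
      intro m'
      rw [MvPolynomial.coeff_zero, hqdef, MvPolynomial.finSuccEquiv_coeff_coeff]
      by_contra hne
      have := hb0 _ hne
      rw [Finsupp.cons_zero] at this
      omega
    have hQα' : MvPolynomial.coeff α' Q = MvPolynomial.coeff α P := by
      rw [hQdef, hqdef, MvPolynomial.finSuccEquiv_coeff_coeff, hadef, hα'def,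
        Finsupp.cons_tail]
    have hQ0 : MvPolynomial.coeff α' Q ≠ 0 := by rw [hQα']; exact hcoeff
    have hQlex : ∀ β', β' ≠ α' → MvPolynomial.coeff β' Q ≠ 0 →
        ∃ j, β' j < α' j ∧ ∀ k, k < j → α' k = β' k := by
      intro β' hne hc
      have hcP : MvPolynomial.coeff (Finsupp.cons a β') P ≠ 0 := by
        rwa [hQdef, hqdef, MvPolynomial.finSuccEquiv_coeff_coeff] at hc
      have hβα : Finsupp.cons a β' ≠ α := by
        intro h
        have : α' = β' := by rw [hα'def, ← h, Finsupp.tail_cons]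
        exact hne this.symm
      obtain ⟨j, hj1, hj2⟩ := hlex _ hβα hcP
      have hj0 : j ≠ 0 := by
        intro h
        subst h
        rw [Finsupp.cons_zero, ← hadef] at hj1
        exact absurd hj1 (lt_irrefl a)
      obtain ⟨j', rfl⟩ := Fin.eq_succ_of_ne_zero hj0
      refine ⟨j', ?_, ?_⟩
      · rw [Finsupp.cons_succ] at hj1
        rw [hα'def]
        simpa [Finsupp.tail_apply] using hj1
      · intro k hk
        have h := hj2 k.succ (by rwa [Fin.succ_lt_succ_iff])
        rw [Finsupp.cons_succ] at h
        rw [hα'def]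
        simpa [Finsupp.tail_apply] using h
    obtain ⟨C', hC'pos, hIH⟩ := ih Q α' μ hμ hQ0 hQlex hμα'
    obtain ⟨C₁, hC₁pos, hone⟩ := oneD a μ hμ hμa
    refine ⟨C₁ * C', by positivity, fun r hr => ?_⟩
    set e := MeasurableEquiv.piFinSuccAbove (fun _ : Fin (n+1) => ℝ) 0 with hedef
    have hmp : MeasurePreserving e volume volume :=
      volume_preserving_piFinSuccAbove (fun _ : Fin (n+1) => ℝ) 0
    have hms : MeasurePreserving e.symm volume volume := hmp.symm e
    have hemb : MeasurableEmbedding (e.symm : ℝ × (Fin n → ℝ) → (Fin (n+1) → ℝ)) :=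
      e.symm.measurableEmbedding
    have hsymm : ∀ z : ℝ × (Fin n → ℝ), e.symm z = Fin.cons z.1 z.2 := by
      intro z
      rw [hedef]
      show (Fin.insertNthEquiv (fun _ => ℝ) 0) z = _
      simp [Fin.insertNthEquiv, Fin.insertNth_zero']
    have himg : e.symm '' (Set.Ioo (-r) r ×ˢ pcube n r) = pcube (n+1) r := by
      ext x
      rw [Set.mem_image]
      constructor
      · rintro ⟨z, hz, rfl⟩
        rw [hsymm]
        intro i
        refine Fin.cases ?_ (fun j => ?_) i
        · simpa [Fin.cons_zero] using hz.1
        · simpa [Fin.cons_succ] using hz.2 j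
      · intro hx
        refine ⟨e x, ⟨?_, ?_⟩, e.symm_apply_apply x⟩
        · have : (e x).1 = x 0 := rfl
          rw [this]; exact hx 0
        · intro j
          have : (e x).2 j = x ((0:Fin (n+1)).succAbove j) := rfl
          rw [this]
          exact hx _
    have hmeas_cons : Measurable fun z : ℝ × (Fin n → ℝ) =>
        (Fin.cons z.1 z.2 : Fin (n+1) → ℝ) := by
      apply measurable_pi_iff.2
      intro i
      refine Fin.cases ?_ (fun j => ?_) i
      · simpa [Fin.cons_zero] using measurable_fst
      · simpa [Fin.cons_succ, Function.comp_def] using (measurable_pi_apply j).comp measurable_snd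
    have hmeasg : Measurable fun z : ℝ × (Fin n → ℝ) =>
        (ENNReal.ofReal |MvPolynomial.eval (Fin.cons z.1 z.2) P|) ^ (-μ) :=
      ((((measurable_mv_eval P).comp hmeas_cons).abs).ennreal_ofReal).pow_const _
    calc ∫⁻ x in pcube (n+1) r, (ENNReal.ofReal |MvPolynomial.eval x P|) ^ (-μ)
        = ∫⁻ z in Set.Ioo (-r) r ×ˢ pcube n r,
            (ENNReal.ofReal |MvPolynomial.eval (Fin.cons z.1 z.2) P|) ^ (-μ) := by
          rw [← himg, ← MeasurePreserving.setLIntegral_comp_emb hms hemb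
            (fun x => (ENNReal.ofReal |MvPolynomial.eval x P|) ^ (-μ))
            (Set.Ioo (-r) r ×ˢ pcube n r)]
          apply lintegral_congr
          intro z
          rw [hsymm]
      _ = ∫⁻ x' in pcube n r, ∫⁻ t in Set.Ioo (-r) r,
            (ENNReal.ofReal |MvPolynomial.eval (Fin.cons t x') P|) ^ (-μ) := by
          rw [Measure.volume_eq_prod, ← Measure.prod_restrict,
            lintegral_prod_symm _ hmeasg.aemeasurable]
      _ ≤ ∫⁻ _x' in pcube n r, (ENNReal.ofReal C₁ * ENNReal.ofReal (r ^ (1 - μ * a))) *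
            (ENNReal.ofReal |MvPolynomial.eval _x' Q|) ^ (-μ) := by
          apply setLIntegral_mono' (measurableSet_pcube n r)
          intro x' _
          have hdeg : (Polynomial.map (MvPolynomial.eval x') q).degree ≤ (a:ℕ) :=
            le_trans (Polynomial.degree_map_le) hqdeg
          have hb := hone _ hdeg r hr
          rw [Polynomial.coeff_map] at hb
          calc ∫⁻ t in Set.Ioo (-r) r,
                (ENNReal.ofReal |MvPolynomial.eval (Fin.cons t x') P|) ^ (-μ)
              = ∫⁻ t in Set.Ioo (-r) r, (ENNReal.ofReal
                  |Polynomial.eval t (Polynomial.map (MvPolynomial.eval x') q)|) ^ (-μ) := by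
                apply lintegral_congr
                intro t
                rw [MvPolynomial.eval_eq_eval_mv_eval', hqdef]
            _ ≤ ENNReal.ofReal C₁ *
                  (ENNReal.ofReal |MvPolynomial.eval x' (q.coeff a)|) ^ (-μ) *
                  ENNReal.ofReal (r ^ (1 - μ * a)) := hb
            _ = (ENNReal.ofReal C₁ * ENNReal.ofReal (r ^ (1 - μ * a))) *
                  (ENNReal.ofReal |MvPolynomial.eval x' Q|) ^ (-μ) := by
                rw [hQdef]
                ring
      _ = (ENNReal.ofReal C₁ * ENNReal.ofReal (r ^ (1 - μ * a))) *
            ∫⁻ x' in pcube n r, (ENNReal.ofReal |MvPolynomial.eval x' Q|) ^ (-μ) :=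
          lintegral_const_mul _ (((measurable_mv_eval Q).abs.ennreal_ofReal).pow_const _)
      _ ≤ (ENNReal.ofReal C₁ * ENNReal.ofReal (r ^ (1 - μ * a))) *
            ENNReal.ofReal (C' * r ^ ((n:ℝ) - μ * ∑ i, (α' i : ℝ))) :=
          mul_le_mul_right (hIH r hr) _
      _ = ENNReal.ofReal (C₁ * C' * r ^ (((n+1:ℕ) : ℝ) - μ * ∑ i, (α i : ℝ))) := by
          rw [← ENNReal.ofReal_mul hC₁pos.le,
            ← ENNReal.ofReal_mul (mul_nonneg hC₁pos.le (Real.rpow_nonneg hr.le _))]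
          congr 1
          rw [hsum]
          have hexp : (((n+1:ℕ)) : ℝ) - μ * ((a:ℝ) + ∑ i, (α' i : ℝ)) =
              (1 - μ * a) + ((n:ℝ) - μ * ∑ i, (α' i : ℝ)) := by
            push_cast
            ring
          rw [hexp, Real.rpow_add hr]
          ring

end Aux2

open MeasureTheory Metric MvPolynomial
open scoped ENNReal NNReal

/-- **Proposition 4.1.** Let `P` be a polynomial on `ℝ^n` with `P(0) = 0` and let `α` be
an admissible index for `P`. Then for every `μ ∈ (0, 1/|α|)` there is a constant `C > 0`
independent of `r` such that `∫_{Δ_r^n} |P|^{-μ} ≤ C r^{n - μ|α|}` for all `r > 0`. -/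
theorem statement10 (n : ℕ) (P : MvPolynomial (Fin n) ℝ)
    (hP0 : eval (fun _ => (0 : ℝ)) P = 0)
    (α : Fin n →₀ ℕ) (hα : IsAdmissibleIndex P α)
    (μ : ℝ) (hμ0 : 0 < μ) (hμ : μ < 1 / (∑ i, α i : ℝ)) :
    ∃ C : ℝ, 0 < C ∧ ∀ r : ℝ, 0 < r →
      ∫⁻ x in cube n r, (ENNReal.ofReal |eval (fun i => x i) P|) ^ (-μ) ≤
        ENNReal.ofReal (C * r ^ ((n : ℝ) - μ * (∑ i, α i : ℝ))) := by
  classical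
  obtain ⟨hcoeff, σ, ⟨hn, h1⟩, hlex⟩ := hα
  have hsum_ge1 : (1:ℝ) ≤ ∑ i, (α i : ℝ) := by
    calc (1:ℝ) ≤ (α (σ ⟨0, hn⟩) : ℝ) := by exact_mod_cast h1
      _ ≤ ∑ i, (α i : ℝ) :=
        Finset.single_le_sum (f := fun i => ((α i : ℕ) : ℝ))
          (fun i _ => by positivity) (Finset.mem_univ _)
  have hμα : μ * (∑ i, (α i : ℝ)) < 1 := by
    rw [lt_div_iff₀ (by linarith)] at hμ
    exact hμ
  set Q := MvPolynomial.rename (⇑σ.symm) P with hQdef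
  set A : Fin n →₀ ℕ := Finsupp.mapDomain (⇑σ.symm) α with hAdef
  have hinj : Function.Injective (⇑σ.symm) := σ.symm.injective
  have hAcoeff : ∀ β : Fin n →₀ ℕ,
      MvPolynomial.coeff (Finsupp.mapDomain (⇑σ.symm) β) Q = MvPolynomial.coeff β P :=
    fun β => MvPolynomial.coeff_rename_mapDomain _ hinj _ _
  have hmapapp : ∀ (β : Fin n →₀ ℕ) (i : Fin n),
      (Finsupp.mapDomain (⇑σ.symm) β) i = β (σ i) := by
    intro β i
    rw [Finsupp.mapDomain_equiv_apply]
    simp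
  have hsur : ∀ γ : Fin n →₀ ℕ,
      Finsupp.mapDomain (⇑σ.symm) (Finsupp.mapDomain (⇑σ) γ) = γ := by
    intro γ
    rw [← Finsupp.mapDomain_comp]
    simp
  have hQA : MvPolynomial.coeff A Q ≠ 0 := by
    rw [hAdef, hAcoeff]; exact hcoeff
  have hQlex : ∀ β', β' ≠ A → MvPolynomial.coeff β' Q ≠ 0 →
      ∃ j, β' j < A j ∧ ∀ k, k < j → A k = β' k := by
    intro β' hne hcβ
    set β := Finsupp.mapDomain (⇑σ) β' with hβdef
    have hββ' : Finsupp.mapDomain (⇑σ.symm) β = β' := hsur β'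
    have hcP : MvPolynomial.coeff β P ≠ 0 := by
      have h := hAcoeff β
      rw [hββ'] at h
      rw [← h]; exact hcβ
    have hβα : β ≠ α := by
      intro h
      apply hne
      rw [← hββ', h, ← hAdef]
    obtain ⟨j, hj1, hj2⟩ := hlex β hβα hcP
    refine ⟨j, ?_, ?_⟩
    · rw [← hββ', hAdef, hmapapp, hmapapp]
      exact hj1
    · intro k hk
      rw [← hββ', hAdef, hmapapp, hmapapp]
      exact hj2 k hk
  have hAsum : (∑ i, (A i : ℝ)) = ∑ i, (α i : ℝ) := by
    rw [hAdef]
    have h : ∀ i, (((Finsupp.mapDomain (⇑σ.symm) α) i : ℕ) : ℝ) = ((α (σ i) : ℕ) : ℝ) :=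
      fun i => by rw [hmapapp]
    simp_rw [h]
    exact Equiv.sum_comp σ fun i => ((α i : ℕ) : ℝ)
  obtain ⟨C, hC, hbound⟩ := mainLemma n Q A μ hμ0 hQA hQlex (by rw [hAsum]; exact hμα)
  refine ⟨C, hC, fun r hr => ?_⟩
  -- Step A : Euclidean to pi
  have hA : ∫⁻ y in pcube n r, (ENNReal.ofReal |MvPolynomial.eval y P|) ^ (-μ)
      = ∫⁻ x in cube n r, (ENNReal.ofReal |eval (fun i => x i) P|) ^ (-μ) := by
    have hEmp : MeasurePreserving (MeasurableEquiv.toLp 2 (Fin n → ℝ))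
        volume volume := (EuclideanSpace.volume_preserving_symm_measurableEquiv_toLp (Fin n)).symm
    have h := hEmp.setLIntegral_comp_emb
      ((MeasurableEquiv.toLp 2 (Fin n → ℝ)).measurableEmbedding)
      (fun x : EuclideanSpace ℝ (Fin n) =>
        (ENNReal.ofReal |eval (fun i => x i) P|) ^ (-μ)) (pcube n r)
    have himg : ((MeasurableEquiv.toLp 2 (Fin n → ℝ)) '' pcube n r) = cube n r := by
      ext x
      rw [Set.mem_image]
      constructor
      · rintro ⟨y, hy, rfl⟩
        exact fun i => hy i
      · intro hx
        exact ⟨(MeasurableEquiv.toLp 2 (Fin n → ℝ)).symm x, fun i => hx i,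
          (MeasurableEquiv.toLp 2 (Fin n → ℝ)).apply_symm_apply x⟩
    rw [himg] at h
    exact h
  -- Step B : permutation
  have hB : ∫⁻ x in pcube n r, (ENNReal.ofReal |MvPolynomial.eval x Q|) ^ (-μ)
      = ∫⁻ y in pcube n r, (ENNReal.ofReal |MvPolynomial.eval y P|) ^ (-μ) := by
    set m := MeasurableEquiv.piCongrLeft (fun _ : Fin n => ℝ) σ with hmdef
    have hperm : MeasurePreserving m volume volume :=
      volume_measurePreserving_piCongrLeft (fun _ : Fin n => ℝ) σ
    have hmapp : ∀ (x : Fin n → ℝ) (i : Fin n), m x i = x (σ.symm i) := by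
      intro x i
      rw [hmdef]
      rw [MeasurableEquiv.coe_piCongrLeft]
      simp [Equiv.piCongrLeft_apply, eq_rec_constant]
    have h := hperm.setLIntegral_comp_emb m.measurableEmbedding
      (fun y : Fin n → ℝ => (ENNReal.ofReal |MvPolynomial.eval y P|) ^ (-μ)) (pcube n r)
    have himg : m '' pcube n r = pcube n r := by
      ext y
      rw [Set.mem_image]
      constructor
      · rintro ⟨x, hx, rfl⟩
        intro i
        rw [hmapp]
        exact hx _
      · intro hy
        refine ⟨m.symm y, fun i => ?_, m.apply_symm_apply y⟩
        have : m (m.symm y) i = (m.symm y) (σ.symm i) := hmapp _ i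
        rw [m.apply_symm_apply] at this
        -- this : y i = (m.symm y) (σ.symm i); want (m.symm y) i ∈ Ioo
        have h2 : m (m.symm y) (σ.symm.symm i) = (m.symm y) i := by
          rw [hmapp]; simp
        rw [m.apply_symm_apply] at h2
        rw [← h2]
        exact hy _
    rw [himg] at h
    rw [← h]
    apply lintegral_congr
    intro x
    rw [hQdef, MvPolynomial.eval_rename]
    have hx : x ∘ ⇑σ.symm = m x := funext fun i => (hmapp x i).symm
    rw [hx]
  rw [hA] at hB
  rw [← hB]
  have hfin := hbound r hr
  rwa [hAsum] at hfin
end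

section
/- Let P be a real polynomial on ℝ^n with P(0) = 0. Then for every t with 0 < t < 1/ad(P), the function x ↦ |P(x)|^{−t} is Lebesgue integrable on some neighborhood of 0 in ℝ^n; that is, the integration index i(P) (the supremum of those t > 0 for which |P|^{−t} is integrable on some neighborhood of 0) satisfies i(P) ≥ 1/ad(P). -/
open MeasureTheory Metric MvPolynomial
open scoped ENNReal NNReal

section Helpers

open Set

lemma antitone_rpow_neg {s : ℝ} (hs : 0 < s) {x y : ℝ≥0∞} (h : x ≤ y) :
    y ^ (-s) ≤ x ^ (-s) := by
  rw [ENNReal.rpow_neg, ENNReal.rpow_neg]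
  exact ENNReal.inv_le_inv.mpr (ENNReal.rpow_le_rpow h hs.le)

lemma lint_Ioo_right {s : ℝ} (hs0 : 0 < s) (hs1 : s < 1) (a L : ℝ) (hL : 0 < L) :
    ∫⁻ x in Set.Ioo a (a + L), ENNReal.ofReal |x - a| ^ (-s)
      ≤ ENNReal.ofReal (L ^ (1 - s) / (1 - s)) := by
  have hii : IntervalIntegrable (fun x => (x - a) ^ (-s)) volume a (a + L) := by
    have := (intervalIntegral.intervalIntegrable_rpow' (r := -s) (by linarith)).comp_sub_right (a := 0) (b := L) a
    simpa [add_comm] using this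
  have hint : IntegrableOn (fun x => (x - a) ^ (-s)) (Set.Ioo a (a + L)) volume := by
    have := (intervalIntegrable_iff_integrableOn_Ioo_of_le (by linarith : a ≤ a + L)).1 hii
    exact this
  have h1 : ∫⁻ x in Set.Ioo a (a + L), ENNReal.ofReal |x - a| ^ (-s)
      = ∫⁻ x in Set.Ioo a (a + L), ENNReal.ofReal ((x - a) ^ (-s)) := by
    refine setLIntegral_congr_fun_ae measurableSet_Ioo (ae_of_all _ fun x hx => ?_)
    rw [abs_of_pos (by linarith [hx.1]), ENNReal.ofReal_rpow_of_pos (by linarith [hx.1])]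
  have h2 : ∫⁻ x in Set.Ioo a (a + L), ENNReal.ofReal ((x - a) ^ (-s))
      = ENNReal.ofReal (∫ x in Set.Ioo a (a + L), (x - a) ^ (-s)) := by
    rw [← ofReal_integral_eq_lintegral_ofReal hint]
    exact (ae_restrict_iff' measurableSet_Ioo).2 (ae_of_all _ fun x hx =>
      Real.rpow_nonneg (by linarith [hx.1]) _)
  have h3 : (∫ x in Set.Ioo a (a + L), (x - a) ^ (-s)) = L ^ (1 - s) / (1 - s) := by
    rw [← MeasureTheory.integral_Ioc_eq_integral_Ioo,
      ← intervalIntegral.integral_of_le (by linarith : a ≤ a + L)]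
    have := intervalIntegral.integral_comp_sub_right (a := a) (b := a + L)
      (fun x => x ^ (-s)) a
    simp only [sub_self, add_sub_cancel_left] at this
    rw [this]
    rw [integral_rpow (Or.inl (by linarith))]
    rw [Real.zero_rpow (by linarith : -s + 1 ≠ 0)]
    ring_nf
  rw [h1, h2, h3]

lemma lint_Ioo_left {s : ℝ} (hs0 : 0 < s) (hs1 : s < 1) (a L : ℝ) (hL : 0 < L) :
    ∫⁻ x in Set.Ioo (a - L) a, ENNReal.ofReal |x - a| ^ (-s)
      ≤ ENNReal.ofReal (L ^ (1 - s) / (1 - s)) := by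
  have hii : IntervalIntegrable (fun x => (a - x) ^ (-s)) volume (a - L) a := by
    have := (intervalIntegral.intervalIntegrable_rpow' (r := -s) (by linarith)).comp_sub_left (a := 0) (b := L) a
    simpa using this.symm
  have hint : IntegrableOn (fun x => (a - x) ^ (-s)) (Set.Ioo (a - L) a) volume := by
    exact (intervalIntegrable_iff_integrableOn_Ioo_of_le (by linarith : a - L ≤ a)).1 hii
  have h1 : ∫⁻ x in Set.Ioo (a - L) a, ENNReal.ofReal |x - a| ^ (-s)
      = ∫⁻ x in Set.Ioo (a - L) a, ENNReal.ofReal ((a - x) ^ (-s)) := by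
    refine setLIntegral_congr_fun_ae measurableSet_Ioo (ae_of_all _ fun x hx => ?_)
    rw [abs_of_neg (by linarith [hx.2]), neg_sub,
      ENNReal.ofReal_rpow_of_pos (by linarith [hx.2])]
  have h2 : ∫⁻ x in Set.Ioo (a - L) a, ENNReal.ofReal ((a - x) ^ (-s))
      = ENNReal.ofReal (∫ x in Set.Ioo (a - L) a, (a - x) ^ (-s)) := by
    rw [← ofReal_integral_eq_lintegral_ofReal hint]
    exact (ae_restrict_iff' measurableSet_Ioo).2 (ae_of_all _ fun x hx =>
      Real.rpow_nonneg (by linarith [hx.2]) _)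
  have h3 : (∫ x in Set.Ioo (a - L) a, (a - x) ^ (-s)) = L ^ (1 - s) / (1 - s) := by
    rw [← MeasureTheory.integral_Ioc_eq_integral_Ioo,
      ← intervalIntegral.integral_of_le (by linarith : a - L ≤ a)]
    have := intervalIntegral.integral_comp_sub_left (a := a - L) (b := a)
      (fun x => x ^ (-s)) a
    simp only [sub_self, sub_sub_cancel] at this
    rw [this]
    rw [integral_rpow (Or.inl (by linarith))]
    rw [Real.zero_rpow (by linarith : -s + 1 ≠ 0)]
    ring_nf
  rw [h1, h2, h3]

lemma shift_bound {s : ℝ} (hs0 : 0 < s) (hs1 : s < 1) {δ : ℝ} (hδ : 0 < δ) (b : ℝ) :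
    ∫⁻ x in Set.Ioo (-δ) δ, ENNReal.ofReal |x - b| ^ (-s)
      ≤ ENNReal.ofReal (2 * ((2 * δ) ^ (1 - s) / (1 - s))) := by
  set a : ℝ := max (-δ) (min δ b) with ha
  have ha1 : -δ ≤ a := le_max_left _ _
  have ha2 : a ≤ δ := max_le (by linarith) (min_le_left _ _)
  have key : ∀ x ∈ Set.Ioo (-δ) δ, |x - a| ≤ |x - b| := by
    intro x hx
    rcases le_total b (-δ) with h1 | h1
    · have haa : a = -δ := by
        rw [ha, min_eq_right (by linarith), max_eq_left (by linarith)]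
      rw [haa, abs_of_pos (by linarith [hx.1]), abs_of_pos (by linarith [hx.1])]
      linarith
    rcases le_total δ b with h2 | h2
    · have haa : a = δ := by rw [ha, min_eq_left h2, max_eq_right (by linarith)]
      rw [haa, abs_of_neg (by linarith [hx.2]), abs_of_neg (by linarith [hx.2])]
      linarith
    · have haa : a = b := by rw [ha, min_eq_right h2, max_eq_right h1]
      rw [haa]
  have step1 : ∫⁻ x in Set.Ioo (-δ) δ, ENNReal.ofReal |x - b| ^ (-s)
      ≤ ∫⁻ x in Set.Ioo (-δ) δ, ENNReal.ofReal |x - a| ^ (-s) :=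
    setLIntegral_mono' measurableSet_Ioo fun x hx =>
      antitone_rpow_neg hs0 (ENNReal.ofReal_le_ofReal (key x hx))
  have hsub : Set.Ioo (-δ) δ ⊆ (Set.Ioo (a - 2 * δ) a ∪ Set.Ioo a (a + 2 * δ)) ∪ {a} := by
    intro x hx
    rcases lt_trichotomy x a with h | h | h
    · exact Or.inl (Or.inl ⟨by linarith [hx.1], h⟩)
    · exact Or.inr (by simp [h])
    · exact Or.inl (Or.inr ⟨h, by linarith [hx.2]⟩)
  have step2 : ∫⁻ x in Set.Ioo (-δ) δ, ENNReal.ofReal |x - a| ^ (-s)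
      ≤ ENNReal.ofReal ((2 * δ) ^ (1 - s) / (1 - s))
        + ENNReal.ofReal ((2 * δ) ^ (1 - s) / (1 - s)) + 0 := by
    refine le_trans (lintegral_mono_set hsub) ?_
    refine le_trans (lintegral_union_le _ _ _) ?_
    gcongr
    · refine le_trans (lintegral_union_le _ _ _) ?_
      gcongr
      · exact lint_Ioo_left hs0 hs1 a (2 * δ) (by linarith)
      · exact lint_Ioo_right hs0 hs1 a (2 * δ) (by linarith)
    · refine le_of_eq (setLIntegral_measure_zero _ _ ?_)
      simp
  refine le_trans (le_trans step1 step2) ?_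
  have hnn : (0:ℝ) ≤ (2 * δ) ^ (1 - s) / (1 - s) :=
    div_nonneg (Real.rpow_nonneg (by linarith) _) (by linarith)
  rw [add_zero, ← ENNReal.ofReal_add hnn hnn]
  refine ENNReal.ofReal_le_ofReal (by ring_nf; exact le_refl _)

lemma oneD_s11 {t : ℝ} (ht : 0 < t) {e : ℕ} (hte : t * e < 1) {δ : ℝ} (hδ : 0 < δ)
    (q : Polynomial ℝ) (hq : q.natDegree ≤ e) :
    ∫⁻ x in Set.Ioo (-δ) δ, ENNReal.ofReal |q.eval x| ^ (-t)
      ≤ (ENNReal.ofReal (2 * δ) + ENNReal.ofReal (2 * ((2 * δ) ^ (1 - t * e) / (1 - t * e)))) *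
        ENNReal.ofReal |q.coeff e| ^ (-t) := by
  set M : ℝ≥0∞ := ENNReal.ofReal (2 * ((2 * δ) ^ (1 - t * e) / (1 - t * e))) with hM
  by_cases hc : q.coeff e = 0
  · rw [hc]
    simp only [abs_zero, ENNReal.ofReal_zero]
    rw [ENNReal.zero_rpow_of_neg (by linarith), ENNReal.mul_top]
    · exact le_top
    · intro h
      have : ENNReal.ofReal (2 * δ) = 0 := by
        exact le_antisymm (le_trans le_self_add h.le) zero_le
      rw [ENNReal.ofReal_eq_zero] at this
      linarith
  rcases Nat.eq_zero_or_pos e with he | he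
  · subst he
    have hqC : q = Polynomial.C (q.coeff 0) := Polynomial.eq_C_of_natDegree_le_zero hq
    have heval : ∀ x : ℝ, q.eval x = q.coeff 0 := fun x => by
      conv_lhs => rw [hqC]
      simp
    calc ∫⁻ x in Set.Ioo (-δ) δ, ENNReal.ofReal |q.eval x| ^ (-t)
        = ∫⁻ _x in Set.Ioo (-δ) δ, ENNReal.ofReal |q.coeff 0| ^ (-t) := by
          refine lintegral_congr fun x => by rw [heval]
      _ = ENNReal.ofReal |q.coeff 0| ^ (-t) * ENNReal.ofReal (2 * δ) := by
          rw [setLIntegral_const, Real.volume_Ioo]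
          congr 1
          congr 1
          ring
      _ ≤ ENNReal.ofReal |q.coeff 0| ^ (-t) * (ENNReal.ofReal (2 * δ) + M) := by
          exact mul_le_mul_right le_self_add _
      _ = (ENNReal.ofReal (2 * δ) + M) * ENNReal.ofReal |q.coeff 0| ^ (-t) := mul_comm _ _
  -- main case
  have hdeg : q.natDegree = e := le_antisymm hq (Polynomial.le_natDegree_of_ne_zero hc)
  have hsp : (q.map (algebraMap ℝ ℂ)).Splits := IsAlgClosed.splits _
  set l : List ℂ := (q.map (algebraMap ℝ ℂ)).roots.toList with hl
  have hlen : l.length = e := by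
    rw [hl, Multiset.length_toList, ← hsp.natDegree_eq_card_roots, Polynomial.natDegree_map, hdeg]
  have hroots : (q.map (algebraMap ℝ ℂ)).roots = (l : Multiset ℂ) := (Multiset.coe_toList _).symm
  have hfac := hsp.eq_prod_roots
  have hlead : q.leadingCoeff = q.coeff e := by rw [Polynomial.leadingCoeff, hdeg]
  have hlp : ∀ (g : ℂ → ℝ), (l.map g).prod = ∏ j : Fin l.length, g (l.get j) := by
    intro g
    conv_lhs => rw [← List.ofFn_get l]
    rw [List.map_ofFn, List.prod_ofFn]
    rfl
  have hpt : ∀ x : ℝ, |q.coeff e| * ∏ j : Fin l.length, |x - (l.get j).re| ≤ |q.eval x| := by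
    intro x
    have h1 : ((q.map (algebraMap ℝ ℂ)).eval (x : ℂ)) = ((q.eval x : ℝ) : ℂ) := by
      rw [Polynomial.eval_map]
      have := Polynomial.eval₂_at_apply (p := q) (algebraMap ℝ ℂ) x
      simpa using this
    have h2 : |q.eval x| = (normHom : ℂ →*₀ ℝ) ((q.map (algebraMap ℝ ℂ)).eval (x : ℂ)) := by
      rw [h1, normHom_apply, Complex.norm_real, Real.norm_eq_abs]
    have h3 : (normHom : ℂ →*₀ ℝ) ((q.map (algebraMap ℝ ℂ)).eval (x : ℂ))
        = |q.coeff e| * ∏ j : Fin l.length, (normHom : ℂ →*₀ ℝ) ((x : ℂ) - l.get j) := by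
      rw [hfac, Polynomial.eval_mul, Polynomial.eval_C, Polynomial.eval_multiset_prod,
        map_mul (normHom : ℂ →*₀ ℝ), map_multiset_prod (normHom : ℂ →*₀ ℝ), hroots, Multiset.map_coe,
        Multiset.map_coe, Multiset.map_coe, Multiset.prod_coe, List.map_map, List.map_map,
        hlp _]
      congr 1
      · rw [Polynomial.leadingCoeff_map, hlead]
        simp
      · exact Finset.prod_congr rfl fun j _ => by simp
    rw [h2, h3]
    refine mul_le_mul_of_nonneg_left ?_ (abs_nonneg _)
    refine Finset.prod_le_prod (fun j _ => abs_nonneg _) fun j _ => ?_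
    have := Complex.abs_re_le_norm ((x : ℂ) - l.get j)
    simpa [Complex.sub_re, Complex.ofReal_re] using this
  have hptE : ∀ x : ℝ, ENNReal.ofReal |q.eval x| ^ (-t)
      ≤ ENNReal.ofReal |q.coeff e| ^ (-t)
        * ∏ j : Fin l.length, ENNReal.ofReal |x - (l.get j).re| ^ (-t) := by
    intro x
    refine le_trans (antitone_rpow_neg ht (ENNReal.ofReal_le_ofReal (hpt x))) (le_of_eq ?_)
    rw [ENNReal.ofReal_mul (abs_nonneg _),
      ENNReal.ofReal_prod_of_nonneg (fun j _ => abs_nonneg _),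
      ENNReal.mul_rpow_of_ne_top ENNReal.ofReal_ne_top
        (ENNReal.prod_ne_top fun j _ => ENNReal.ofReal_ne_top),
      ← ENNReal.prod_rpow_of_ne_top (fun j _ => ENNReal.ofReal_ne_top)]
  have hc' : ENNReal.ofReal |q.coeff e| ^ (-t) ≠ ⊤ := by
    rw [ENNReal.ofReal_rpow_of_pos (abs_pos.2 hc)]
    exact ENNReal.ofReal_ne_top
  have hE : (e : ℝ) ≠ 0 := Nat.cast_ne_zero.2 he.ne'
  have hs0' : 0 < t * e := mul_pos ht (by exact_mod_cast he)
  have hHolder : ∫⁻ x in Set.Ioo (-δ) δ,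
      ∏ j : Fin l.length, ENNReal.ofReal |x - (l.get j).re| ^ (-t) ≤ M := by
    have hrw : ∀ x : ℝ, ∏ j : Fin l.length, ENNReal.ofReal |x - (l.get j).re| ^ (-t)
        = ∏ j : Fin l.length,
            (ENNReal.ofReal |x - (l.get j).re| ^ (-(t * e))) ^ (1 / (e : ℝ)) := by
      intro x
      refine Finset.prod_congr rfl fun j _ => ?_
      rw [← ENNReal.rpow_mul]
      congr 1
      field_simp
    have hmeas : ∀ j : Fin l.length, AEMeasurable
        (fun x : ℝ => ENNReal.ofReal |x - (l.get j).re| ^ (-(t * e)))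
        (volume.restrict (Set.Ioo (-δ) δ)) := fun j =>
      (((measurable_id.sub_const _).abs.ennreal_ofReal).pow_const _).aemeasurable
    calc ∫⁻ x in Set.Ioo (-δ) δ, ∏ j : Fin l.length, ENNReal.ofReal |x - (l.get j).re| ^ (-t)
        = ∫⁻ x in Set.Ioo (-δ) δ, ∏ j : Fin l.length,
            (ENNReal.ofReal |x - (l.get j).re| ^ (-(t * e))) ^ (1 / (e : ℝ)) :=
          lintegral_congr fun x => hrw x
      _ ≤ ∏ j : Fin l.length,
            (∫⁻ x in Set.Ioo (-δ) δ, ENNReal.ofReal |x - (l.get j).re| ^ (-(t * e))) ^ (1 / (e : ℝ)) := by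
          refine ENNReal.lintegral_prod_norm_pow_le Finset.univ (fun j _ => hmeas j) ?_
            (fun j _ => by positivity)
          rw [Finset.sum_const, Finset.card_univ, Fintype.card_fin, hlen, nsmul_eq_mul]
          field_simp
      _ ≤ ∏ _j : Fin l.length, (M : ℝ≥0∞) ^ (1 / (e : ℝ)) := by
          refine Finset.prod_le_prod' fun j _ => ?_
          exact ENNReal.rpow_le_rpow (shift_bound hs0' hte hδ _) (by positivity)
      _ = M := by
          rw [Finset.prod_const, Finset.card_univ, Fintype.card_fin, hlen,
            ← ENNReal.rpow_natCast, ← ENNReal.rpow_mul, one_div, inv_mul_cancel₀ hE,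
            ENNReal.rpow_one]
  calc ∫⁻ x in Set.Ioo (-δ) δ, ENNReal.ofReal |q.eval x| ^ (-t)
      ≤ ∫⁻ x in Set.Ioo (-δ) δ, ENNReal.ofReal |q.coeff e| ^ (-t)
          * ∏ j : Fin l.length, ENNReal.ofReal |x - (l.get j).re| ^ (-t) :=
        lintegral_mono fun x => hptE x
    _ = ENNReal.ofReal |q.coeff e| ^ (-t) * ∫⁻ x in Set.Ioo (-δ) δ,
          ∏ j : Fin l.length, ENNReal.ofReal |x - (l.get j).re| ^ (-t) :=
        lintegral_const_mul' _ _ hc'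
    _ ≤ ENNReal.ofReal |q.coeff e| ^ (-t) * M := mul_le_mul_right hHolder _
    _ ≤ ENNReal.ofReal |q.coeff e| ^ (-t) * (ENNReal.ofReal (2 * δ) + M) :=
        mul_le_mul_right le_add_self _
    _ = (ENNReal.ofReal (2 * δ) + M) * ENNReal.ofReal |q.coeff e| ^ (-t) := mul_comm _ _

lemma keyInduction (n : ℕ) : ∀ (P : MvPolynomial (Fin n) ℝ) (α : Fin n →₀ ℕ),
    MvPolynomial.coeff α P ≠ 0 →
    (∀ β : Fin n →₀ ℕ, β ≠ α → MvPolynomial.coeff β P ≠ 0 →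
      ∃ j : Fin n, β j < α j ∧ ∀ k : Fin n, k < j → α k = β k) →
    ∀ t : ℝ, 0 < t → t * (∑ i, α i) < 1 → ∀ δ : ℝ, 0 < δ →
    ∫⁻ x in Set.univ.pi (fun _ : Fin n => Set.Ioo (-δ) δ),
        ENNReal.ofReal |MvPolynomial.eval x P| ^ (-t)
      ∂(Measure.pi fun _ => volume) < ⊤ := by
  induction n with
  | zero =>
    intro P α hα _hlex t ht _htd δ _hδ
    have hP : P = MvPolynomial.C (MvPolynomial.coeff 0 P) := P.eq_C_of_isEmpty
    have hα0 : α = 0 := Finsupp.ext fun i => i.elim0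
    have hc : MvPolynomial.coeff 0 P ≠ 0 := hα0 ▸ hα
    have heval : ∀ x : Fin 0 → ℝ, MvPolynomial.eval x P = MvPolynomial.coeff 0 P := by
      intro x; conv_lhs => rw [hP]
      simp
    have hconst : ENNReal.ofReal |MvPolynomial.coeff 0 P| ^ (-t) ≠ ⊤ := by
      rw [ENNReal.ofReal_rpow_of_pos (abs_pos.2 hc)]
      exact ENNReal.ofReal_ne_top
    calc ∫⁻ x in Set.univ.pi (fun _ : Fin 0 => Set.Ioo (-δ) δ),
          ENNReal.ofReal |MvPolynomial.eval x P| ^ (-t) ∂(Measure.pi fun _ => volume)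
        = ∫⁻ _x in Set.univ.pi (fun _ : Fin 0 => Set.Ioo (-δ) δ),
            ENNReal.ofReal |MvPolynomial.coeff 0 P| ^ (-t) ∂(Measure.pi fun _ => volume) :=
          lintegral_congr fun x => by rw [heval]
      _ = ENNReal.ofReal |MvPolynomial.coeff 0 P| ^ (-t)
            * (Measure.pi fun _ : Fin 0 => (volume : Measure ℝ))
                (Set.univ.pi fun _ : Fin 0 => Set.Ioo (-δ) δ) := setLIntegral_const _ _
      _ ≤ ENNReal.ofReal |MvPolynomial.coeff 0 P| ^ (-t) * 1 := by
          refine mul_le_mul_right ?_ _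
          rw [show (Set.univ.pi fun _ : Fin 0 => Set.Ioo (-δ) δ) = Set.univ from
            Set.eq_univ_iff_forall.2 fun x => by intro i; exact i.elim0]
          rw [Measure.pi_univ]
          simp
      _ < ⊤ := ENNReal.mul_lt_top hconst.lt_top ENNReal.one_lt_top
  | succ n ih =>
    intro P α hα hlex t ht htd δ hδ
    set Q : Polynomial (MvPolynomial (Fin n) ℝ) := MvPolynomial.finSuccEquiv ℝ n P with hQ
    set e : ℕ := α 0 with he
    set R : MvPolynomial (Fin n) ℝ := Q.coeff e with hR
    set ατ : Fin n →₀ ℕ := Finsupp.tail α with hατ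
    have hconsα : Finsupp.cons e ατ = α := Finsupp.cons_tail α
    have hRα : MvPolynomial.coeff ατ R ≠ 0 := by
      rw [hR, hQ, MvPolynomial.finSuccEquiv_coeff_coeff, hconsα]
      exact hα
    have hQdeg : Q.natDegree ≤ e := by
      rw [Polynomial.natDegree_le_iff_coeff_eq_zero]
      intro k hk
      by_contra hQk
      obtain ⟨γ, hγ⟩ := MvPolynomial.ne_zero_iff.1 hQk
      rw [hQ, MvPolynomial.finSuccEquiv_coeff_coeff] at hγ
      have hne : Finsupp.cons k γ ≠ α := by
        intro h
        have h0 : (Finsupp.cons k γ) 0 = α 0 := by rw [h]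
        rw [Finsupp.cons_zero] at h0
        rw [← he] at h0
        omega
      obtain ⟨j, hj1, hj2⟩ := hlex _ hne hγ
      rcases Fin.eq_zero_or_eq_succ j with rfl | ⟨j', rfl⟩
      · rw [Finsupp.cons_zero] at hj1
        rw [← he] at hj1
        omega
      · have h0 := hj2 0 (Fin.succ_pos j')
        rw [Finsupp.cons_zero] at h0
        rw [← he] at h0
        omega
    have hRlex : ∀ β : Fin n →₀ ℕ, β ≠ ατ → MvPolynomial.coeff β R ≠ 0 →
        ∃ j : Fin n, β j < ατ j ∧ ∀ k : Fin n, k < j → ατ k = β k := by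
      intro β hβ hcoβ
      rw [hR, hQ, MvPolynomial.finSuccEquiv_coeff_coeff] at hcoβ
      have hne : Finsupp.cons e β ≠ α := by
        intro h
        apply hβ
        have h2 := congrArg Finsupp.tail h
        rwa [Finsupp.tail_cons, ← hατ] at h2
      obtain ⟨j, hj1, hj2⟩ := hlex _ hne hcoβ
      rcases Fin.eq_zero_or_eq_succ j with rfl | ⟨j', rfl⟩
      · rw [Finsupp.cons_zero, ← he] at hj1
        exact absurd hj1 (lt_irrefl _)
      · refine ⟨j', ?_, ?_⟩
        · rw [Finsupp.cons_succ] at hj1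
          rwa [hατ, Finsupp.tail_apply]
        · intro k hk
          have h2 := hj2 k.succ (by exact Fin.succ_lt_succ_iff.2 hk)
          rw [Finsupp.cons_succ] at h2
          rw [hατ, Finsupp.tail_apply]
          exact h2
    have hsum : (∑ i : Fin (n+1), α i) = e + ∑ i : Fin n, ατ i := by
      rw [Fin.sum_univ_succ, he]
      congr 1
    have htd' : t * (∑ i : Fin n, ατ i) < 1 := by
      refine lt_of_le_of_lt ?_ htd
      refine mul_le_mul_of_nonneg_left ?_ ht.le
      have : (∑ i : Fin n, ατ i) ≤ ∑ i : Fin (n+1), α i := by omega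
      exact_mod_cast this
    have hte' : t * (e : ℝ) < 1 := by
      refine lt_of_le_of_lt ?_ htd
      refine mul_le_mul_of_nonneg_left ?_ ht.le
      have : e ≤ ∑ i : Fin (n+1), α i := by omega
      exact_mod_cast this
    set K : ℝ≥0∞ := ENNReal.ofReal (2 * δ)
      + ENNReal.ofReal (2 * ((2 * δ) ^ (1 - t * e) / (1 - t * e))) with hK
    have hKtop : K ≠ ⊤ := by
      rw [hK]
      exact ENNReal.add_ne_top.2 ⟨ENNReal.ofReal_ne_top, ENNReal.ofReal_ne_top⟩
    set F : (Fin (n+1) → ℝ) → ℝ≥0∞ :=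
      fun x => ENNReal.ofReal |MvPolynomial.eval x P| ^ (-t) with hF
    have hFmeas : Measurable F :=
      ((MvPolynomial.continuous_eval (p := P)).abs.measurable.ennreal_ofReal).pow_const _
    set mE := MeasurableEquiv.piFinSuccAbove (fun _ : Fin (n+1) => ℝ) 0 with hmE
    have hmp : MeasurePreserving mE.symm
        ((volume : Measure ℝ).prod (Measure.pi fun _ : Fin n => volume))
        (Measure.pi fun _ : Fin (n+1) => volume) :=
      (measurePreserving_piFinSuccAbove (fun _ : Fin (n+1) => (volume : Measure ℝ)) 0).symm
    have hsymm_apply : ∀ (a : ℝ) (y : Fin n → ℝ), mE.symm (a, y) = Fin.cons a y := by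
      intro a y
      show (Fin.insertNthEquiv (fun _ : Fin (n+1) => ℝ) 0) (a, y) = Fin.cons a y
      simp [Fin.insertNthEquiv, Fin.insertNth_zero]
    have himg : mE.symm '' ((Set.Ioo (-δ) δ) ×ˢ (Set.univ.pi fun _ : Fin n => Set.Ioo (-δ) δ))
        = Set.univ.pi fun _ : Fin (n+1) => Set.Ioo (-δ) δ := by
      ext x
      constructor
      · rintro ⟨⟨a, y⟩, ⟨ha, hy⟩, rfl⟩
        rw [hsymm_apply]
        intro i _
        rcases Fin.eq_zero_or_eq_succ i with rfl | ⟨i', rfl⟩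
        · simpa using ha
        · simpa using hy i' (Set.mem_univ _)
      · intro hx
        refine ⟨(x 0, fun j => x j.succ), ⟨hx 0 (Set.mem_univ _), fun j _ => hx j.succ (Set.mem_univ _)⟩, ?_⟩
        rw [hsymm_apply]
        exact funext fun i => Fin.cases rfl (fun i' => rfl) i
    have hstep : ∫⁻ x in Set.univ.pi (fun _ : Fin (n+1) => Set.Ioo (-δ) δ), F x
          ∂(Measure.pi fun _ => volume)
        = ∫⁻ y in (Set.Ioo (-δ) δ) ×ˢ (Set.univ.pi fun _ : Fin n => Set.Ioo (-δ) δ),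
            F (mE.symm y) ∂((volume : Measure ℝ).prod (Measure.pi fun _ : Fin n => volume)) := by
      rw [hmp.setLIntegral_comp_emb mE.symm.measurableEmbedding F _, himg]
    rw [hstep, ← Measure.prod_restrict, lintegral_prod_symm (fun y => F (mE.symm y))
      ((hFmeas.comp mE.symm.measurable).aemeasurable)]
    have hinner : ∀ x' : Fin n → ℝ,
        (∫⁻ a in Set.Ioo (-δ) δ, F (mE.symm (a, x')))
          ≤ K * ENNReal.ofReal |MvPolynomial.eval x' R| ^ (-t) := by
      intro x'
      have hcons : ∀ a : ℝ, F (mE.symm (a, x'))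
          = ENNReal.ofReal |Polynomial.eval a (Q.map (MvPolynomial.eval x'))| ^ (-t) := by
        intro a
        rw [hsymm_apply, hF]
        simp only
        rw [MvPolynomial.eval_eq_eval_mv_eval', hQ]
      have h1 : (∫⁻ a in Set.Ioo (-δ) δ, F (mE.symm (a, x')))
          = ∫⁻ a in Set.Ioo (-δ) δ,
              ENNReal.ofReal |Polynomial.eval a (Q.map (MvPolynomial.eval x'))| ^ (-t) :=
        lintegral_congr fun a => hcons a
      rw [h1]
      have h2 := oneD_s11 ht hte' hδ (Q.map (MvPolynomial.eval x'))
        (le_trans Polynomial.natDegree_map_le hQdeg)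
      rwa [Polynomial.coeff_map, ← hR, ← hK] at h2
    calc ∫⁻ x' in Set.univ.pi (fun _ : Fin n => Set.Ioo (-δ) δ),
          (∫⁻ a in Set.Ioo (-δ) δ, F (mE.symm (a, x'))) ∂(Measure.pi fun _ => volume)
        ≤ ∫⁻ x' in Set.univ.pi (fun _ : Fin n => Set.Ioo (-δ) δ),
            K * ENNReal.ofReal |MvPolynomial.eval x' R| ^ (-t) ∂(Measure.pi fun _ => volume) :=
          lintegral_mono fun x' => hinner x'
      _ = K * ∫⁻ x' in Set.univ.pi (fun _ : Fin n => Set.Ioo (-δ) δ),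
            ENNReal.ofReal |MvPolynomial.eval x' R| ^ (-t) ∂(Measure.pi fun _ => volume) :=
          lintegral_const_mul' _ _ hKtop
      _ < ⊤ := ENNReal.mul_lt_top hKtop.lt_top (ih R ατ hRα hRlex t ht htd' δ hδ)

end Helpers

/-- The admissible degree `ad(P) = min {|α| : α admissible index for P}`. -/
noncomputable def admissibleDegree {n : ℕ} (P : MvPolynomial (Fin n) ℝ) : ℕ :=
  sInf {k : ℕ | ∃ α : Fin n →₀ ℕ, IsAdmissibleIndex P α ∧ (∑ i, α i) = k}


/-- For a polynomial `P` on `ℝ^n` with `P(0) = 0`, and any `0 < t < 1/ad(P)`, the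
function `|P|^{-t}` is Lebesgue integrable on some neighborhood of `0`; that is, the
integration index satisfies `i(P) ≥ 1/ad(P)`. -/
theorem statement11 (n : ℕ) (P : MvPolynomial (Fin n) ℝ)
    (hP0 : eval (fun _ => (0 : ℝ)) P = 0) :
    ∀ t : ℝ, 0 < t → t < 1 / (admissibleDegree P : ℝ) →
      ∃ U ∈ nhds (0 : EuclideanSpace ℝ (Fin n)),
        ∫⁻ x in U, (ENNReal.ofReal |eval (fun i => x i) P|) ^ (-t) < ⊤ := by
  intro t ht ht2
  by_cases hS : {k : ℕ | ∃ α : Fin n →₀ ℕ, IsAdmissibleIndex P α ∧ (∑ i, α i) = k}.Nonempty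
  swap
  · exfalso
    rw [Set.not_nonempty_iff_eq_empty] at hS
    rw [admissibleDegree, hS, Nat.sInf_empty] at ht2
    norm_num at ht2
    linarith
  have hd : admissibleDegree P ∈
      {k : ℕ | ∃ α : Fin n →₀ ℕ, IsAdmissibleIndex P α ∧ (∑ i, α i) = k} := Nat.sInf_mem hS
  obtain ⟨α, ⟨hcoef, σ, ⟨hn, h1⟩, hlex⟩, hsum⟩ := hd
  set d := admissibleDegree P with hdd
  have hd1 : 1 ≤ d := by
    calc 1 ≤ α (σ ⟨0, hn⟩) := h1
      _ ≤ ∑ i, α i := Finset.single_le_sum (fun i _ => Nat.zero_le _) (Finset.mem_univ _)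
      _ = d := hsum
  have hdpos : (0:ℝ) < d := by exact_mod_cast hd1
  have htm : t * (d:ℝ) < 1 := by
    rw [lt_div_iff₀ hdpos] at ht2
    exact ht2
  -- rename the polynomial so that the lex condition uses the identity ordering
  set P' : MvPolynomial (Fin n) ℝ := MvPolynomial.rename (⇑σ.symm) P with hP'
  set α' : Fin n →₀ ℕ := Finsupp.equivMapDomain σ.symm α with hα'
  have happ : ∀ (γ : Fin n →₀ ℕ) (j : Fin n),
      (Finsupp.equivMapDomain (σ.symm : Fin n ≃ Fin n) γ) j = γ (σ j) := by
    intro γ j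
    rw [Finsupp.equivMapDomain_apply]
    simp
  have hcoef' : MvPolynomial.coeff α' P' ≠ 0 := by
    rw [hα', Finsupp.equivMapDomain_eq_mapDomain, hP',
      MvPolynomial.coeff_rename_mapDomain _ σ.symm.injective]
    exact hcoef
  have hlex' : ∀ β' : Fin n →₀ ℕ, β' ≠ α' → MvPolynomial.coeff β' P' ≠ 0 →
      ∃ j : Fin n, β' j < α' j ∧ ∀ k : Fin n, k < j → α' k = β' k := by
    intro β' hne hcoβ
    obtain ⟨β, hmap, hcoβ2⟩ := MvPolynomial.coeff_rename_ne_zero _ _ _ hcoβ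
    have hβ' : β' = Finsupp.equivMapDomain σ.symm β := by
      rw [Finsupp.equivMapDomain_eq_mapDomain, hmap]
    have hβα : β ≠ α := by
      rintro rfl
      exact hne (by rw [hβ', hα'])
    obtain ⟨j, hj1, hj2⟩ := hlex β hβα hcoβ2
    have e2 : ∀ k, β' k = β (σ k) := fun k => by rw [hβ', happ]
    have e1 : ∀ k, α' k = α (σ k) := fun k => by rw [hα', happ]
    refine ⟨j, ?_, ?_⟩
    · rw [e1, e2]
      exact hj1
    · intro k hk
      rw [e1, e2]
      exact hj2 k hk
  have hsum' : (∑ j, α' j) = d := by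
    have : ∀ j, α' j = α (σ j) := fun j => by rw [hα', happ]
    calc (∑ j, α' j) = ∑ j, α (σ j) := Finset.sum_congr rfl fun j _ => this j
      _ = ∑ i, α i := Equiv.sum_comp σ fun i => α i
      _ = d := hsum
  have Hbox := keyInduction n P' α' hcoef' hlex' t ht (by rw [hsum']; exact htm) 1 one_pos
  -- transfer along the coordinate permutation
  set m := MeasurableEquiv.piCongrLeft (fun _ : Fin n => ℝ) σ with hm
  have hmapp : ∀ (y : Fin n → ℝ) (j : Fin n), m y j = y (σ.symm j) := by
    intro y j
    have h2 := MeasurableEquiv.piCongrLeft_apply_apply σ (β := fun _ : Fin n => ℝ) y (σ.symm j)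
    rwa [Equiv.apply_symm_apply] at h2
  have hmp2 : MeasurePreserving m (Measure.pi fun _ : Fin n => (volume : Measure ℝ))
      (Measure.pi fun _ : Fin n => volume) :=
    measurePreserving_piCongrLeft (fun _ : Fin n => (volume : Measure ℝ)) σ
  set G : (Fin n → ℝ) → ℝ≥0∞ := fun z => ENNReal.ofReal |MvPolynomial.eval z P| ^ (-t) with hG
  have hGm : ∀ y : Fin n → ℝ, G (m y) = ENNReal.ofReal |MvPolynomial.eval y P'| ^ (-t) := by
    intro y
    have hmy : m y = y ∘ ⇑σ.symm := funext fun j => hmapp y j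
    rw [hG]
    simp only
    rw [hmy, hP', MvPolynomial.eval_rename]
  have hpre : m ⁻¹' (Set.univ.pi fun _ : Fin n => Set.Ioo (-(1:ℝ)) 1)
      = Set.univ.pi fun _ : Fin n => Set.Ioo (-(1:ℝ)) 1 := by
    ext y
    simp only [Set.mem_preimage, Set.mem_pi, Set.mem_univ, true_implies]
    constructor
    · intro h i
      have h2 := h (σ i)
      rw [hmapp, Equiv.symm_apply_apply] at h2
      exact h2
    · intro h j
      rw [hmapp]
      exact h _
  have himg2 : m '' (Set.univ.pi fun _ : Fin n => Set.Ioo (-(1:ℝ)) 1)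
      = Set.univ.pi fun _ : Fin n => Set.Ioo (-(1:ℝ)) 1 := by
    conv_lhs => rw [← hpre]
    exact Set.image_preimage_eq _ m.surjective
  have Hbox2 : ∫⁻ x in Set.univ.pi (fun _ : Fin n => Set.Ioo (-(1:ℝ)) 1), G x
      ∂(Measure.pi fun _ => volume) < ⊤ := by
    rw [← himg2, ← hmp2.setLIntegral_comp_emb m.measurableEmbedding G _]
    refine lt_of_le_of_lt (le_of_eq (lintegral_congr fun y => hGm y)) ?_
    exact Hbox
  -- transfer to EuclideanSpace
  set U : Set (EuclideanSpace ℝ (Fin n)) := {x | ∀ i, x i ∈ Set.Ioo (-(1:ℝ)) 1} with hU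
  have hUopen : IsOpen U := by
    have : U = ⋂ i, (fun x : EuclideanSpace ℝ (Fin n) => x i) ⁻¹' (Set.Ioo (-(1:ℝ)) 1) := by
      ext x
      simp [hU]
    rw [this]
    exact isOpen_iInter_of_finite fun i =>
      isOpen_Ioo.preimage (EuclideanSpace.proj (𝕜 := ℝ) i).continuous
  have hU0 : U ∈ nhds (0 : EuclideanSpace ℝ (Fin n)) := by
    refine hUopen.mem_nhds ?_
    intro i
    simp
  refine ⟨U, hU0, ?_⟩
  set me := (MeasurableEquiv.toLp 2 (Fin n → ℝ)).symm with hme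
  have hmp3 : MeasurePreserving me volume volume :=
    EuclideanSpace.volume_preserving_symm_measurableEquiv_toLp (Fin n)
  have hmain : ∫⁻ x in U, (ENNReal.ofReal |eval (fun i => x i) P|) ^ (-t)
      = ∫⁻ z in me '' U, G z ∂(volume) := by
    rw [← hmp3.setLIntegral_comp_emb me.measurableEmbedding G U]
    rfl
  rw [hmain]
  have himg3 : me '' U = Set.univ.pi fun _ : Fin n => Set.Ioo (-(1:ℝ)) 1 := by
    ext z
    constructor
    · rintro ⟨x, hx, rfl⟩
      intro i _
      exact hx i
    · intro hz
      exact ⟨me.symm z, fun i => hz i (Set.mem_univ _), me.apply_symm_apply z⟩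
  rw [himg3, volume_pi]
  exact Hbox2
end

section
/- Let P(x, y) := (y − x³)² + (x − y³)² and set Z_1 := {(x, y) ∈ ℝ² : ∂P/∂x(x, y) = 0} = {(x, y) : y³ + 3x²y = 3x⁵ + x} and Z_2 := {(x, y) ∈ ℝ² : ∂P/∂y(x, y) = 0} = {(x, y) : x³ + 3y²x = 3y⁵ + y}. Then the pair (Z_1, Z_2) is separated at infinity. -/
open Metric MvPolynomial Filter

/-- A collection `S_1, …, S_k` of (closed) subsets of `ℝ^n` is *separated at infinity* if
`S := S_1 ∩ ⋯ ∩ S_k ≠ ∅` and for all sequences `a_{j,l} ∈ S_j` with `‖a_{j,l}‖ → ∞` and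
`‖a_{j,l} - a_{m,l}‖ → 0` for all `j < m`, one has `d(a_{j,l}, S) → 0` for each `j`. -/
def SeparatedAtInfinity {n k : ℕ} (S : Fin k → Set (EuclideanSpace ℝ (Fin n))) : Prop :=
  (⋂ j, S j).Nonempty ∧
  ∀ a : Fin k → ℕ → EuclideanSpace ℝ (Fin n),
    (∀ j l, a j l ∈ S j) →
    (∀ j, Tendsto (fun l => ‖a j l‖) atTop atTop) →
    (∀ j m : Fin k, j < m → Tendsto (fun l => ‖a j l - a m l‖) atTop (nhds 0)) →
    ∀ j, Tendsto (fun l => infDist (a j l) (⋂ i, S i)) atTop (nhds 0)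

/-- The polynomial `P(x, y) = (y - x³)² + (x - y³)²`. -/
noncomputable def Pex : MvPolynomial (Fin 2) ℝ :=
  (X 1 - X 0 ^ 3) ^ 2 + (X 0 - X 1 ^ 3) ^ 2

/-- `Z_1 = {(x,y) : y³ + 3x²y = 3x⁵ + x}`. -/
def Zone : Set (EuclideanSpace ℝ (Fin 2)) :=
  {p | (p 1) ^ 3 + 3 * (p 0) ^ 2 * p 1 = 3 * (p 0) ^ 5 + p 0}

/-- `Z_2 = {(x,y) : x³ + 3y²x = 3y⁵ + y}`. -/
def Ztwo : Set (EuclideanSpace ℝ (Fin 2)) :=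
  {p | (p 0) ^ 3 + 3 * (p 1) ^ 2 * p 0 = 3 * (p 1) ^ 5 + p 1}

/-- Auxiliary inequality: with `s = x²`, `t = y²`, the squared defining equation of `Z₁`
is incompatible with `9 ≤ s` and `t ≤ 4s`. -/
lemma key_ineq {s t : ℝ} (hs : 9 ≤ s) (ht : t ≤ 4*s) (e1 : t*(t+3*s)^2 = s*(3*s^2+1)^2) : False := by
  have hs0 : (0:ℝ) ≤ s := by linarith
  have h729 : (729:ℝ) ≤ s^3 := by nlinarith [sq_nonneg s, sq_nonneg (s-9)]
  have h81 : 81*s^3 ≤ s^5 := by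
    nlinarith [mul_nonneg (mul_nonneg hs0 hs0) hs0, sq_nonneg (s-9), sq_nonneg s]
  have htpos : 0 ≤ t := by
    by_contra hc
    push_neg at hc
    have h1 : t*(t+3*s)^2 ≤ 0 := mul_nonpos_of_nonpos_of_nonneg hc.le (sq_nonneg _)
    have h5 : (0:ℝ) ≤ s^5 := by positivity
    nlinarith [e1, h1, h5, h729]
  have l1 : t*(t+3*s)^2 ≤ 196*s^3 := by
    nlinarith [mul_nonneg (mul_nonneg (by linarith : (0:ℝ) ≤ 4*s - t) htpos) htpos,
      mul_nonneg (mul_nonneg (by linarith : (0:ℝ) ≤ 4*s - t) hs0) htpos,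
      mul_nonneg (mul_nonneg (by linarith : (0:ℝ) ≤ 4*s - t) hs0) hs0]
  nlinarith [e1, l1, h81, h729]

/-- On `Z₁`, if `|x| ≥ 3` then `|y| > 2|x|`. -/
lemma growA {x y : ℝ} (h : y^3 + 3*x^2*y = 3*x^5 + x) (hx : 3 ≤ |x|) : 2*|x| < |y| := by
  have hx2 : 9 ≤ x^2 := by nlinarith [sq_abs x, abs_nonneg x]
  have hy2 : 4*x^2 < y^2 := by
    by_contra hc
    push_neg at hc
    have e1 : y^2*(y^2+3*x^2)^2 = x^2*(3*(x^2)^2+1)^2 := by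
      linear_combination (y^3 + 3*x^2*y + 3*x^5 + x) * h
    exact key_ineq hx2 hc e1
  nlinarith [sq_abs x, sq_abs y, abs_nonneg x, abs_nonneg y]

/-- On `Z₁`, if `|x| ≤ 3` then `|y| ≤ 10`. -/
lemma boundB {x y : ℝ} (h : y^3 + 3*x^2*y = 3*x^5 + x) (hx : |x| ≤ 3) : |y| ≤ 10 := by
  have hx2 : x^2 ≤ 9 := by nlinarith [sq_abs x, abs_nonneg x]
  have hx0 : (0:ℝ) ≤ x^2 := sq_nonneg x
  have hy2 : y^2 ≤ 100 := by
    by_contra hc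
    push_neg at hc
    have e1 : y^2*(y^2+3*x^2)^2 = x^2*(3*(x^2)^2+1)^2 := by
      linear_combination (y^3 + 3*x^2*y + 3*x^5 + x) * h
    have h2 : (x^2)^2 ≤ 81 := by nlinarith
    have h3 : (x^2)^3 ≤ 729 := by nlinarith
    have h5 : (x^2)^5 ≤ 59049 := by
      nlinarith [mul_le_mul h3 h2 (by positivity : (0:ℝ) ≤ (x^2)^2) (by norm_num : (0:ℝ) ≤ 729)]
    have rhs : x^2*(3*(x^2)^2+1)^2 ≤ 535824 := by nlinarith
    have lhs : (1000000:ℝ) < y^2*(y^2+3*x^2)^2 := by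
      nlinarith [mul_nonneg hx0 (by linarith : (0:ℝ) ≤ y^2),
        mul_nonneg (mul_nonneg hx0 hx0) (by linarith : (0:ℝ) ≤ y^2),
        mul_nonneg hx0 (mul_nonneg (by linarith : (0:ℝ) ≤ y^2) (by linarith : (0:ℝ) ≤ y^2))]
    nlinarith
  nlinarith [sq_abs y, abs_nonneg y]

/-- No point of `Z₁` of norm ≥ 20 can be within distance 1 (coordinatewise) of a point of `Z₂`. -/
lemma contra_main {x0 y0 x1 y1 : ℝ}
    (h0 : y0^3 + 3*x0^2*y0 = 3*x0^5 + x0)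
    (h1 : x1^3 + 3*y1^2*x1 = 3*y1^5 + y1)
    (dx : |x0 - x1| ≤ 1) (dy : |y0 - y1| ≤ 1)
    (big : 400 ≤ x0^2 + y0^2) : False := by
  rcases le_or_gt |x0| 3 with hx | hx
  · have hy := boundB h0 hx
    nlinarith [sq_abs x0, sq_abs y0, abs_nonneg x0, abs_nonneg y0]
  · have hy0 : 2*|x0| < |y0| := growA h0 hx.le
    have t1 : |y0| - |y1| ≤ |y0 - y1| := abs_sub_abs_le_abs_sub y0 y1
    have hy1 : 3 ≤ |y1| := by linarith
    have hx1 : 2*|y1| < |x1| := growA h1 hy1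
    have t2 : |x1| - |x0| ≤ |x1 - x0| := abs_sub_abs_le_abs_sub x1 x0
    rw [abs_sub_comm] at t2
    linarith

lemma normsq2 (q : EuclideanSpace ℝ (Fin 2)) : ‖q‖^2 = (q 0)^2 + (q 1)^2 := by
  rw [EuclideanSpace.norm_eq, Real.sq_sqrt (by positivity)]
  simp [Fin.sum_univ_two, sq_abs]

/-- For `P(x,y) = (y - x³)² + (x - y³)²`, the zero sets `Z_1`, `Z_2` of `∂P/∂x`,
`∂P/∂y` are given by the explicit equations above, and the pair `(Z_1, Z_2)` is
separated at infinity. -/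
theorem statement16 :
    Zone = {p : EuclideanSpace ℝ (Fin 2) | eval (fun i => p i) (pderiv 0 Pex) = 0} ∧
    Ztwo = {p : EuclideanSpace ℝ (Fin 2) | eval (fun i => p i) (pderiv 1 Pex) = 0} ∧
    SeparatedAtInfinity ![Zone, Ztwo] := by
  have hPex : (Pex : MvPolynomial (Fin 2) ℝ)
      = X 1^2 - C 2*X 1*X 0^3 + X 0^6 + X 0^2 - C 2*X 0*X 1^3 + X 1^6 := by
    rw [Pex, map_ofNat]; ring
  refine ⟨?_, ?_, ?_, ?_⟩
  · ext p
    simp only [Zone, Set.mem_setOf_eq, hPex]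
    simp [pderiv_X, Pi.single_apply]
    constructor <;> intro h <;> linarith [h]
  · ext p
    simp only [Ztwo, Set.mem_setOf_eq, hPex]
    simp [pderiv_X, Pi.single_apply]
    constructor <;> intro h <;> linarith [h]
  · refine ⟨0, ?_⟩
    rw [Set.mem_iInter]
    intro i
    fin_cases i <;> simp [Zone, Ztwo]
  · intro a ha hnorm hclose j
    exfalso
    have h1 : ∀ᶠ l in atTop, 20 ≤ ‖a 0 l‖ := (hnorm 0).eventually_ge_atTop 20
    have h2 : ∀ᶠ l in atTop, ‖a 0 l - a 1 l‖ < 1 :=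
      (hclose 0 1 (by decide)).eventually (gt_mem_nhds one_pos)
    obtain ⟨l, hl1, hl2⟩ := (h1.and h2).exists
    have hz0 : a 0 l ∈ Zone := by have := ha 0 l; simpa using this
    have hz1 : a 1 l ∈ Ztwo := by have := ha 1 l; simpa using this
    have hsq : ‖a 0 l - a 1 l‖^2 = (a 0 l 0 - a 1 l 0)^2 + (a 0 l 1 - a 1 l 1)^2 := by
      rw [normsq2]; simp [PiLp.sub_apply]
    have hlt : (a 0 l 0 - a 1 l 0)^2 + (a 0 l 1 - a 1 l 1)^2 < 1 := by
      rw [← hsq]; nlinarith [norm_nonneg (a 0 l - a 1 l)]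
    have dx : |a 0 l 0 - a 1 l 0| ≤ 1 := by
      rw [← sq_le_one_iff_abs_le_one]; nlinarith [sq_nonneg (a 0 l 1 - a 1 l 1)]
    have dy : |a 0 l 1 - a 1 l 1| ≤ 1 := by
      rw [← sq_le_one_iff_abs_le_one]; nlinarith [sq_nonneg (a 0 l 0 - a 1 l 0)]
    have big : 400 ≤ (a 0 l 0)^2 + (a 0 l 1)^2 := by
      rw [← normsq2]; nlinarith [norm_nonneg (a 0 l)]
    exact contra_main hz0 hz1 dx dy big
end
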